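/- arXiv:1505.06385 — 7 statements merged into one kernel-verified Lean document; each statement's English description precedes it below -/
import Mathlib

section
/- The kernel of Tr_{T/S} : T → T is a free S-module of rank n − 1. -/
section Aux

variable (S : Type*) [CommRing S] (π : S) (M : Type*) [AddCommGroup M] [Module S M]
  [Module.Finite S M] [Module.Free S M]

/-- Quotient of a finite free module by `π • ⬝` is a power of `S ⧸ (π)`. -/
noncomputable def auxQuotEquiv :
    (M ⧸ LinearMap.range (π • (LinearMap.id : M →ₗ[S] M))) ≃ₗ[S]
      (Module.Free.ChooseBasisIndex S M → S ⧸ Ideal.span {π}) := by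
  classical
  set ι := Module.Free.ChooseBasisIndex S M with hι
  let b := Module.Free.chooseBasis S M
  let e : M ≃ₗ[S] (ι → S) := b.equivFun
  have hcomm : (e : M →ₗ[S] ι → S) ∘ₗ (π • (LinearMap.id : M →ₗ[S] M))
      = (π • (LinearMap.id : (ι → S) →ₗ[S] ι → S)) ∘ₗ (e : M →ₗ[S] ι → S) :=
    LinearMap.ext fun x => by simp
  have hmap : Submodule.map (e : M →ₗ[S] ι → S)
      (LinearMap.range (π • (LinearMap.id : M →ₗ[S] M)))
      = LinearMap.range (π • (LinearMap.id : (ι → S) →ₗ[S] ι → S)) := by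
    rw [← LinearMap.range_comp, hcomm, LinearMap.range_comp, LinearEquiv.range,
      Submodule.map_top]
  have hpi : LinearMap.range (π • (LinearMap.id : (ι → S) →ₗ[S] ι → S))
      = Submodule.pi Set.univ (fun _ : ι => (Ideal.span {π} : Submodule S S)) := by
    ext x
    simp only [LinearMap.mem_range, LinearMap.smul_apply, LinearMap.id_coe, id_eq,
      Submodule.mem_pi, Set.mem_univ, forall_true_left, Ideal.mem_span_singleton]
    constructor
    · rintro ⟨y, rfl⟩ i
      exact ⟨y i, rfl⟩
    · intro h
      choose y hy using h
      refine ⟨y, ?_⟩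
      funext i
      show π • y i = x i
      rw [smul_eq_mul, ← hy i]
  exact (Submodule.Quotient.equiv _ _ e hmap).trans
    ((Submodule.quotEquivOfEq _ _ hpi).trans
      (Submodule.quotientPi (fun _ : ι => (Ideal.span {π} : Submodule S S))))

lemma auxCard [Nontrivial S] :
    Nat.card (M ⧸ LinearMap.range (π • (LinearMap.id : M →ₗ[S] M)))
      = Nat.card (S ⧸ Ideal.span {π}) ^ Module.finrank S M := by
  rw [Nat.card_congr (auxQuotEquiv S π M).toEquiv, Nat.card_pi]
  · rw [Finset.prod_const, Finset.card_univ, Module.finrank_eq_card_chooseBasisIndex]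

end Aux

/-- In the unramified setting (`S` a complete DVR with uniformizer `π` and
finite residue field, `T` an `S`-algebra DVR, finite free of rank `n ≥ 1` over `S` with maximal
ideal generated by the image of `π`, and `σ` an `S`-algebra automorphism with `σ ^ n = 1` whose
reduction mod `π` generates the Galois group of the residue extension), the kernel of the trace
`Tr = 1 + σ + ⋯ + σ^(n-1) : T → T` is a free `S`-module of rank `n - 1`. -/
theorem statement2
    (S : Type*) [CommRing S] [IsDomain S] [IsDiscreteValuationRing S]
    (π : S) (hπ : Irreducible π)
    [IsAdicComplete (Ideal.span {π}) S] [Finite (S ⧸ Ideal.span {π})]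
    (T : Type*) [CommRing T] [IsDomain T] [IsDiscreteValuationRing T]
    [Algebra S T] [Module.Free S T]
    (n : ℕ) (hn : 1 ≤ n) (hrank : Module.finrank S T = n)
    (hmax : IsLocalRing.maximalIdeal T = Ideal.span {algebraMap S T π})
    (σ : T ≃ₐ[S] T) (hσn : σ ^ n = 1)
    (hgen : ∀ i : ℕ, 0 < i → i < n →
      ∃ t : T, (σ ^ i) t - t ∉ Ideal.span {algebraMap S T π}) :
    Module.Free S (LinearMap.ker (∑ i ∈ Finset.range n, (σ ^ i).toLinearMap)) ∧
    Module.finrank S (LinearMap.ker (∑ i ∈ Finset.range n, (σ ^ i).toLinearMap)) = n - 1 := by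
  classical
  haveI : Module.Finite S T := Module.finite_of_finrank_pos (by rw [hrank]; omega)
  set I : Ideal T := Ideal.span {algebraMap S T π} with hI
  haveI Imax : I.IsMaximal := hmax ▸ (IsLocalRing.maximalIdeal.isMaximal T)
  set f : T →ₗ[S] T := ∑ i ∈ Finset.range n, (σ ^ i).toLinearMap with hf
  have hfapply : ∀ t : T, f t = ∑ i ∈ Finset.range n, (σ ^ i) t := by
    intro t
    rw [hf, LinearMap.sum_apply]
    rfl
  -- the induced automorphism of the residue field
  have hImap : I = Ideal.map (σ : T ≃+* T) I := by
    rw [hI, Ideal.map_span]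
    simp [σ.commutes]
  set σq : (T ⧸ I) ≃+* (T ⧸ I) := Ideal.quotientEquiv I I (σ : T ≃+* T) hImap with hσq
  have hmk : ∀ x : T, σq (Ideal.Quotient.mk I x) = Ideal.Quotient.mk I (σ x) := by
    intro x
    rw [hσq]
    rfl
  have hpowmk : ∀ (k : ℕ) (x : T),
      (σq ^ k) (Ideal.Quotient.mk I x) = Ideal.Quotient.mk I ((σ ^ k) x) := by
    intro k
    induction k with
    | zero => intro x; rw [pow_zero, pow_zero]; rfl
    | succ k ih =>
      intro x
      rw [pow_succ', pow_succ']
      have h1 : (σq * σq ^ k) (Ideal.Quotient.mk I x)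
          = σq ((σq ^ k) (Ideal.Quotient.mk I x)) := rfl
      have h2 : ((σ * σ ^ k) x) = σ ((σ ^ k) x) := rfl
      rw [h1, h2, ih, hmk]
  have hσqn : σq ^ n = 1 := by
    ext z
    obtain ⟨x, rfl⟩ := Ideal.Quotient.mk_surjective z
    rw [hpowmk, hσn]
    rfl
  have hdist : ∀ i : ℕ, 0 < i → i < n → ∃ z : T ⧸ I, (σq ^ i) z ≠ z := by
    intro i hi hin
    obtain ⟨t, ht⟩ := hgen i hi hin
    refine ⟨Ideal.Quotient.mk I t, fun hc => ht ?_⟩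
    rw [hpowmk] at hc
    exact Ideal.Quotient.eq.mp hc
  have key : ∀ (a b : ℕ) (z : T ⧸ I), (σq ^ (a + b)) z = (σq ^ a) ((σq ^ b) z) := by
    intro a b z
    rw [pow_add]
    rfl
  have hpowinj : ∀ a b : ℕ, a < n → b < n →
      (∀ z : T ⧸ I, (σq ^ a) z = (σq ^ b) z) → a = b := by
    intro a b ha hb hfun
    by_contra hne'
    rcases lt_or_gt_of_ne hne' with h | h
    · obtain ⟨z, hz⟩ := hdist (b - a) (by omega) (by omega)
      apply hz
      have e : a + (b - a) = b := by omega
      have h1 : (σq ^ a) ((σq ^ (b - a)) z) = (σq ^ b) z := by rw [← key, e]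
      have h2 := hfun ((σq ^ (b - a)) z)
      rw [h1] at h2
      exact ((σq ^ b).injective h2).symm
    · obtain ⟨z, hz⟩ := hdist (a - b) (by omega) (by omega)
      apply hz
      have e : b + (a - b) = a := by omega
      have h1 : (σq ^ b) ((σq ^ (a - b)) z) = (σq ^ a) z := by rw [← key, e]
      have h2 := (hfun ((σq ^ (a - b)) z)).symm
      rw [h1] at h2
      exact ((σq ^ a).injective h2).symm
  -- Dedekind: the reduced trace is not identically zero
  have hne : ∃ z : T ⧸ I, (∑ i ∈ Finset.range n, (σq ^ i) z) ≠ 0 := by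
    by_contra hall
    push_neg at hall
    set χ : Fin n → ((T ⧸ I) →* (T ⧸ I)) :=
      fun i => ((σq ^ (i : ℕ)).toRingHom : (T ⧸ I) →+* (T ⧸ I)).toMonoidHom with hχ
    have hχinj : Function.Injective χ := by
      intro i j hij
      exact Fin.ext (hpowinj i j i.isLt j.isLt fun z => DFunLike.congr_fun hij z)
    have li := (linearIndependent_monoidHom (T ⧸ I) (T ⧸ I)).comp χ hχinj
    have := Fintype.linearIndependent_iff.mp li (fun _ => 1) ?_ ⟨0, by omega⟩
    · exact one_ne_zero this
    · funext z
      have : ∑ i : Fin n, (σq ^ (i : ℕ)) z = 0 := by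
        rw [Fin.sum_univ_eq_sum_range (fun i => (σq ^ i) z) n]
        exact hall z
      simpa [Finset.sum_apply, hχ] using this
  -- refactored injectivity of powers
  obtain ⟨z0, hz0⟩ := hne
  obtain ⟨t0, rfl⟩ := Ideal.Quotient.mk_surjective z0
  have hft0 : f t0 ≠ 0 := by
    intro h0
    apply hz0
    have hmk0 : Ideal.Quotient.mk I (f t0) = 0 := by rw [h0]; exact map_zero _
    rw [hfapply, map_sum] at hmk0
    calc ∑ i ∈ Finset.range n, (σq ^ i) (Ideal.Quotient.mk I t0)
        = ∑ i ∈ Finset.range n, Ideal.Quotient.mk I ((σ ^ i) t0) :=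
          Finset.sum_congr rfl fun i _ => hpowmk i t0
      _ = 0 := hmk0
  -- the fixed-point submodule
  set F : Submodule S T := LinearMap.ker (σ.toLinearMap - LinearMap.id) with hF
  have hmemF : ∀ x : T, x ∈ F ↔ σ x = x := by
    intro x
    rw [hF, LinearMap.mem_ker, LinearMap.sub_apply, LinearMap.id_apply, sub_eq_zero]
    rfl
  have hrange : LinearMap.range f ≤ F := by
    rintro x ⟨t, rfl⟩
    rw [hmemF, hfapply]
    have hmapsum : σ (∑ i ∈ Finset.range n, (σ ^ i) t) = ∑ i ∈ Finset.range n, σ ((σ ^ i) t) :=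
      map_sum σ _ _
    rw [hmapsum]
    have h1 : ∀ i : ℕ, σ ((σ ^ i) t) = (σ ^ (i + 1)) t := by
      intro i; rw [pow_succ']; rfl
    calc ∑ i ∈ Finset.range n, σ ((σ ^ i) t)
        = ∑ i ∈ Finset.range n, (σ ^ (i + 1)) t := Finset.sum_congr rfl fun i _ => h1 i
      _ = ∑ i ∈ Finset.range n, (σ ^ i) t := by
          have h2 := Finset.sum_range_succ' (fun i => (σ ^ i) t) n
          have h3 := Finset.sum_range_succ (fun i => (σ ^ i) t) n
          have h4 : (σ ^ n) t = (σ ^ 0) t := by rw [hσn, pow_zero]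
          rw [h4] at h3
          have h5 : (∑ i ∈ Finset.range n, (σ ^ (i + 1)) t) + (σ ^ 0) t
              = (∑ i ∈ Finset.range n, (σ ^ i) t) + (σ ^ 0) t := by
            rw [← h2, h3]
          exact add_right_cancel h5
  -- instances
  haveI : IsNoetherian S T := isNoetherian_of_isNoetherianRing_of_finite S T
  haveI hFfin : Module.Finite S F := Module.Finite.iff_fg.mpr (IsNoetherian.noetherian F)
  haveI hKfin : Module.Finite S (LinearMap.ker f) :=
    Module.Finite.iff_fg.mpr (IsNoetherian.noetherian _)
  haveI : Module.Free S F := inferInstance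
  haveI : Module.Free S (LinearMap.ker f) := inferInstance
  -- cardinality of the residue field of S
  set q := Nat.card (S ⧸ Ideal.span {π}) with hq
  have hq2 : 2 ≤ q := by
    haveI : Nontrivial (S ⧸ Ideal.span {π}) :=
      Ideal.Quotient.nontrivial_iff.mpr (by simpa using Ideal.span_singleton_ne_top hπ.not_isUnit)
    haveI := Fintype.ofFinite (S ⧸ Ideal.span {π})
    have h2 := Fintype.one_lt_card (α := S ⧸ Ideal.span {π})
    rw [hq, Nat.card_eq_fintype_card]
    omega
  -- the submodule πT
  set Jr : Submodule S T := LinearMap.range (π • (LinearMap.id : T →ₗ[S] T)) with hJr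
  have hJrI : ∀ x : T, x ∈ Jr ↔ x ∈ I := by
    intro x
    rw [hJr]
    simp only [LinearMap.mem_range, LinearMap.smul_apply, LinearMap.id_apply]
    rw [hI, Ideal.mem_span_singleton']
    constructor
    · rintro ⟨y, rfl⟩
      exact ⟨y, by rw [Algebra.smul_def]; ring⟩
    · rintro ⟨a, rfl⟩
      exact ⟨a, by rw [Algebra.smul_def]; ring⟩
  have hJrIeq : Jr = I.restrictScalars S := by
    ext x; exact (hJrI x).trans (Iff.rfl)
  -- T ⧸ I is finite of cardinality q ^ n
  haveI : Finite (T ⧸ Jr) := Finite.of_equiv _ (auxQuotEquiv S π T).symm.toEquiv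
  have eTI : (T ⧸ Jr) ≃ (T ⧸ I) :=
    ((Submodule.quotEquivOfEq _ _ hJrIeq).trans
      (Submodule.Quotient.restrictScalarsEquiv S I)).toEquiv
  haveI : Finite (T ⧸ I) := Finite.of_equiv _ eTI
  have hcardTI : Nat.card (T ⧸ I) = q ^ n := by
    rw [← Nat.card_congr eTI, hJr, auxCard S π T, hrank]
  -- the group G = Z/n acting on T ⧸ I
  haveI : NeZero n := ⟨by omega⟩
  have hΦmul : ∀ x y : ZMod n, σq ^ (x + y).val = σq ^ x.val * σq ^ y.val := by
    intro x y
    rw [ZMod.val_add, ← pow_eq_pow_mod _ hσqn, pow_add]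
  set Φ : Multiplicative (ZMod n) →* RingAut (T ⧸ I) :=
    { toFun := fun g => σq ^ (Multiplicative.toAdd g).val,
      map_one' := by
        show σq ^ (Multiplicative.toAdd (1 : Multiplicative (ZMod n))).val = 1
        rw [toAdd_one, ZMod.val_zero, pow_zero],
      map_mul' := fun x y => hΦmul _ _ } with hΦ
  letI : MulSemiringAction (Multiplicative (ZMod n)) (T ⧸ I) := MulSemiringAction.compHom _ Φ
  have hsmul : ∀ (g : Multiplicative (ZMod n)) (z : T ⧸ I),
      g • z = (σq ^ (Multiplicative.toAdd g).val) z := fun g z => rfl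
  haveI : FaithfulSMul (Multiplicative (ZMod n)) (T ⧸ I) := by
    constructor
    intro g1 g2 h
    have ha : (Multiplicative.toAdd g1).val < n := ZMod.val_lt _
    have hb : (Multiplicative.toAdd g2).val < n := ZMod.val_lt _
    have heq : (Multiplicative.toAdd g1).val = (Multiplicative.toAdd g2).val :=
      hpowinj _ _ ha hb fun z => (hsmul g1 z).symm.trans ((h z).trans (hsmul g2 z))
    exact Multiplicative.toAdd.injective (ZMod.val_injective n heq)
  haveI : Fintype (T ⧸ I) := Fintype.ofFinite _
  letI : Field (T ⧸ I) := Ideal.Quotient.field I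
  set K0 := FixedPoints.subfield (Multiplicative (ZMod n)) (T ⧸ I) with hK0
  haveI : Fintype K0 := Fintype.ofFinite _
  have hcardG : Fintype.card (Multiplicative (ZMod n)) = n := by
    simp [ZMod.card]
  have hArtin : Module.finrank K0 (T ⧸ I) = n := by
    rw [hK0, FixedPoints.finrank_eq_card (Multiplicative (ZMod n)) (T ⧸ I), hcardG]
  have hcards : Fintype.card (T ⧸ I) = Fintype.card K0 ^ n := by
    rw [← hArtin]
    exact Module.card_eq_pow_finrank
  have hcardK0 : Nat.card K0 = q := by
    refine Nat.pow_left_injective (by omega : n ≠ 0) ?_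
    show Nat.card K0 ^ n = q ^ n
    rw [← hcardTI, Nat.card_eq_fintype_card, Nat.card_eq_fintype_card, hcards]
  -- the map from F ⧸ πF into K0
  set φ : F →ₗ[S] (T ⧸ I) :=
    (Submodule.Quotient.restrictScalarsEquiv S I).toLinearMap ∘ₗ
      (I.restrictScalars S).mkQ ∘ₗ F.subtype with hφdef
  have hφ : ∀ x : F, φ x = Ideal.Quotient.mk I (x : T) := fun x => rfl
  have hkerφ : LinearMap.ker φ = LinearMap.range (π • (LinearMap.id : F →ₗ[S] F)) := by
    ext x
    simp only [LinearMap.mem_ker, LinearMap.mem_range, LinearMap.smul_apply, LinearMap.id_apply]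
    rw [hφ x]
    constructor
    · intro h0
      have hxI : (x : T) ∈ I := by rwa [Ideal.Quotient.eq_zero_iff_mem] at h0
      obtain ⟨y, hy⟩ : ∃ y : T, π • y = (x : T) := by
        have := (hJrI (x : T)).mpr hxI
        rw [hJr] at this
        simpa using this
      have hyF : y ∈ F := by
        rw [hmemF]
        have hz : π • (σ y - y) = 0 := by
          have hσsm : σ (π • y) = π • σ y := map_smul σ.toLinearMap π y
          rw [smul_sub, ← hσsm, hy]
          have := (hmemF (x : T)).mp x.2
          rw [this, sub_self]
        rcases smul_eq_zero.mp hz with h | h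
        · exact absurd h hπ.ne_zero
        · exact sub_eq_zero.mp h
      exact ⟨⟨y, hyF⟩, Subtype.ext hy⟩
    · rintro ⟨y, rfl⟩
      rw [Ideal.Quotient.eq_zero_iff_mem]
      have hco : ((π • y : F) : T) = π • (y : T) := rfl
      rw [hco]
      exact (hJrI _).mp (by rw [hJr]; exact ⟨(y : T), rfl⟩)
  set ψ := Submodule.liftQ (LinearMap.range (π • (LinearMap.id : F →ₗ[S] F))) φ
    (le_of_eq hkerφ.symm) with hψ
  have hψinj : Function.Injective ψ := by
    rw [← LinearMap.ker_eq_bot, hψ]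
    exact Submodule.ker_liftQ_eq_bot _ _ _ (le_of_eq hkerφ)
  have hmemK0 : ∀ w : F ⧸ (LinearMap.range (π • (LinearMap.id : F →ₗ[S] F))), ψ w ∈ K0 := by
    intro w
    obtain ⟨x, rfl⟩ := Submodule.Quotient.mk_surjective _ w
    have hψmk : ψ (Submodule.Quotient.mk x) = Ideal.Quotient.mk I (x : T) := by
      rw [hψ, Submodule.liftQ_apply]
      exact hφ x
    rw [hψmk]
    have hfix : ∀ k : ℕ, (σ ^ k) (x : T) = (x : T) := by
      intro k
      induction k with
      | zero => rfl
      | succ k ih =>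
        rw [pow_succ']
        show σ ((σ ^ k) (x : T)) = (x : T)
        rw [ih]
        exact (hmemF _).mp x.2
    show Ideal.Quotient.mk I (x : T) ∈ MulAction.fixedPoints (Multiplicative (ZMod n)) (T ⧸ I)
    intro g
    rw [hsmul, hpowmk, hfix]
  haveI : Finite K0 := Finite.of_fintype _
  have hinj2 : Function.Injective
      (fun w : F ⧸ (LinearMap.range (π • (LinearMap.id : F →ₗ[S] F))) =>
        (⟨ψ w, hmemK0 w⟩ : K0)) := fun a b hab => hψinj (congrArg Subtype.val hab)
  have hcardF : Nat.card (F ⧸ LinearMap.range (π • (LinearMap.id : F →ₗ[S] F)))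
      = q ^ (Module.finrank S F) := auxCard S π F
  have hrF : Module.finrank S F ≤ 1 := by
    have hle := Nat.card_le_card_of_injective _ hinj2
    rw [hcardF, hcardK0] at hle
    have hle' : q ^ Module.finrank S F ≤ q ^ 1 := by rwa [pow_one]
    exact (Nat.pow_le_pow_iff_right (by omega : 1 < q)).mp hle'
  -- rank computations
  have hTrank : Module.rank S T = (n : Cardinal) := by
    rw [← Module.finrank_eq_rank S T, hrank]
  have hFrank : Module.rank S F ≤ 1 := by
    rw [← Module.finrank_eq_rank S F]
    exact_mod_cast hrF
  haveI : Nontrivial (LinearMap.range f) :=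
    ⟨⟨⟨f t0, LinearMap.mem_range_self f t0⟩, 0,
      fun hc => hft0 (by simpa using congrArg Subtype.val hc)⟩⟩
  have hrange1 : Module.rank S (LinearMap.range f) = 1 := by
    apply le_antisymm
    · exact (Submodule.rank_mono hrange).trans hFrank
    · exact Cardinal.one_le_iff_pos.mpr rank_pos
  have hsum := LinearMap.rank_range_add_rank_ker f
  rw [hrange1, hTrank, ← Module.finrank_eq_rank S (LinearMap.ker f)] at hsum
  have hnat : 1 + Module.finrank S (LinearMap.ker f) = n := by exact_mod_cast hsum
  exact ⟨inferInstance, by omega⟩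
end

section
/- Both short exact sequences of S-modules 0 → S·1 → T →^{1−σ⁻¹} ker(Tr_{T/S}) → 0 and 0 → ker(Tr_{T/S}) → T →^{Tr} S·1 → 0 split; in particular there is an S-module isomorphism T ≅ S ⊕ ker(Tr_{T/S}). -/
section aux
variable {S : Type*} [CommRing S] {T : Type*} [CommRing T] [Algebra S T]

lemma st3_shift (n : ℕ) (σ : T ≃ₐ[S] T) (hσn : σ ^ n = 1) (x : T) :
    ∑ i ∈ Finset.range n, (σ ^ i) (σ x) = ∑ i ∈ Finset.range n, (σ ^ i) x := by
  have h1 : ∑ i ∈ Finset.range (n + 1), (σ ^ i) x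
      = (∑ i ∈ Finset.range n, (σ ^ (i + 1)) x) + (σ ^ 0) x := Finset.sum_range_succ' _ n
  have h2 : ∑ i ∈ Finset.range (n + 1), (σ ^ i) x
      = (∑ i ∈ Finset.range n, (σ ^ i) x) + (σ ^ n) x := Finset.sum_range_succ _ n
  have h3 : (σ ^ n) x = x := by rw [hσn]; rfl
  have h4 : ∀ i, (σ ^ (i + 1)) x = (σ ^ i) (σ x) := by
    intro i; rw [pow_succ]; rfl
  simp only [h4, pow_zero, AlgEquiv.one_apply, h3] at h1 h2
  have := h1.symm.trans h2
  exact add_right_cancel this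

lemma st3_shift_pow (n : ℕ) (σ : T ≃ₐ[S] T) (hσn : σ ^ n = 1) (k : ℕ) (x : T) :
    ∑ i ∈ Finset.range n, (σ ^ i) ((σ ^ k) x) = ∑ i ∈ Finset.range n, (σ ^ i) x := by
  induction k with
  | zero => simp
  | succ k ih =>
    have : (σ ^ (k + 1)) x = σ ((σ ^ k) x) := by rw [pow_succ']; rfl
    rw [this, st3_shift n σ hσn, ih]

lemma st3_shift_left (n : ℕ) (σ : T ≃ₐ[S] T) (hσn : σ ^ n = 1) (x : T) :
    σ (∑ i ∈ Finset.range n, (σ ^ i) x) = ∑ i ∈ Finset.range n, (σ ^ i) x := by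
  rw [map_sum]
  have h4 : ∀ i, σ ((σ ^ i) x) = (σ ^ i) (σ x) := by
    intro i
    have : σ * σ ^ i = σ ^ i * σ := ((Commute.self_pow σ i).symm.eq.symm)
    have := congrArg (fun f : T ≃ₐ[S] T => f x) this
    simpa [AlgEquiv.mul_apply] using this
  simp only [h4]
  exact st3_shift n σ hσn x

lemma st3_pow_reflect (n : ℕ) (σ : T ≃ₐ[S] T) (j : ℕ) (hj : j ≤ n - 1) (z : T) :
    (σ ^ (n - 1)) ((σ⁻¹ ^ j) z) = (σ ^ (n - 1 - j)) z := by
  have h : σ ^ (n - 1) * (σ ^ j)⁻¹ = σ ^ (n - 1 - j) := by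
    rw [mul_inv_eq_iff_eq_mul, ← pow_add, Nat.sub_add_cancel hj]
  rw [inv_pow]
  have := congrArg (fun f : T ≃ₐ[S] T => f z) h
  simpa [AlgEquiv.mul_apply] using this

end aux

section h90
variable {S : Type*} [CommRing S] {T : Type*} [CommRing T] [Algebra S T]

lemma st3_h90 (n : ℕ) (hn : 1 ≤ n) (σ : T ≃ₐ[S] T) (hσn : σ ^ n = 1)
    (θ : T) (hθ : ∑ i ∈ Finset.range n, (σ ^ i) θ = 1)
    (y : T) (hy : ∑ i ∈ Finset.range n, (σ ^ i) y = 0) :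
    (∑ i ∈ Finset.range n, (∑ j ∈ Finset.range i, (σ⁻¹ ^ j) y) * (σ⁻¹ ^ i) θ)
      - σ⁻¹ (∑ i ∈ Finset.range n, (∑ j ∈ Finset.range i, (σ⁻¹ ^ j) y) * (σ⁻¹ ^ i) θ) = y := by
  set τ := σ⁻¹ with hτ
  have hτn : τ ^ n = 1 := by rw [hτ, inv_pow, hσn, inv_one]
  set c : ℕ → T := fun i => ∑ j ∈ Finset.range i, (τ ^ j) y with hc
  set a : ℕ → T := fun i => (τ ^ i) θ with ha
  have hpowsucc : ∀ (k : ℕ) (z : T), (τ ^ (k + 1)) z = τ ((τ ^ k) z) := by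
    intro k z; rw [pow_succ']; rfl
  have hcsucc : ∀ i, τ (c i) = c (i + 1) - y := by
    intro i
    have h1 : c (i + 1) = (∑ j ∈ Finset.range i, (τ ^ (j + 1)) y) + (τ ^ 0) y :=
      Finset.sum_range_succ' _ i
    have h2 : τ (c i) = ∑ j ∈ Finset.range i, (τ ^ (j + 1)) y := by
      rw [hc]; simp only [map_sum]
      exact Finset.sum_congr rfl fun j _ => (hpowsucc j y).symm
    rw [h2]
    rw [pow_zero] at h1
    simp only [AlgEquiv.one_apply] at h1
    rw [eq_sub_iff_add_eq, ← h1]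
  have hasucc : ∀ i, τ (a i) = a (i + 1) := by
    intro i; rw [ha]; exact (hpowsucc i θ).symm
  have hrefl : ∀ j, j ≤ n - 1 → ∀ z : T, (σ ^ (n - 1)) ((τ ^ j) z) = (σ ^ (n - 1 - j)) z :=
    fun j hj z => st3_pow_reflect n σ j hj z
  have hcn : c n = 0 := by
    have h1 : (σ ^ (n - 1)) (c n) = ∑ j ∈ Finset.range n, (σ ^ (n - 1 - j)) y := by
      rw [hc]; simp only [map_sum]
      refine Finset.sum_congr rfl fun j hj => ?_
      exact hrefl j (by have := Finset.mem_range.mp hj; omega) y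
    rw [Finset.sum_range_reflect (fun j => (σ ^ j) y) n] at h1
    rw [hy] at h1
    exact (σ ^ (n - 1)).injective (by rw [h1, map_zero])
  have hSθ : ∑ i ∈ Finset.range n, a i = 1 := by
    have h1 : (σ ^ (n - 1)) (∑ i ∈ Finset.range n, a i)
        = ∑ i ∈ Finset.range n, (σ ^ (n - 1 - i)) θ := by
      simp only [map_sum, ha]
      refine Finset.sum_congr rfl fun i hi => ?_
      exact hrefl i (by have := Finset.mem_range.mp hi; omega) θ
    rw [Finset.sum_range_reflect (fun j => (σ ^ j) θ) n, hθ] at h1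
    exact (σ ^ (n - 1)).injective (by rw [h1, map_one])
  have han : a n = θ := by rw [ha]; simp [hτn]
  have ha0 : a 0 = θ := by rw [ha]; simp
  have hc0 : c 0 = 0 := by rw [hc]; simp
  -- compute τ x
  have hτx : τ (∑ i ∈ Finset.range n, c i * a i)
      = ∑ i ∈ Finset.range n, (c i - y) * a i := by
    have h1 : τ (∑ i ∈ Finset.range n, c i * a i)
        = ∑ i ∈ Finset.range n, (c (i + 1) - y) * a (i + 1) := by
      rw [map_sum]
      refine Finset.sum_congr rfl fun i _ => ?_
      rw [map_mul, hcsucc, hasucc]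
    set g : ℕ → T := fun i => (c i - y) * a i with hg
    have h2 : ∑ i ∈ Finset.range (n + 1), g i
        = (∑ i ∈ Finset.range n, g (i + 1)) + g 0 := Finset.sum_range_succ' _ n
    have h3 : ∑ i ∈ Finset.range (n + 1), g i
        = (∑ i ∈ Finset.range n, g i) + g n := Finset.sum_range_succ _ n
    have hgn : g n = g 0 := by rw [hg]; simp only [hcn, hc0, han, ha0]
    rw [h1]
    have h4 : (∑ i ∈ Finset.range n, g (i + 1)) + g 0
        = (∑ i ∈ Finset.range n, g i) + g n := by rw [← h2, h3]
    rw [hgn] at h4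
    exact add_right_cancel h4
  rw [hτx, ← Finset.sum_sub_distrib]
  have : ∀ i, c i * a i - (c i - y) * a i = y * a i := fun i => by ring
  rw [Finset.sum_congr rfl (fun i _ => this i), ← Finset.mul_sum, hSθ, mul_one]
end h90


lemma st3_pow_fix {S : Type*} [CommRing S] {T : Type*} [CommRing T] [Algebra S T]
    (σ : T ≃ₐ[S] T) (z : T) (hz : σ z = z) (i : ℕ) : (σ ^ i) z = z := by
  induction i with
  | zero => simp
  | succ i ih =>
    have : (σ ^ (i + 1)) z = (σ ^ i) (σ z) := by rw [pow_succ]; rfl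
    rw [this, hz, ih]

lemma st3_trace_one
    (S : Type*) [CommRing S] [IsDomain S] [IsDiscreteValuationRing S]
    (π : S) (hπ : Irreducible π)
    [Finite (S ⧸ Ideal.span {π})]
    (T : Type*) [CommRing T] [IsDomain T] [IsDiscreteValuationRing T]
    [Algebra S T] [Module.Free S T]
    (n : ℕ) (hn : 1 ≤ n) (hrank : Module.finrank S T = n)
    (hmax : IsLocalRing.maximalIdeal T = Ideal.span {algebraMap S T π})
    (σ : T ≃ₐ[S] T) (hσn : σ ^ n = 1)
    (hgen : ∀ i : ℕ, 0 < i → i < n →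
      ∃ t : T, (σ ^ i) t - t ∉ Ideal.span {algebraMap S T π}) :
    ∃ θ : T, ∑ i ∈ Finset.range n, (σ ^ i) θ = 1 := by
  classical
  set I : Ideal T := Ideal.span {algebraMap S T π} with hIdef
  haveI hImax : I.IsMaximal := hmax ▸ inferInstance
  -- there exists t whose "trace" is not in I
  have hW : ∃ t : T, ∑ i ∈ Finset.range n, (σ ^ i) t ∉ I := by
    by_contra hall
    push_neg at hall
    set F := T ⧸ I with hFdef
    set Q : T →+* F := Ideal.Quotient.mk I with hQdef
    set f : Fin n → (T →* F) :=
      fun i => (Q.comp ((σ ^ (i : ℕ) : T ≃ₐ[S] T) : T →+* T)).toMonoidHom with hfdef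
    have hfapp : ∀ (i : Fin n) (t : T), f i t = Q ((σ ^ (i : ℕ)) t) := fun i t => rfl
    have key : ∀ (i j : Fin n), (i : ℕ) < (j : ℕ) → f i ≠ f j := by
      intro i j hij hEq
      have hagree : ∀ t : T, Q ((σ ^ (i : ℕ)) t) = Q ((σ ^ (j : ℕ)) t) := by
        intro t
        rw [← hfapp, ← hfapp, hEq]
      set k := (j : ℕ) - (i : ℕ) with hkdef
      have hk1 : 0 < k := by omega
      have hk2 : k < n := by have := j.2; omega
      obtain ⟨t₀, ht₀⟩ := hgen k hk1 hk2
      have h1 : ∀ t : T, (σ ^ ((i : ℕ) + (n - (i : ℕ)))) t = t := by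
        intro t
        have : (i : ℕ) + (n - (i : ℕ)) = n := by have := i.2; omega
        rw [this, hσn]; rfl
      have h2 : (σ ^ ((j : ℕ)) ) ((σ ^ (n - (i : ℕ))) t₀) = (σ ^ k) t₀ := by
        have hpow : σ ^ ((j : ℕ)) * σ ^ (n - (i : ℕ)) = σ ^ k * σ ^ n := by
          rw [← pow_add, ← pow_add]
          congr 1
          have := i.2; have := j.2; omega
        have := congrArg (fun g : T ≃ₐ[S] T => g t₀) hpow
        simp only [AlgEquiv.mul_apply] at this
        rw [this, hσn]
        rfl
      have h3 : (σ ^ ((i : ℕ))) ((σ ^ (n - (i : ℕ))) t₀) = t₀ := by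
        have hpow : σ ^ ((i : ℕ)) * σ ^ (n - (i : ℕ)) = σ ^ ((i : ℕ) + (n - (i : ℕ))) := by
          rw [← pow_add]
        have := congrArg (fun g : T ≃ₐ[S] T => g t₀) hpow
        simp only [AlgEquiv.mul_apply] at this
        rw [this, h1]
      have := hagree ((σ ^ (n - (i : ℕ))) t₀)
      rw [h2, h3] at this
      exact ht₀ ((Ideal.Quotient.eq (I := I)).mp this.symm)
    have hfinj : Function.Injective f := by
      intro i j hij
      rcases lt_trichotomy ((i : ℕ)) ((j : ℕ)) with h | h | h
      · exact absurd hij (key i j h)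
      · exact Fin.ext h
      · exact absurd hij.symm (key j i h)
    have hli := (linearIndependent_monoidHom T F).comp f hfinj
    rw [linearIndependent_iff'] at hli
    have hzero : ∑ i ∈ Finset.univ, (1 : F) • (⇑(f i) : T → F) = 0 := by
      funext t
      simp only [Finset.sum_apply, Pi.smul_apply, one_smul, Pi.zero_apply]
      have : ∑ i : Fin n, f i t = Q (∑ i ∈ Finset.range n, (σ ^ i) t) := by
        rw [map_sum]
        rw [Finset.sum_range fun i => Q ((σ ^ i) t)]
        rfl
      rw [this]
      exact Ideal.Quotient.eq_zero_iff_mem.mpr (hall t)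
    have := hli Finset.univ (fun _ => (1 : F)) hzero ⟨0, hn⟩ (Finset.mem_univ _)
    exact one_ne_zero this
  obtain ⟨t, ht⟩ := hW

  have hunit : IsUnit (∑ i ∈ Finset.range n, (σ ^ i) t) := by
    rw [← IsLocalRing.notMem_maximalIdeal, hmax]
    exact ht
  obtain ⟨u, hu⟩ := hunit
  have hufix : σ (↑u : T) = ↑u := by rw [hu]; exact st3_shift_left n σ hσn t
  have huinvfix : σ (↑u⁻¹ : T) = ↑u⁻¹ := by
    have h1 : σ (↑u⁻¹ : T) * (↑u : T) = 1 := by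
      rw [← hufix, ← map_mul]
      rw [Units.inv_mul]
      exact map_one σ
    calc σ (↑u⁻¹ : T) = σ (↑u⁻¹ : T) * ((↑u : T) * (↑u⁻¹ : T)) := by rw [Units.mul_inv, mul_one]
    _ = (σ (↑u⁻¹ : T) * (↑u : T)) * (↑u⁻¹ : T) := by ring
    _ = (↑u⁻¹ : T) := by rw [h1, one_mul]
  refine ⟨(↑u⁻¹ : T) * t, ?_⟩
  have : ∀ i ∈ Finset.range n, (σ ^ i) ((↑u⁻¹ : T) * t) = (↑u⁻¹ : T) * (σ ^ i) t := by
    intro i _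
    rw [map_mul, st3_pow_fix σ _ huinvfix i]
  rw [Finset.sum_congr rfl this, ← Finset.mul_sum, ← hu, Units.inv_mul]



lemma st3_fixed_residue
    (S : Type*) [CommRing S] [IsDomain S] [IsDiscreteValuationRing S]
    (π : S) (hπ : Irreducible π)
    [Finite (S ⧸ Ideal.span {π})]
    (T : Type*) [CommRing T] [IsDomain T] [IsDiscreteValuationRing T]
    [Algebra S T] [Module.Free S T]
    (n : ℕ) (hn : 1 ≤ n) (hrank : Module.finrank S T = n)
    (hmax : IsLocalRing.maximalIdeal T = Ideal.span {algebraMap S T π})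
    (σ : T ≃ₐ[S] T) (hσn : σ ^ n = 1)
    (hgen : ∀ i : ℕ, 0 < i → i < n →
      ∃ t : T, (σ ^ i) t - t ∉ Ideal.span {algebraMap S T π})
    (x : T) (hx : σ x = x) :
    ∃ a : S, x - algebraMap S T a ∈ Ideal.span {algebraMap S T π} := by
  classical
  haveI : NeZero n := ⟨by omega⟩
  set I : Ideal T := Ideal.span {algebraMap S T π} with hIdef
  haveI hImax : I.IsMaximal := hmax ▸ inferInstance
  set F := T ⧸ I with hFdef
  letI : Field F := Ideal.Quotient.field I
  set Q : T →+* F := Ideal.Quotient.mk I with hQdef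
  -- the induced automorphism of the residue field
  have hITmap : I = I.map (σ : T →+* T) := by
    rw [hIdef, Ideal.map_span]
    simp only [Set.image_singleton]
    rw [show (σ : T →+* T) (algebraMap S T π) = algebraMap S T π from σ.commutes π]
  set σb : F ≃+* F := Ideal.quotientEquiv I I σ.toRingEquiv hITmap with hσbdef
  have hσb : ∀ t : T, σb (Q t) = Q (σ t) := fun t =>
    Ideal.quotientEquiv_mk I I σ.toRingEquiv hITmap t
  have hmulapp : ∀ (f g : F ≃+* F) (z : F), (f * g) z = f (g z) := fun f g z => rfl
  have hσbpow : ∀ (k : ℕ) (t : T), (σb ^ k) (Q t) = Q ((σ ^ k) t) := by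
    intro k
    induction k with
    | zero => intro t; rfl
    | succ k ih =>
      intro t
      have h1 : σb ^ (k + 1) = σb ^ k * σb := pow_succ σb k
      have h2 : (σ ^ (k + 1)) t = (σ ^ k) (σ t) := by rw [pow_succ]; rfl
      rw [h1, hmulapp, hσb, ih, h2]
  have hσbn : σb ^ n = 1 := by
    ext z
    obtain ⟨t, rfl⟩ := Ideal.Quotient.mk_surjective z
    rw [show (Ideal.Quotient.mk I) t = Q t from rfl, hσbpow, hσn]
    rfl
  have hpowmod : ∀ k : ℕ, σb ^ k = σb ^ (k % n) := by
    intro k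
    conv_lhs => rw [← Nat.div_add_mod k n]
    rw [pow_add, pow_mul, hσbn, one_pow, one_mul]
  -- the action of ZMod n on F
  set φ : Multiplicative (ZMod n) →* (F ≃+* F) :=
    MonoidHom.mk' (fun a => σb ^ (Multiplicative.toAdd a).val)
      (by
        intro a b
        show σb ^ (Multiplicative.toAdd a + Multiplicative.toAdd b).val
            = σb ^ (Multiplicative.toAdd a).val * σb ^ (Multiplicative.toAdd b).val
        rw [ZMod.val_add, ← hpowmod, pow_add]) with hφdef
  letI : MulSemiringAction (Multiplicative (ZMod n)) F := MulSemiringAction.compHom F φ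
  have hsmul : ∀ (a : Multiplicative (ZMod n)) (z : F),
      a • z = (σb ^ (Multiplicative.toAdd a).val) z := fun a z => rfl
  have htriv : ∀ m : Multiplicative (ZMod n), (∀ z : F, m • z = z) → m = 1 := by
    intro m hm
    by_contra hm1
    have hval : 0 < (Multiplicative.toAdd m).val := by
      rcases Nat.eq_zero_or_pos (Multiplicative.toAdd m).val with h | h
      swap
      · exact h
      exact absurd (by
          have := (ZMod.val_eq_zero _).mp h
          rw [show m = Multiplicative.ofAdd (Multiplicative.toAdd m) from rfl, this]
          rfl) hm1
    obtain ⟨t₀, ht₀⟩ := hgen (Multiplicative.toAdd m).val hval (ZMod.val_lt _)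
    have := hm (Q t₀)
    rw [hsmul, hσbpow] at this
    exact ht₀ ((Ideal.Quotient.eq (I := I)).mp this)
  haveI : FaithfulSMul (Multiplicative (ZMod n)) F := by
    constructor
    intro m₁ m₂ h
    have : ∀ z : F, (m₁ * m₂⁻¹) • z = z := by
      intro z
      have h2 := h (a := m₂⁻¹ • z)
      rw [smul_smul, smul_smul, mul_inv_cancel, one_smul] at h2
      exact h2
    have := htriv _ this
    rw [mul_inv_eq_one] at this
    exact this
  -- Artin's theorem
  set K := FixedPoints.subfield (Multiplicative (ZMod n)) F with hKdef
  have hKrank : Module.finrank K F = n := by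
    rw [FixedPoints.finrank_eq_card (Multiplicative (ZMod n)) F]
    simp [ZMod.card]
  -- cardinality of F
  haveI : Module.Finite S T := Module.finite_of_finrank_pos (by omega)
  set b : Module.Basis (Fin n) S T := Module.finBasisOfFinrankEq S T hrank with hbdef
  set k := S ⧸ Ideal.span {π} with hkdef
  set e1 : T ≃ₗ[S] (Fin n → S) := b.equivFun with he1def
  set J : Submodule S T := Submodule.restrictScalars S I with hJdef
  have equivA : (T ⧸ J) ≃ₗ[S] F := Submodule.Quotient.restrictScalarsEquiv S I
  set Jmap : Submodule S (Fin n → S) := J.map (e1 : T →ₗ[S] (Fin n → S)) with hJmapdef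
  have equivB : (T ⧸ J) ≃ₗ[S] ((Fin n → S) ⧸ Jmap) :=
    Submodule.Quotient.equiv J Jmap (e1 : T ≃ₗ[S] (Fin n → S)) rfl
  have hJmem : ∀ z : T, z ∈ J ↔ ∃ c : T, z = π • c := by
    intro z
    rw [hJdef, Submodule.restrictScalars_mem, hIdef, Ideal.mem_span_singleton']
    constructor
    · rintro ⟨c, rfl⟩
      exact ⟨c, by rw [Algebra.smul_def, mul_comm]⟩
    · rintro ⟨c, rfl⟩
      exact ⟨c, by rw [Algebra.smul_def, mul_comm]⟩
  have hJmap : Jmap = Submodule.pi Set.univ (fun _ : Fin n => (Ideal.span {π} : Ideal S)) := by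
    ext v
    rw [hJmapdef, Submodule.mem_map, Submodule.mem_pi]
    constructor
    · rintro ⟨z, hz, rfl⟩
      obtain ⟨c, rfl⟩ := (hJmem z).mp hz
      intro i _
      rw [map_smul]
      exact Ideal.mem_span_singleton'.mpr ⟨e1 c i, by rw [Pi.smul_apply, smul_eq_mul, mul_comm]; rfl⟩
    · intro hv
      have : ∀ i : Fin n, ∃ c : S, v i = π * c := by
        intro i
        obtain ⟨c, hc⟩ := Ideal.mem_span_singleton'.mp (hv i (Set.mem_univ i))
        exact ⟨c, by rw [← hc, mul_comm]⟩
      choose c hc using this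
      refine ⟨π • e1.symm c, (hJmem _).mpr ⟨e1.symm c, rfl⟩, ?_⟩
      rw [map_smul, LinearEquiv.coe_coe, e1.apply_symm_apply]
      funext i
      rw [Pi.smul_apply, smul_eq_mul, ← hc]
  have equivC : ((Fin n → S) ⧸ Jmap) ≃ₗ[S]
      ((Fin n → S) ⧸ Submodule.pi Set.univ (fun _ : Fin n => (Ideal.span {π} : Ideal S))) :=
    Submodule.quotEquivOfEq _ _ hJmap
  have equivD := Submodule.quotientPi (fun _ : Fin n => (Ideal.span {π} : Ideal S))
  have hcardF : Nat.card F = Nat.card k ^ n := by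
    have e : F ≃ (Fin n → k) :=
      (equivA.symm.trans (equivB.trans (equivC.trans equivD))).toEquiv
    rw [Nat.card_congr e, Nat.card_pi]
    simp [Finset.prod_const]
  haveI : Finite F := by
    have h1 : 0 < Nat.card k := Nat.card_pos
    have h2 : 0 < Nat.card F := by rw [hcardF]; positivity
    exact (Nat.card_pos_iff.mp h2).2
  haveI : Finite K := by
    exact Finite.Set.subset _ (Set.subset_univ _)
  letI : Fintype F := Fintype.ofFinite F
  letI : Fintype K := Fintype.ofFinite K
  letI : Fintype k := Fintype.ofFinite k
  -- the bottom field
  haveI hkmax : (Ideal.span {π} : Ideal S).IsMaximal := by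
    rw [← hπ.maximalIdeal_eq]
    exact IsLocalRing.maximalIdeal.isMaximal S
  letI : Field k := Ideal.Quotient.field (Ideal.span {π} : Ideal S)
  set ρ : k →+* F := Ideal.Quotient.lift (Ideal.span {π}) (Q.comp (algebraMap S T))
    (by
      intro a ha
      obtain ⟨c, hc⟩ := Ideal.mem_span_singleton'.mp ha
      rw [RingHom.comp_apply]
      refine Ideal.Quotient.eq_zero_iff_mem.mpr ?_
      rw [← hc, map_mul, hIdef]
      exact Ideal.mul_mem_left _ _ (Ideal.subset_span rfl)) with hρdef
  have hρ : ∀ s : S, ρ (Ideal.Quotient.mk _ s) = Q (algebraMap S T s) := fun s => rfl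
  have hmemK : ∀ z : T, σ z = z → Q z ∈ K := by
    intro z hz
    rw [hKdef]
    have : ∀ m : Multiplicative (ZMod n), m • (Q z) = Q z := by
      intro m
      rw [hsmul, hσbpow, st3_pow_fix σ z hz]
    exact this
  have hrange : ∀ a : k, ρ a ∈ K := by
    intro a
    obtain ⟨s, rfl⟩ := Ideal.Quotient.mk_surjective a
    rw [hρ]
    exact hmemK _ (σ.commutes s)
  set ρK : k → K := fun a => ⟨ρ a, hrange a⟩ with hρKdef
  have hρKinj : Function.Injective ρK := by
    intro a b hab
    have : ρ a = ρ b := congrArg Subtype.val hab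
    exact RingHom.injective ρ this
  have hcardK : Fintype.card K = Fintype.card k := by
    have h1 : Fintype.card F = Fintype.card K ^ n := by
      rw [← hKrank]
      exact Module.card_eq_pow_finrank
    have h2 : Fintype.card F = Fintype.card k ^ n := by
      rw [← Nat.card_eq_fintype_card, ← Nat.card_eq_fintype_card (α := k), hcardF]
    have := h1.symm.trans h2
    exact Nat.pow_left_injective (by omega) this
  have hρKbij : Function.Bijective ρK :=
    (Fintype.bijective_iff_injective_and_card ρK).mpr ⟨hρKinj, (hcardK.symm ▸ rfl : Fintype.card k = Fintype.card K)⟩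
  obtain ⟨a, ha⟩ := hρKbij.2 ⟨Q x, hmemK x hx⟩
  obtain ⟨s, rfl⟩ := Ideal.Quotient.mk_surjective a
  refine ⟨s, ?_⟩
  have : Q (algebraMap S T s) = Q x := by
    have := congrArg Subtype.val ha
    rw [hρKdef] at this
    simpa [hρ] using this
  exact (Ideal.Quotient.eq (I := I)).mp this.symm

lemma st3_fixed
    (S : Type*) [CommRing S] [IsDomain S] [IsDiscreteValuationRing S]
    (π : S) (hπ : Irreducible π)
    [IsAdicComplete (Ideal.span {π}) S] [Finite (S ⧸ Ideal.span {π})]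
    (T : Type*) [CommRing T] [IsDomain T] [IsDiscreteValuationRing T]
    [Algebra S T] [Module.Free S T]
    (n : ℕ) (hn : 1 ≤ n) (hrank : Module.finrank S T = n)
    (hmax : IsLocalRing.maximalIdeal T = Ideal.span {algebraMap S T π})
    (σ : T ≃ₐ[S] T) (hσn : σ ^ n = 1)
    (hgen : ∀ i : ℕ, 0 < i → i < n →
      ∃ t : T, (σ ^ i) t - t ∉ Ideal.span {algebraMap S T π})
    (x : T) (hx : σ x = x) : ∃ s : S, algebraMap S T s = x := by
  classical
  set I : Ideal T := Ideal.span {algebraMap S T π} with hIdef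
  haveI hImax : I.IsMaximal := hmax ▸ inferInstance
  have hinj : Function.Injective (algebraMap S T) := by
    intro a b hab
    rw [Algebra.algebraMap_eq_smul_one, Algebra.algebraMap_eq_smul_one] at hab
    exact smul_left_injective S (one_ne_zero : (1 : T) ≠ 0) hab
  have hπT : algebraMap S T π ≠ 0 := by
    intro h
    exact hπ.ne_zero (hinj (by rw [h, map_zero]))
  have hres : ∀ z : T, σ z = z → ∃ a : S, z - algebraMap S T a ∈ I :=
    st3_fixed_residue S π hπ T n hn hrank hmax σ hσn hgen
  -- inductive step
  have step : ∀ (m : ℕ) (s : S), x - algebraMap S T s ∈ I ^ m →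
      ∃ s' : S, (x - algebraMap S T s' ∈ I ^ (m + 1)) ∧ s' - s ∈ (Ideal.span {π}) ^ m := by
    intro m s hmem
    rw [hIdef, Ideal.span_singleton_pow, Ideal.mem_span_singleton'] at hmem
    obtain ⟨z, hz⟩ := hmem
    have hzfix : σ z = z := by
      have h1 : σ (x - algebraMap S T s) = x - algebraMap S T s := by
        rw [map_sub, hx, σ.commutes]
      rw [← hz, map_mul, map_pow, σ.commutes] at h1
      have h2 : (σ z - z) * (algebraMap S T π) ^ m = 0 := by
        rw [sub_mul, h1]
        ring
      rcases mul_eq_zero.mp h2 with h | h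
      · exact sub_eq_zero.mp h
      · exact absurd h (pow_ne_zero m hπT)
    obtain ⟨a, ha⟩ := hres z hzfix
    refine ⟨s + π ^ m * a, ?_, ?_⟩
    · have hxs : x - algebraMap S T (s + π ^ m * a)
          = (algebraMap S T π) ^ m * (z - algebraMap S T a) := by
        rw [map_add, map_mul, map_pow]
        rw [← sub_sub, ← hz]
        ring
      rw [hxs, pow_succ]
      exact Ideal.mul_mem_mul (Ideal.pow_mem_pow
        (by rw [hIdef]; exact Ideal.mem_span_singleton_self _) m) ha
    · rw [add_sub_cancel_left, Ideal.span_singleton_pow, Ideal.mem_span_singleton]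
      exact Dvd.intro a rfl
  -- build the sequence
  have base : x - algebraMap S T 0 ∈ I ^ 0 := by simp
  let G : ∀ m : ℕ, {s : S // x - algebraMap S T s ∈ I ^ m} := fun m =>
    Nat.rec (motive := fun m => {s : S // x - algebraMap S T s ∈ I ^ m}) ⟨0, base⟩
      (fun m prev => ⟨Classical.choose (step m prev.1 prev.2),
        (Classical.choose_spec (step m prev.1 prev.2)).1⟩) m
  let sq : ℕ → S := fun m => (G m).1
  have hsqmem : ∀ m, x - algebraMap S T (sq m) ∈ I ^ m := fun m => (G m).2
  have hcompat : ∀ m, sq (m + 1) - sq m ∈ (Ideal.span {π}) ^ m := by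
    intro m
    exact (Classical.choose_spec (step m (G m).1 (G m).2)).2
  have hcompat' : ∀ m l : ℕ, sq (m + l) - sq m ∈ (Ideal.span {π}) ^ m := by
    intro m l
    induction l with
    | zero => simp
    | succ l ih =>
      have h1 : sq (m + l + 1) - sq (m + l) ∈ (Ideal.span {π}) ^ m :=
        Ideal.pow_le_pow_right (by omega) (hcompat (m + l))
      have h2 : sq (m + (l + 1)) - sq m
          = (sq (m + l + 1) - sq (m + l)) + (sq (m + l) - sq m) := by
        have : m + (l + 1) = m + l + 1 := by omega
        rw [this]
        ring
      rw [h2]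
      exact add_mem h1 ih
  have hprec : ∀ {a b : ℕ}, a ≤ b →
      sq a ≡ sq b [SMOD ((Ideal.span {π}) ^ a • ⊤ : Submodule S S)] := by
    intro a b hab
    rw [SModEq.sub_mem]
    have : (Ideal.span {π}) ^ a • (⊤ : Submodule S S) = (Ideal.span {π}) ^ a := by
      rw [smul_eq_mul, Ideal.mul_top]
    rw [this]
    have h1 := hcompat' a (b - a)
    have h2 : a + (b - a) = b := by omega
    rw [h2] at h1
    have hneg : sq a - sq b = -(sq b - sq a) := by ring
    rw [hneg]
    exact neg_mem h1
  obtain ⟨L, hL⟩ := IsPrecomplete.prec (IsAdicComplete.toIsPrecomplete (I := Ideal.span {π}) (M := S)) hprec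
  refine ⟨L, ?_⟩
  have hker : ∀ m : ℕ, x - algebraMap S T L ∈ I ^ m := by
    intro m
    have h1 : sq m - L ∈ (Ideal.span {π}) ^ m := by
      have := hL m
      rw [SModEq.sub_mem] at this
      have h2 : (Ideal.span {π}) ^ m • (⊤ : Submodule S S) = (Ideal.span {π}) ^ m := by
        rw [smul_eq_mul, Ideal.mul_top]
      rw [h2] at this
      exact this
    have h3 : algebraMap S T (sq m - L) ∈ I ^ m := by
      rw [Ideal.span_singleton_pow, Ideal.mem_span_singleton] at h1
      obtain ⟨c, hc⟩ := h1
      rw [hc, map_mul, map_pow, hIdef, Ideal.span_singleton_pow, Ideal.mem_span_singleton]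
      exact dvd_mul_right _ _
    have h4 : x - algebraMap S T L = (x - algebraMap S T (sq m)) + algebraMap S T (sq m - L) := by
      rw [map_sub]
      ring
    rw [h4]
    exact add_mem (hsqmem m) h3
  have hbot : (⨅ m : ℕ, I ^ m) = ⊥ :=
    Ideal.iInf_pow_eq_bot_of_isLocalRing I hImax.ne_top
  have : x - algebraMap S T L ∈ (⨅ m : ℕ, I ^ m) := (Submodule.mem_iInf _).mpr hker
  rw [hbot] at this
  have := (Submodule.mem_bot _).mp this
  exact (sub_eq_zero.mp this).symm


/-- In the unramified setting (`S` a complete DVR with uniformizer `π` and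
finite residue field, `T` an `S`-algebra DVR, finite free of rank `n ≥ 1` over `S` with maximal
ideal generated by the image of `π`, and `σ` an `S`-algebra automorphism with `σ ^ n = 1` whose
reduction mod `π` generates the Galois group of the residue extension), both short exact
sequences of `S`-modules `0 → S·1 → T →(1-σ⁻¹) ker Tr → 0` and
`0 → ker Tr → T →Tr S·1 → 0` split: the maps `1 - σ⁻¹ : T → ker Tr` and `Tr : T → S·1`
admit `S`-linear sections; in particular `T ≅ S ⊕ ker Tr` as `S`-modules. -/
theorem statement3
    (S : Type*) [CommRing S] [IsDomain S] [IsDiscreteValuationRing S]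
    (π : S) (hπ : Irreducible π)
    [IsAdicComplete (Ideal.span {π}) S] [Finite (S ⧸ Ideal.span {π})]
    (T : Type*) [CommRing T] [IsDomain T] [IsDiscreteValuationRing T]
    [Algebra S T] [Module.Free S T]
    (n : ℕ) (hn : 1 ≤ n) (hrank : Module.finrank S T = n)
    (hmax : IsLocalRing.maximalIdeal T = Ideal.span {algebraMap S T π})
    (σ : T ≃ₐ[S] T) (hσn : σ ^ n = 1)
    (hgen : ∀ i : ℕ, 0 < i → i < n →
      ∃ t : T, (σ ^ i) t - t ∉ Ideal.span {algebraMap S T π}) :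
    (∃ s₁ : LinearMap.ker (∑ i ∈ Finset.range n, (σ ^ i).toLinearMap) →ₗ[S] T,
      ∀ y : LinearMap.ker (∑ i ∈ Finset.range n, (σ ^ i).toLinearMap),
        ((LinearMap.id : T →ₗ[S] T) - (σ⁻¹).toLinearMap) (s₁ y) = (y : T)) ∧
    (∃ s₂ : LinearMap.range (Algebra.linearMap S T) →ₗ[S] T,
      ∀ y : LinearMap.range (Algebra.linearMap S T),
        (∑ i ∈ Finset.range n, (σ ^ i).toLinearMap) (s₂ y) = (y : T)) ∧
    Nonempty (T ≃ₗ[S]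
      S × LinearMap.ker (∑ i ∈ Finset.range n, (σ ^ i).toLinearMap)) := by
  classical
  obtain ⟨θ, hθ⟩ := st3_trace_one S π hπ T n hn hrank hmax σ hσn hgen
  have hfix : ∀ x : T, σ x = x → ∃ s : S, algebraMap S T s = x :=
    st3_fixed S π hπ T n hn hrank hmax σ hσn hgen
  set Tr : T →ₗ[S] T := ∑ i ∈ Finset.range n, (σ ^ i).toLinearMap with hTrdef
  have hTr : ∀ z : T, Tr z = ∑ i ∈ Finset.range n, (σ ^ i) z := by
    intro z; rw [hTrdef]; simp [LinearMap.sum_apply]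
  -- the Hilbert 90 map
  set L : T →ₗ[S] T := ∑ i ∈ Finset.range n,
      (LinearMap.mulRight S ((σ⁻¹ ^ i) θ)).comp
        (∑ j ∈ Finset.range i, (σ⁻¹ ^ j).toLinearMap) with hLdef
  have hL : ∀ y : T, L y
      = ∑ i ∈ Finset.range n, (∑ j ∈ Finset.range i, (σ⁻¹ ^ j) y) * (σ⁻¹ ^ i) θ := by
    intro y; rw [hLdef]; simp [LinearMap.sum_apply, Finset.sum_mul]
  set D : T →ₗ[S] T := LinearMap.id - (σ⁻¹).toLinearMap with hDdef
  have hD : ∀ z : T, D z = z - σ⁻¹ z := by intro z; rw [hDdef]; simp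
  have hinv : σ⁻¹ = σ ^ (n - 1) := by
    refine inv_eq_of_mul_eq_one_right ?_
    rw [← pow_succ']
    have hsub : n - 1 + 1 = n := by omega
    rw [hsub, hσn]
  have h90 : ∀ y : T, Tr y = 0 → D (L y) = y := by
    intro y hy
    rw [hTr] at hy
    rw [hD, hL]
    exact st3_h90 n hn σ hσn θ hθ y hy
  have hTrτ : ∀ z : T, Tr (σ⁻¹ z) = Tr z := by
    intro z
    rw [hTr, hTr, hinv]
    exact st3_shift_pow n σ hσn (n - 1) z
  have hDker : ∀ z : T, Tr (D z) = 0 := by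
    intro z
    rw [hD, map_sub, hTrτ, sub_self]
  have hinj : Function.Injective (algebraMap S T) := by
    intro a b hab
    rw [Algebra.algebraMap_eq_smul_one, Algebra.algebraMap_eq_smul_one] at hab
    exact smul_left_injective S (one_ne_zero : (1 : T) ≠ 0) hab
  refine ⟨⟨L.comp (LinearMap.ker Tr).subtype, ?_⟩, ?_, ?_⟩
  -- part 1
  · intro y
    have hy : Tr (y : T) = 0 := y.2
    have := h90 y hy
    rw [hDdef] at this
    exact h90 y hy
  -- part 2
  · have hinj' : Function.Injective (Algebra.linearMap S T) := hinj
    set e : S ≃ₗ[S] LinearMap.range (Algebra.linearMap S T) :=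
      LinearEquiv.ofInjective (Algebra.linearMap S T) hinj' with hedef
    refine ⟨(LinearMap.toSpanSingleton S T θ).comp (e.symm : _ →ₗ[S] S), ?_⟩
    intro y
    have h2 : Tr θ = 1 := by rw [hTr]; exact hθ
    have h4 : algebraMap S T (e.symm y : S) = (y : T) := by
      conv_rhs => rw [← e.apply_symm_apply y]
      rw [hedef]
      exact (LinearEquiv.ofInjective_apply (Algebra.linearMap S T) (e.symm y)).symm
    simp only [LinearMap.comp_apply, LinearEquiv.coe_coe, LinearMap.toSpanSingleton_apply]
    rw [map_smul, h2, ← Algebra.algebraMap_eq_smul_one, h4]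
  -- part 3
  · have hsinv : ∀ z : T, σ (σ⁻¹ z) = z := fun z => σ.apply_symm_apply z
    have hsinv' : ∀ z : T, σ⁻¹ (σ z) = z := fun z => σ.symm_apply_apply z

    set Fix : Submodule S T := LinearMap.ker D with hFixdef
    have hmemFix : ∀ z : T, z ∈ Fix ↔ σ z = z := by
      intro z
      rw [hFixdef, LinearMap.mem_ker, hD, sub_eq_zero]
      constructor
      · intro h
        conv_lhs => rw [h]
        exact hsinv z
      · intro h
        conv_rhs => rw [← h]
        exact (hsinv' z).symm
    have pf1 : ∀ x : T, ((LinearMap.id : T →ₗ[S] T) - L.comp D) x ∈ Fix := by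
      intro x
      have hx : ((LinearMap.id : T →ₗ[S] T) - L.comp D) x = x - L (D x) := by
        rw [LinearMap.sub_apply, LinearMap.comp_apply, LinearMap.id_apply]
      rw [hx, hFixdef, LinearMap.mem_ker, map_sub, h90 (D x) (hDker x), sub_self]
    have pf2 : ∀ x : T, D x ∈ LinearMap.ker Tr := fun x => LinearMap.mem_ker.mpr (hDker x)
    set φ : T →ₗ[S] Fix × LinearMap.ker Tr :=
      LinearMap.prod
        (((LinearMap.id : T →ₗ[S] T) - L.comp D).codRestrict Fix pf1)
        (D.codRestrict (LinearMap.ker Tr) pf2) with hφdef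
    have hφ1 : ∀ x : T, ((φ x).1 : T) = x - L (D x) := fun x => rfl
    have hφ2 : ∀ x : T, ((φ x).2 : T) = D x := fun x => rfl
    have hφbij : Function.Bijective φ := by
      constructor
      · intro x₁ x₂ h
        have e2 : D x₁ = D x₂ := by
          rw [← hφ2 x₁, ← hφ2 x₂, h]
        have e1 : x₁ - L (D x₁) = x₂ - L (D x₂) := by
          rw [← hφ1 x₁, ← hφ1 x₂, h]
        rw [e2] at e1
        exact sub_left_inj.mp e1
      · rintro ⟨z, y⟩
        refine ⟨(z : T) + L (y : T), ?_⟩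
        have hz : D (z : T) = 0 := z.2
        have hy' : D (L (y : T)) = (y : T) := h90 _ y.2
        have hDx : D ((z : T) + L (y : T)) = (y : T) := by
          rw [map_add, hz, hy', zero_add]
        apply Prod.ext
        · apply Subtype.ext
          rw [hφ1, hDx, add_sub_cancel_right]
        · apply Subtype.ext
          rw [hφ2, hDx]
    have eq1 : T ≃ₗ[S] (Fix × LinearMap.ker Tr) := LinearEquiv.ofBijective φ hφbij
    set g : S →ₗ[S] Fix := (Algebra.linearMap S T).codRestrict Fix
      (fun s => (hmemFix _).mpr (σ.commutes s)) with hgdef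
    have hg : ∀ s : S, ((g s : T)) = algebraMap S T s := fun s => rfl
    have hgbij : Function.Bijective g := by
      constructor
      · intro a b hab
        apply hinj
        rw [← hg a, ← hg b, hab]
      · rintro ⟨z, hz⟩
        obtain ⟨s, hs⟩ := hfix z ((hmemFix z).mp hz)
        exact ⟨s, Subtype.ext (by rw [hg]; exact hs)⟩
    have eq2 : S ≃ₗ[S] Fix := LinearEquiv.ofBijective g hgbij
    have eq2' : Fix ≃ₗ[S] S := eq2.symm
    have eq3 : (↥Fix × ↥(LinearMap.ker Tr)) ≃ₗ[S] (S × ↥(LinearMap.ker Tr)) :=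
      LinearEquiv.prodCongr eq2' (LinearEquiv.refl S ↥(LinearMap.ker Tr))
    exact ⟨LinearEquiv.trans eq1 eq3⟩
end

section
/- There is an S-module isomorphism T / (π · ker(Tr_{T/S})) ≅ S ⊕ 𝔽_S^{⊕(n−1)}, where π·ker(Tr_{T/S}) denotes the S-submodule of T consisting of π times elements of trace zero. -/
open Pointwise Module nonZeroDivisors IntermediateField

attribute [local instance] FractionRing.liftAlgebra FractionRing.isScalarTower_liftAlgebra


section aux
variable {R : Type*} [CommRing R] {M : Type*} [AddCommGroup M] [Module R M]
  {N : Type*} [AddCommGroup N] [Module R N]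

lemma mem_psmul {p : Submodule R M} {x : M} (a : R) : x ∈ a • p ↔ ∃ y ∈ p, a • y = x := by
  rw [← SetLike.mem_coe, Submodule.coe_pointwise_smul]; exact Set.mem_smul_set

lemma map_psmul (f : M →ₗ[R] N) (a : R) (p : Submodule R M) :
    (a • p).map f = a • (p.map f) := by
  ext x
  simp only [Submodule.mem_map, mem_psmul]
  constructor
  · rintro ⟨_, ⟨y, hy, rfl⟩, rfl⟩
    exact ⟨f y, ⟨y, hy, rfl⟩, (map_smul f a y).symm⟩
  · rintro ⟨_, ⟨y, hy, rfl⟩, rfl⟩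
    exact ⟨a • y, ⟨y, hy, rfl⟩, map_smul f a y⟩

noncomputable def quotProdEquiv (p : Submodule R M) (q : Submodule R N) :
    ((M × N) ⧸ (p.prod q)) ≃ₗ[R] (M ⧸ p) × (N ⧸ q) := by
  refine (Submodule.quotEquivOfEq _ _ ?_).trans
    (((p.mkQ.comp (LinearMap.fst R M N)).prod (q.mkQ.comp (LinearMap.snd R M N))).quotKerEquivOfSurjective ?_)
  · ext x
    simp [Submodule.mem_prod, LinearMap.mem_ker, LinearMap.prod, Prod.ext_iff,
      Submodule.Quotient.mk_eq_zero]
  · rintro ⟨a, b⟩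
    obtain ⟨a, rfl⟩ := Submodule.mkQ_surjective p a
    obtain ⟨b, rfl⟩ := Submodule.mkQ_surjective q b
    exact ⟨(a, b), rfl⟩

lemma psmul_top_pi {ι : Type*} (π : R) :
    (π • (⊤ : Submodule R (ι → R))) = Submodule.pi Set.univ (fun _ => Ideal.span {π}) := by
  ext x
  rw [mem_psmul]
  constructor
  · rintro ⟨y, -, rfl⟩ i -
    exact Ideal.mem_span_singleton.2 ⟨y i, rfl⟩
  · intro h
    choose c hc using fun i => Ideal.mem_span_singleton.1 (h i trivial)
    exact ⟨c, trivial, by funext i; exact (hc i).symm⟩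

end aux

theorem lemA {S : Type*} [CommRing S] [IsDomain S] [IsPrincipalIdealRing S]
    {M : Type*} [AddCommGroup M] [Module S M] [Module.Free S M] [Module.Finite S M]
    {n : ℕ} (hn : 1 ≤ n) (hrank : Module.finrank S M = n) (π : S)
    (K : Submodule S M) (hb : Nonempty (Basis (Fin 1) S (M ⧸ K))) :
    Nonempty ((M ⧸ (π • K)) ≃ₗ[S] S × (Fin (n-1) → S ⧸ Ideal.span {π})) := by
  obtain ⟨b1⟩ := hb
  haveI : Module.Free S (M ⧸ K) := Module.Free.of_basis b1
  obtain ⟨s, hs⟩ := Module.projective_lifting_property K.mkQ LinearMap.id K.mkQ_surjective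
  have hsid : ∀ y, K.mkQ (s y) = y := fun y => DFunLike.congr_fun hs y
  have hcompl : IsCompl K (LinearMap.range s) := by
    constructor
    · rw [disjoint_iff]
      ext x
      simp only [Submodule.mem_inf, Submodule.mem_bot]
      constructor
      · rintro ⟨hxK, y, rfl⟩
        have h1 : K.mkQ (s y) = 0 := (Submodule.Quotient.mk_eq_zero K).2 hxK
        rw [hsid] at h1
        rw [h1, map_zero]
      · rintro rfl
        exact ⟨K.zero_mem, 0, map_zero s⟩
    · rw [codisjoint_iff, eq_top_iff]
      intro x _
      have hK : x - s (K.mkQ x) ∈ K := by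
        rw [← Submodule.Quotient.mk_eq_zero K]
        have : K.mkQ (x - s (K.mkQ x)) = 0 := by
          rw [map_sub, hsid, sub_self]
        simpa using this
      exact Submodule.mem_sup.2 ⟨_, hK, s (K.mkQ x), ⟨_, rfl⟩, by abel⟩
  let e : (K × LinearMap.range s) ≃ₗ[S] M := Submodule.prodEquivOfIsCompl _ _ hcompl
  obtain ⟨m, bK⟩ := Submodule.basisOfPid (Module.Free.chooseBasis S M) K
  -- rank computation
  haveI : Module.Finite S K := Module.Finite.of_basis bK
  haveI : Module.Finite S (M ⧸ K) := Module.Finite.of_basis b1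
  have hm : m = n - 1 := by
    have h1 : Module.rank S (M ⧸ K) + Module.rank S K = Module.rank S M :=
      rank_quotient_add_rank_of_isDomain K
    rw [← Module.finrank_eq_rank, ← Module.finrank_eq_rank, ← Module.finrank_eq_rank] at h1
    have h1' : Module.finrank S (M ⧸ K) + Module.finrank S K = Module.finrank S M := by
      exact_mod_cast h1
    have r2 : Module.finrank S (M ⧸ K) = 1 := by
      rw [Module.finrank_eq_card_basis b1]; simp
    have r3 : Module.finrank S K = m := by
      rw [Module.finrank_eq_card_basis bK]; simp
    omega
  let bK' : Basis (Fin (n-1)) S K := bK.reindex (finCongr hm)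
  -- the equivalences
  have hmapeq : Submodule.map (e : (K × LinearMap.range s) →ₗ[S] M)
      ((π • (⊤ : Submodule S K)).prod ⊥) = π • K := by
    ext x
    simp only [Submodule.mem_map, Submodule.mem_prod, Submodule.mem_bot, mem_psmul]
    constructor
    · rintro ⟨⟨k, c⟩, ⟨⟨k0, -, rfl⟩, rfl⟩, rfl⟩
      refine ⟨(k0 : M), k0.2, ?_⟩
      have : e (π • k0, 0) = ((π • k0 : K) : M) := by
        simp [e, Submodule.coe_prodEquivOfIsCompl]
      rw [LinearEquiv.coe_coe, this]; rfl
    · rintro ⟨y, hy, rfl⟩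
      refine ⟨(π • ⟨y, hy⟩, 0), ⟨⟨⟨y, hy⟩, trivial, rfl⟩, rfl⟩, ?_⟩
      simp [e, Submodule.coe_prodEquivOfIsCompl]
  let e4 : ((K × LinearMap.range s) ⧸ ((π • (⊤ : Submodule S K)).prod
      (⊥ : Submodule S (LinearMap.range s)))) ≃ₗ[S] (M ⧸ (π • K)) :=
    Submodule.Quotient.equiv _ _ e hmapeq
  let e5 := quotProdEquiv (π • (⊤ : Submodule S K)) (⊥ : Submodule S (LinearMap.range s))
  -- K ⧸ π•⊤ ≃ Fin (n-1) → S/π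
  have hmap2 : Submodule.map (bK'.equivFun : K →ₗ[S] (Fin (n-1) → S)) (π • (⊤ : Submodule S K))
      = Submodule.pi Set.univ (fun _ => Ideal.span {π}) := by
    ext x
    simp only [Submodule.mem_map, mem_psmul, Submodule.mem_pi, Set.mem_univ, forall_true_left]
    constructor
    · rintro ⟨_, ⟨k, -, rfl⟩, rfl⟩
      intro i
      rw [map_smul]
      exact Ideal.mem_span_singleton.2 ⟨bK'.equivFun k i, rfl⟩
    · intro h
      choose c hc using fun i => Ideal.mem_span_singleton.1 (h i)
      refine ⟨π • bK'.equivFun.symm c, ⟨bK'.equivFun.symm c, trivial, rfl⟩, ?_⟩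
      rw [map_smul, LinearEquiv.coe_coe, LinearEquiv.apply_symm_apply]
      funext i
      exact (hc i).symm
  let e6 : (K ⧸ (π • (⊤ : Submodule S K))) ≃ₗ[S] (Fin (n-1) → S ⧸ Ideal.span {π}) :=
    (Submodule.Quotient.equiv _ _ bK'.equivFun hmap2).trans (Submodule.quotientPi _)
  -- range s ⧸ ⊥ ≃ S
  have hsinj : Function.Injective s := by
    intro a b hab
    have := congrArg K.mkQ hab
    rwa [hsid, hsid] at this
  let e7 : ((LinearMap.range s : Submodule S M) ⧸ (⊥ : Submodule S (LinearMap.range s))) ≃ₗ[S] S :=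
    (Submodule.quotEquivOfEqBot _ rfl).trans
      (((LinearEquiv.ofInjective s hsinj).symm.trans b1.equivFun).trans
        (LinearEquiv.funUnique (Fin 1) S S))
  exact ⟨(e4.symm.trans (e5.trans ((e6.prodCongr e7).trans (LinearEquiv.prodComm S _ S)))), ⟩



set_option maxHeartbeats 1000000 in
theorem fixed_dep
    (S : Type*) [CommRing S] [IsDomain S]
    (T : Type*) [CommRing T] [IsDomain T] [IsIntegrallyClosed T]
    [Algebra S T] [Module.Free S T] [Module.Finite S T]
    (n : ℕ) (hn : 1 ≤ n) (hrank : Module.finrank S T = n)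
    (σ : T ≃ₐ[S] T) (horder : orderOf σ = n) :
    ∀ x y : T, σ x = x → σ y = y → x ≠ 0 → ∃ a b : S, b ≠ 0 ∧ b • y = a • x := by
  intro x y hx hy hx0
  set 𝒦 := FractionRing S with h𝒦
  set L := FractionRing T with hL
  haveI : Module.IsTorsionFree S T := inferInstance
  haveI : IsIntegralClosure T S L := IsIntegralClosure.of_isIntegrallyClosed _ _ _
  haveI : IsLocalization (Algebra.algebraMapSubmonoid T S⁰) L :=
    IsIntegralClosure.isLocalization _ 𝒦 _ _
  haveI : FiniteDimensional 𝒦 L := Module.Finite.of_isLocalization S T S⁰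
  -- rank of L over 𝒦 is n
  have hfr : Module.finrank 𝒦 L = n := by
    have h1 : Module.rank 𝒦 L = Module.rank S T :=
      (IsLocalization.rank_eq (S := 𝒦) (N := L) (p := S⁰) (hp := le_rfl)).trans
        (IsLocalizedModule.rank_eq (p := S⁰) (hp := le_rfl)
        (f := (IsScalarTower.toAlgHom S T L).toLinearMap))
    have h2 : ((Module.finrank 𝒦 L : ℕ) : Cardinal) = ((Module.finrank S T : ℕ) : Cardinal) := by
      rw [Module.finrank_eq_rank, Module.finrank_eq_rank]; exact h1
    have h3 : Module.finrank 𝒦 L = Module.finrank S T := by exact_mod_cast h2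
    rw [h3, hrank]
  -- extend σ to L
  set σL : L ≃ₐ[𝒦] L := (galRestrict S 𝒦 L T).symm σ with hσL
  have hσL_apply : ∀ t : T, σL (algebraMap T L t) = algebraMap T L (σ t) := by
    intro t
    have := algebraMap_galRestrict_apply S σL t
    rw [hσL, MulEquiv.apply_symm_apply] at this
    exact this.symm
  have horderL : orderOf σL = n := by
    rw [← horder]
    exact orderOf_injective (galRestrict S 𝒦 L T).symm.toMonoidHom
      (MulEquiv.injective _) σ
  set H : Subgroup (L ≃ₐ[𝒦] L) := Subgroup.zpowers σL with hH
  haveI : DecidablePred (· ∈ H) := Classical.decPred _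
  have hcard : Fintype.card H = n := by
    rw [← Nat.card_eq_fintype_card, Nat.card_zpowers, horderL]
  have h5 : Module.finrank (fixedField H) L = n := by
    rw [finrank_fixedField_eq_card, Nat.card_eq_fintype_card, hcard]
  have hbot : fixedField H = ⊥ := by
    rw [← IntermediateField.finrank_eq_one_iff]
    have htower : Module.finrank 𝒦 (fixedField H) * Module.finrank (fixedField H) L
        = Module.finrank 𝒦 L := Module.finrank_mul_finrank 𝒦 (fixedField H) L
    rw [h5, hfr] at htower
    have hn0 : 0 < n := by omega
    have := Nat.eq_of_mul_eq_mul_right hn0 (htower.trans (one_mul n).symm)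
    exact this
  -- x and y are fixed, so they lie in 𝒦
  have hmem : ∀ z : T, σ z = z → ∃ c : 𝒦, algebraMap 𝒦 L c = algebraMap T L z := by
    intro z hz
    have hfixz : σL (algebraMap T L z) = algebraMap T L z := by
      rw [hσL_apply, hz]
    have hnat : ∀ m : ℕ, (σL ^ m) (algebraMap T L z) = algebraMap T L z := by
      intro m
      induction m with
      | zero => simp
      | succ k ih => rw [pow_succ', AlgEquiv.mul_apply, ih, hfixz]
    have hmemH : algebraMap T L z ∈ fixedField H := by
      intro g
      obtain ⟨k, hk⟩ := g.2
      have : (σL ^ k) (algebraMap T L z) = algebraMap T L z := by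
        rcases k with k | k
        · rw [Int.ofNat_eq_coe, zpow_natCast]; exact hnat k
        · rw [zpow_negSucc]
          have h1 := hnat (k + 1)
          calc ((σL ^ (k+1))⁻¹) (algebraMap T L z)
              = ((σL ^ (k+1))⁻¹) ((σL ^ (k+1)) (algebraMap T L z)) := by rw [h1]
            _ = ((σL ^ (k+1))⁻¹ * (σL ^ (k+1))) (algebraMap T L z) := rfl
            _ = algebraMap T L z := by rw [inv_mul_cancel]; simp
      calc g.1 • algebraMap T L z = g.1 (algebraMap T L z) := rfl
        _ = algebraMap T L z := by rw [← hk]; exact this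
    rw [hbot, IntermediateField.mem_bot] at hmemH
    exact hmemH
  obtain ⟨c, hc⟩ := hmem x hx
  obtain ⟨d, hd⟩ := hmem y hy
  have hc0 : c ≠ 0 := by
    intro h
    apply hx0
    apply IsFractionRing.injective T L
    rw [← hc, h, map_zero, map_zero]
  obtain ⟨a1, b1, hb1, hc'⟩ := IsFractionRing.div_surjective (A := S) c
  obtain ⟨a2, b2, hb2, hd'⟩ := IsFractionRing.div_surjective (A := S) d
  have hb1' : (algebraMap S 𝒦 b1) ≠ 0 := by
    simpa using nonZeroDivisors.ne_zero hb1
  have hb2' : (algebraMap S 𝒦 b2) ≠ 0 := by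
    simpa using nonZeroDivisors.ne_zero hb2
  have ha1 : a1 ≠ 0 := by
    rintro rfl
    apply hc0
    rw [← hc', map_zero, zero_div]
  refine ⟨a2 * b1, a1 * b2, ?_, ?_⟩
  · have hb2'' : b2 ≠ 0 := fun h => hb2' (by rw [h, map_zero])
    exact mul_ne_zero ha1 hb2''
  · apply IsFractionRing.injective T L
    have key : algebraMap S 𝒦 (a1 * b2) * d = algebraMap S 𝒦 (a2 * b1) * c := by
      rw [← hc', ← hd', map_mul, map_mul, mul_div_assoc', mul_div_assoc',
        div_eq_div_iff hb2' hb1']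
      ring
    have lhs : algebraMap T L ((a1 * b2) • y) = algebraMap 𝒦 L (algebraMap S 𝒦 (a1 * b2) * d) := by
      rw [Algebra.smul_def, map_mul, ← IsScalarTower.algebraMap_apply S T L,
        IsScalarTower.algebraMap_apply S 𝒦 L, ← hd, ← map_mul]
    have rhs : algebraMap T L ((a2 * b1) • x) = algebraMap 𝒦 L (algebraMap S 𝒦 (a2 * b1) * c) := by
      rw [Algebra.smul_def, map_mul, ← IsScalarTower.algebraMap_apply S T L,
        IsScalarTower.algebraMap_apply S 𝒦 L, ← hc, ← map_mul]
    rw [lhs, rhs, key]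

set_option maxHeartbeats 1000000 in
/-- In the unramified setting (`S` a complete DVR with uniformizer `π` and
finite residue field `𝔽_S = S/(π)`, `T` an `S`-algebra DVR, finite free of rank `n ≥ 1` over
`S` with maximal ideal generated by the image of `π`, and `σ` an `S`-algebra automorphism with
`σ ^ n = 1` whose reduction mod `π` generates the Galois group of the residue extension), there
is an `S`-module isomorphism `T / (π · ker Tr) ≅ S ⊕ 𝔽_S^(n-1)`, where `π · ker Tr` is the
`S`-submodule of `T` of elements `π · t` with `Tr t = 0`. -/

theorem statement4
    (S : Type*) [CommRing S] [IsDomain S] [IsDiscreteValuationRing S]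
    (π : S) (hπ : Irreducible π)
    [IsAdicComplete (Ideal.span {π}) S] [Finite (S ⧸ Ideal.span {π})]
    (T : Type*) [CommRing T] [IsDomain T] [IsDiscreteValuationRing T]
    [Algebra S T] [Module.Free S T]
    (n : ℕ) (hn : 1 ≤ n) (hrank : Module.finrank S T = n)
    (hmax : IsLocalRing.maximalIdeal T = Ideal.span {algebraMap S T π})
    (σ : T ≃ₐ[S] T) (hσn : σ ^ n = 1)
    (hgen : ∀ i : ℕ, 0 < i → i < n →
      ∃ t : T, (σ ^ i) t - t ∉ Ideal.span {algebraMap S T π}) :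
    Nonempty ((T ⧸ (π • LinearMap.ker (∑ i ∈ Finset.range n, (σ ^ i).toLinearMap))) ≃ₗ[S]
      S × (Fin (n - 1) → S ⧸ Ideal.span {π})) := by
  classical
  haveI : Module.Finite S T := by
    let b := Module.Free.chooseBasis S T
    rcases finite_or_infinite (Module.Free.ChooseBasisIndex S T) with h | h
    · exact Module.Finite.of_basis b
    · exfalso
      have h1 : Module.rank S T = Cardinal.mk (Module.Free.ChooseBasisIndex S T) :=
        Module.Free.rank_eq_card_chooseBasisIndex S T
      have h2 : Module.finrank S T = 0 := by
        have h3 : Module.finrank S T = Cardinal.toNat (Module.rank S T) := rfl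
        rw [h3, h1, Cardinal.toNat_apply_of_aleph0_le (Cardinal.infinite_iff.1 h)]
      omega
  set Trl : T →ₗ[S] T := ∑ i ∈ Finset.range n, (σ ^ i).toLinearMap with hTrl
  have hTrapp : ∀ t : T, Trl t = ∑ i ∈ Finset.range n, (σ ^ i) t := by
    intro t
    rw [hTrl, LinearMap.sum_apply]
    simp
  have hpow : ∀ i, 0 < i → i < n → σ ^ i ≠ 1 := by
    intro i h0 h1 heq
    obtain ⟨t, ht⟩ := hgen i h0 h1
    apply ht
    rw [heq]
    simp
  have horder : orderOf σ = n := by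
    rw [orderOf_eq_iff (by omega)]
    exact ⟨hσn, fun m hm h0 => hpow m h0 hm⟩
  -- trace is nonzero
  have hTrne : Trl ≠ 0 := by
    intro hTr0
    let ι : Fin n → (T →* T) := fun i => ((σ ^ (i : ℕ) : T ≃ₐ[S] T) : T →+* T).toMonoidHom
    have hι : Function.Injective ι := by
      intro i j hij
      by_contra hne
      have key : ∀ a b : ℕ, a < b → b < n →
          (((σ ^ a : T ≃ₐ[S] T) : T →+* T).toMonoidHom =
            ((σ ^ b : T ≃ₐ[S] T) : T →+* T).toMonoidHom) → False := by
        intro a b hab hbn he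
        apply hpow (b - a) (by omega) (by omega)
        ext t
        have h1 : (σ ^ a) ((σ ^ (b - a)) t) = (σ ^ b) t := by
          rw [← AlgEquiv.mul_apply, ← pow_add]
          congr 2
          omega
        have h2 : (σ ^ a) ((σ ^ (b - a)) t) = (σ ^ a) t := by
          rw [h1]
          exact (DFunLike.congr_fun he t).symm
        have := (σ ^ a).injective h2
        simpa using this
      rcases lt_or_gt_of_ne (fun h : (i : ℕ) = (j : ℕ) => hne (Fin.ext h)) with h | h
      · exact key i j h j.2 hij
      · exact key j i h i.2 hij.symm
    have hli := (linearIndependent_monoidHom T T).comp ι hι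
    rw [Fintype.linearIndependent_iff] at hli
    have h10 : (1 : T) = 0 := by
      refine hli (fun _ => 1) ?_ ⟨0, by omega⟩
      funext t
      rw [Finset.sum_apply]
      simp only [Pi.smul_apply, one_smul, Function.comp_apply, Pi.zero_apply]
      have e1 : ∑ i : Fin n, (ι i) t = ∑ i : Fin n, (σ ^ (i : ℕ)) t :=
        Finset.sum_congr rfl (fun i _ => rfl)
      rw [e1, Fin.sum_univ_eq_sum_range (fun i => (σ ^ i) t) n, ← hTrapp, hTr0]
      rfl
    exact one_ne_zero h10
  -- range elements are fixed
  have hfix : ∀ x, x ∈ LinearMap.range Trl → σ x = x := by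
    rintro _ ⟨t, rfl⟩
    rw [hTrapp, map_sum]
    have h1 : ∀ i, σ ((σ ^ i) t) = (σ ^ (i + 1)) t := by
      intro i
      rw [pow_succ', AlgEquiv.mul_apply]
    rw [Finset.sum_congr rfl (fun i _ => h1 i)]
    have h2 := Finset.sum_range_succ' (fun i => (σ ^ i) t) n
    have h3 := Finset.sum_range_succ (fun i => (σ ^ i) t) n
    have h4 : (σ ^ n) t = (σ ^ 0) t := by rw [hσn, pow_zero]
    have := h2.symm.trans h3
    rw [h4] at this
    exact add_right_cancel this
  have hdep := fixed_dep S T n hn hrank σ horder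
  -- basis of the range
  obtain ⟨m, bR⟩ := Submodule.basisOfPid (Module.Free.chooseBasis S T) (LinearMap.range Trl)
  have hm : m = 1 := by
    rcases Nat.lt_or_ge m 2 with h2 | h2
    · -- m ≤ 1 ; exclude 0
      rcases Nat.eq_zero_or_pos m with h0 | h0
      · exfalso
        subst h0
        haveI : Subsingleton (LinearMap.range Trl) :=
          (Equiv.subsingleton_congr bR.repr.toEquiv).2 inferInstance
        obtain ⟨t, ht⟩ := DFunLike.ne_iff.1 hTrne
        apply ht
        have : (⟨Trl t, LinearMap.mem_range_self Trl t⟩ : LinearMap.range Trl) = 0 :=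
          Subsingleton.elim _ _
        simpa using congrArg Subtype.val this
      · omega
    · exfalso
      let i0 : Fin m := ⟨0, by omega⟩
      let i1 : Fin m := ⟨1, by omega⟩
      have hx0 : ((bR i0 : T)) ≠ 0 := by
        simpa [Submodule.coe_eq_zero] using bR.ne_zero i0
      obtain ⟨a, b, hb, hba⟩ := hdep (bR i0 : T) (bR i1 : T)
        (hfix _ (bR i0).2) (hfix _ (bR i1).2) hx0
      -- lift to the submodule
      have hba' : b • bR i1 = a • bR i0 := Subtype.ext (by
        push_cast
        exact hba)
      have := congrArg (fun v => (bR.repr v) i1) hba'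
      simp only [map_smul, bR.repr_self, Finsupp.smul_apply, Finsupp.single_apply] at this
      have hne : ¬(i0 = i1) := by
        intro h
        have := congrArg (fun x : Fin m => (x : ℕ)) h
        simpa [i0, i1] using this
      rw [if_neg hne] at this
      simp only [if_true, smul_eq_mul, mul_one, mul_zero] at this
      exact hb this
  let e := LinearMap.quotKerEquivRange Trl
  let b1 : Basis (Fin 1) S (T ⧸ LinearMap.ker Trl) :=
    (bR.reindex (finCongr hm)).map e.symm
  exact lemA hn hrank π (LinearMap.ker Trl) ⟨b1⟩
end

section
/- The image of the S-linear endomorphism t ↦ π·(t − σ⁻¹(t)) of T equals π·ker(Tr_{T/S}), and the quotient S-module ker(Tr_{T/S}) / (π·ker(Tr_{T/S})) is isomorphic to 𝔽_S^{⊕(n−1)}. -/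
open Pointwise

theorem auxFinrank {R S₂ : Type*} [CommRing R] [CommRing S₂] [Algebra R S₂] [IsLocalRing R]
    [Module.Finite R S₂] [Module.Free R S₂] (p : Ideal R)
    (hp : p = IsLocalRing.maximalIdeal R) :
    Module.finrank (R ⧸ p) (S₂ ⧸ Ideal.map (algebraMap R S₂) p) = Module.finrank R S₂ := by
  subst hp; exact IsLocalRing.finrank_quotient_map

theorem auxDedekind {K F : Type*} [CommSemiring K] [Field F] [Algebra K F]
    (n : ℕ) (hn : 1 ≤ n) (g : F ≃ₐ[K] F)
    (hne : ∀ i : ℕ, 0 < i → i < n → ∃ x, (g ^ i) x ≠ x)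
    (hsum : ∀ x, ∑ i ∈ Finset.range n, (g ^ i) x = 0) : False := by
  classical
  set ψ : ℕ → (F →* F) := fun i => ((g ^ i : F ≃ₐ[K] F) : F →+* F).toMonoidHom with hψ
  have hψapp : ∀ i x, ψ i x = (g ^ i) x := fun i x => rfl
  have hcore : ∀ i j : ℕ, i < j → j < n → ψ i = ψ j → False := by
    intro i j hlt hj hij
    obtain ⟨x, hx⟩ := hne (j - i) (by omega) (by omega)
    apply hx
    have : (g ^ i) ((g ^ (j - i)) x) = (g ^ i) x := by
      have heq : g ^ j = g ^ i * g ^ (j - i) := by rw [← pow_add]; congr 1; omega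
      have h2 : ψ j x = ψ i x := by rw [hij]
      rw [hψapp, hψapp, heq] at h2
      exact h2
    exact (g ^ i).injective this
  have hinj : Set.InjOn ψ (Finset.range n) := by
    rintro i hi j hj hij
    simp only [Finset.coe_range, Set.mem_Iio] at hi hj
    rcases lt_trichotomy i j with h | h | h
    · exact absurd hij (fun e => hcore i j h hj e)
    · exact h
    · exact absurd hij.symm (fun e => hcore j i h hi e)
  have li := linearIndependent_monoidHom F F
  rw [linearIndependent_iff'] at li
  have h0 : ∑ i ∈ Finset.range n, (1 : F) • ((ψ i : F → F)) = 0 := by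
    funext x
    simp only [Finset.sum_apply, Pi.smul_apply, one_smul, Pi.zero_apply]
    simpa [hψapp] using hsum x
  have hsum2 : ∑ f ∈ (Finset.range n).image ψ, (1 : F) • ((f : F → F)) = 0 := by
    rw [Finset.sum_image (fun a ha b hb => hinj (by simpa using ha) (by simpa using hb))]
    exact h0
  have := li ((Finset.range n).image ψ) (fun _ => (1 : F)) hsum2 (ψ 0)
    (Finset.mem_image_of_mem ψ (by simpa using (show 0 < n by omega)))
  exact one_ne_zero this

theorem auxFixed {Fq FT : Type*} [Field Fq] [Field FT] [Algebra Fq FT] [Finite FT]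
    (n : ℕ) (hn : 1 ≤ n) (hfrk : Module.finrank Fq FT = n)
    (g : FT ≃ₐ[Fq] FT) (hgn : g ^ n = 1)
    (hne : ∀ i : ℕ, 0 < i → i < n → ∃ x : FT, (g ^ i) x ≠ x)
    (x : FT) (hx : g x = x) : x ∈ Set.range (algebraMap Fq FT) := by
  classical
  haveI : FiniteDimensional Fq FT := Module.Finite.of_finite
  have horder : orderOf g = n := by
    have hdvd : orderOf g ∣ n := orderOf_dvd_of_pow_eq_one hgn
    have hpos : 0 < orderOf g := by
      refine orderOf_pos_iff.mpr ?_
      exact isOfFinOrder_iff_pow_eq_one.mpr ⟨n, by omega, hgn⟩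
    rcases lt_or_eq_of_le (Nat.le_of_dvd (by omega) hdvd) with h | h
    · obtain ⟨y, hy⟩ := hne (orderOf g) hpos h
      exact absurd (by rw [pow_orderOf_eq_one g]; rfl) hy
    · exact h
  set H := Subgroup.zpowers g with hH
  have hcard : Nat.card H = n := by rw [hH, Nat.card_zpowers, horder]
  have hfixmem : x ∈ IntermediateField.fixedField H := by
    have hfixnat : ∀ m : ℕ, (g ^ m) x = x := by
      intro m
      induction m with
      | zero => rfl
      | succ k ih => rw [pow_succ', AlgEquiv.mul_apply, ih, hx]
    have hfixint : ∀ k : ℤ, (g ^ k) x = x := by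
      intro k
      rcases k with m | m
      · rw [Int.ofNat_eq_coe, zpow_natCast]; exact hfixnat m
      · rw [Int.negSucc_eq, zpow_neg]
        have hc : ((m : ℤ) + 1) = ((m + 1 : ℕ) : ℤ) := by push_cast; ring
        rw [hc, zpow_natCast]
        apply (g ^ (m + 1)).injective
        rw [hfixnat (m+1)]
        have : (g ^ (m + 1)) (((g ^ (m + 1))⁻¹) x) = x := by
          rw [← AlgEquiv.mul_apply, mul_inv_cancel]; rfl
        rw [this]
    rintro ⟨γ, hγ⟩
    obtain ⟨k, hk⟩ := Subgroup.mem_zpowers_iff.mp hγ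
    show γ • x = x
    rw [← hk]
    exact hfixint k
  have hfrk2 : Module.finrank (IntermediateField.fixedField H) FT = n := by
    rw [IntermediateField.finrank_fixedField_eq_card, hcard]
  have htower := Module.finrank_mul_finrank Fq (IntermediateField.fixedField H) FT
  rw [hfrk2, hfrk] at htower
  have h1 : Module.finrank Fq (IntermediateField.fixedField H) = 1 := by
    have h1n : Module.finrank Fq (IntermediateField.fixedField H) * n = 1 * n := by
      rw [one_mul, htower]
    exact Nat.eq_of_mul_eq_mul_right (by omega) h1n
  have hbot : IntermediateField.fixedField H = ⊥ :=
    IntermediateField.finrank_eq_one_iff.mp h1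
  rw [hbot] at hfixmem
  exact IntermediateField.mem_bot.mp hfixmem

/-- In the unramified setting (`S` a complete DVR with uniformizer `π` and
finite residue field `𝔽_S = S/(π)`, `T` an `S`-algebra DVR, finite free of rank `n ≥ 1` over
`S` with maximal ideal generated by the image of `π`, and `σ` an `S`-algebra automorphism with
`σ ^ n = 1` whose reduction mod `π` generates the Galois group of the residue extension), the
image of the `S`-linear endomorphism `t ↦ π·(t - σ⁻¹ t)` of `T` equals `π · ker Tr`, and the
quotient `S`-module `ker Tr / (π · ker Tr)` is isomorphic to `𝔽_S^(n-1)`. -/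
theorem statement5
    (S : Type*) [CommRing S] [IsDomain S] [IsDiscreteValuationRing S]
    (π : S) (hπ : Irreducible π)
    [IsAdicComplete (Ideal.span {π}) S] [Finite (S ⧸ Ideal.span {π})]
    (T : Type*) [CommRing T] [IsDomain T] [IsDiscreteValuationRing T]
    [Algebra S T] [Module.Free S T]
    (n : ℕ) (hn : 1 ≤ n) (hrank : Module.finrank S T = n)
    (hmax : IsLocalRing.maximalIdeal T = Ideal.span {algebraMap S T π})
    (σ : T ≃ₐ[S] T) (hσn : σ ^ n = 1)
    (hgen : ∀ i : ℕ, 0 < i → i < n →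
      ∃ t : T, (σ ^ i) t - t ∉ Ideal.span {algebraMap S T π}) :
    LinearMap.range (π • ((LinearMap.id : T →ₗ[S] T) - (σ⁻¹).toLinearMap)) =
      π • LinearMap.ker (∑ i ∈ Finset.range n, (σ ^ i).toLinearMap) ∧
    Nonempty ((LinearMap.ker (∑ i ∈ Finset.range n, (σ ^ i).toLinearMap) ⧸
        (π • (⊤ : Submodule S (LinearMap.ker (∑ i ∈ Finset.range n, (σ ^ i).toLinearMap)))))
      ≃ₗ[S] (Fin (n - 1) → S ⧸ Ideal.span {π})) := by
  classical
  set A := algebraMap S T with hA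
  set Tr : T →ₗ[S] T := ∑ i ∈ Finset.range n, (σ ^ i).toLinearMap with hTrdef
  -- ## trace basics
  have hTr : ∀ t : T, Tr t = ∑ i ∈ Finset.range n, (σ ^ i) t := by
    intro t
    simp [hTrdef, LinearMap.sum_apply]
  have hshift : ∀ t : T, ∑ i ∈ Finset.range n, (σ ^ (i + 1)) t
      = ∑ i ∈ Finset.range n, (σ ^ i) t := by
    intro t
    have h1 := Finset.sum_range_succ' (fun i => (σ ^ i) t) n
    have h2 := Finset.sum_range_succ (fun i => (σ ^ i) t) n
    have h3 : (σ ^ n) t = t := by rw [hσn]; rfl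
    have h4 : (σ ^ 0) t = t := by rw [pow_zero]; rfl
    rw [h2, h3] at h1
    rw [h4] at h1
    exact add_right_cancel h1.symm
  have htrσ : ∀ t : T, Tr (σ t) = Tr t := by
    intro t
    rw [hTr, hTr, ← hshift t]
    refine Finset.sum_congr rfl fun i _ => ?_
    rw [pow_succ, AlgEquiv.mul_apply]
  have hσtr : ∀ t : T, σ (Tr t) = Tr t := by
    intro t
    rw [hTr, map_sum, ← hshift t]
    refine Finset.sum_congr rfl fun i _ => ?_
    rw [pow_succ', AlgEquiv.mul_apply]
  have htrσinv : ∀ t : T, Tr (σ⁻¹ t) = Tr t := by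
    intro t
    have h := htrσ (σ⁻¹ t)
    rw [show σ (σ⁻¹ t) = t by rw [← AlgEquiv.mul_apply, mul_inv_cancel]; rfl] at h
    exact h.symm
  have hfixpow : ∀ c : T, σ c = c → ∀ i : ℕ, (σ ^ i) c = c := by
    intro c hc i
    induction i with
    | zero => rfl
    | succ k ih => rw [pow_succ', AlgEquiv.mul_apply, ih, hc]
  have htrmul : ∀ c t : T, σ c = c → Tr (c * t) = c * Tr t := by
    intro c t hc
    rw [hTr, hTr, Finset.mul_sum]
    refine Finset.sum_congr rfl fun i _ => ?_
    rw [map_mul, hfixpow c hc i]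
  -- ## residue field setup
  have hpm : IsLocalRing.maximalIdeal S = Ideal.span {π} :=
    (IsDiscreteValuationRing.irreducible_iff_uniformizer π).mp hπ
  haveI hfin : Module.Finite S T := Module.finite_of_finrank_pos (by omega)
  haveI hNoeth : IsNoetherian S T := isNoetherian_of_isNoetherianRing_of_finite S T
  set pT : Ideal T := Ideal.map A (Ideal.span {π}) with hpTdef
  have hpT : pT = Ideal.span {A π} := by
    rw [hpTdef, Ideal.map_span, Set.image_singleton]
  have hmax' : IsLocalRing.maximalIdeal T = pT := by rw [hpT, hmax]
  haveI hpTmax : pT.IsMaximal := hmax' ▸ inferInstance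
  haveI hpmax : (Ideal.span {π} : Ideal S).IsMaximal := hpm ▸ inferInstance
  letI : Field (S ⧸ Ideal.span {π}) := Ideal.Quotient.field _
  letI : Field (T ⧸ pT) := Ideal.Quotient.field _
  have hπ0 : π ≠ 0 := hπ.ne_zero
  have hAπ0 : A π ≠ 0 := by
    intro h
    have hbot : IsLocalRing.maximalIdeal T = ⊥ := by
      rw [hmax, h, Ideal.span_singleton_eq_bot.mpr rfl]
    exact IsDiscreteValuationRing.not_isField T (IsLocalRing.isField_iff_maximalIdeal_eq.mpr hbot)
  haveI hfinQ : Module.Finite S (T ⧸ pT) := Module.Finite.of_surjective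
    (IsScalarTower.toAlgHom S T (T ⧸ pT)).toLinearMap (Ideal.Quotient.mk_surjective (I := pT))
  haveI hfinQ2 : Module.Finite (S ⧸ Ideal.span {π}) (T ⧸ pT) :=
    Module.Finite.of_restrictScalars_finite S _ _
  haveI hfinT : Finite (T ⧸ pT) := Module.finite_of_finite (S ⧸ Ideal.span {π})
  have hfrk : Module.finrank (S ⧸ Ideal.span {π}) (T ⧸ pT) = n := by
    rw [← hrank]
    exact auxFinrank (R := S) (S₂ := T) _ hpm.symm
  have hmapσ : ∀ (τ : T ≃ₐ[S] T), pT = Ideal.map (τ : T ≃+* T) pT := by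
    intro τ
    rw [hpT, Ideal.map_span, Set.image_singleton]
    show _ = Ideal.span {τ (A π)}
    rw [AlgEquiv.commutes]
  set mkT := Ideal.Quotient.mk pT with hmkT
  have key : ∀ (τ : T ≃ₐ[S] T), ∃ τ' : (T ⧸ pT) ≃ₐ[S ⧸ Ideal.span {π}] (T ⧸ pT),
      ∀ t : T, τ' (mkT t) = mkT (τ t) := by
    intro τ
    set e := Ideal.quotientEquiv pT pT (τ : T ≃+* T) (hmapσ τ) with he
    have happ : ∀ t : T, e (mkT t) = mkT (τ t) := fun t => rfl
    refine ⟨AlgEquiv.ofRingEquiv (f := e) ?_, happ⟩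
    intro x
    obtain ⟨s, rfl⟩ := Ideal.Quotient.mk_surjective (I := Ideal.span {π}) x
    rw [Ideal.Quotient.algebraMap_quotient_map_quotient]
    rw [happ]
    show mkT (τ (A s)) = mkT (A s)
    rw [AlgEquiv.commutes]
  obtain ⟨σb, hσb⟩ := key σ
  have hσbpow : ∀ (i : ℕ) (t : T), (σb ^ i) (mkT t) = mkT ((σ ^ i) t) := by
    intro i
    induction i with
    | zero => intro t; rfl
    | succ k ih =>
      intro t
      rw [pow_succ, AlgEquiv.mul_apply, pow_succ, AlgEquiv.mul_apply, hσb, ih (σ t)]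
  have hσbn : σb ^ n = 1 := by
    ext x
    obtain ⟨t, rfl⟩ := Ideal.Quotient.mk_surjective (I := pT) x
    show (σb ^ n) (mkT t) = mkT t
    rw [hσbpow, hσn]
    rfl
  have hσbne : ∀ i : ℕ, 0 < i → i < n → ∃ x : T ⧸ pT, (σb ^ i) x ≠ x := by
    intro i hi hin
    obtain ⟨t, ht⟩ := hgen i hi hin
    refine ⟨mkT t, fun hc => ht ?_⟩
    rw [hσbpow] at hc
    rw [← hpT]
    exact (Submodule.Quotient.eq _).mp hc
  -- ## existence of an element with unit trace
  have hθ : ∃ θ : T, Tr θ ∉ Ideal.span {A π} := by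
    by_contra hcon
    push_neg at hcon
    refine auxDedekind n hn σb hσbne ?_
    intro x
    obtain ⟨t, rfl⟩ := Ideal.Quotient.mk_surjective (I := pT) x
    have : ∑ i ∈ Finset.range n, (σb ^ i) (mkT t) = mkT (Tr t) := by
      rw [hTr, map_sum]
      exact Finset.sum_congr rfl fun i _ => hσbpow i t
    rw [this, hmkT, Ideal.Quotient.eq_zero_iff_mem, hpT]
    exact hcon t
  -- ## fixed points are scalars (Nakayama + Galois)
  have hfix : ∀ t : T, σ t = t → ∃ s : S, A s = t := by
    have hK : ∀ t : T, σ t = t → t ∈ LinearMap.range (Algebra.linearMap S T) := by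
      set K : Submodule S T :=
        LinearMap.ker ((LinearMap.id : T →ₗ[S] T) - σ.toLinearMap) with hKdef
      have hKmem : ∀ t : T, t ∈ K ↔ σ t = t := by
        intro t
        rw [hKdef, LinearMap.mem_ker, LinearMap.sub_apply, LinearMap.id_apply,
          AlgEquiv.toLinearMap_apply, sub_eq_zero]
        exact ⟨fun h => h.symm, fun h => h.symm⟩
      have hKle : K ≤ LinearMap.range (Algebra.linearMap S T) ⊔ (Ideal.span {π}) • K := by
        intro t ht
        have hσt : σ t = t := (hKmem t).mp ht
        have hxfix : σb (mkT t) = mkT t := by rw [hσb, hσt]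
        obtain ⟨y, hy⟩ := auxFixed n hn hfrk σb hσbn hσbne (mkT t) hxfix
        obtain ⟨s, rfl⟩ := Ideal.Quotient.mk_surjective (I := Ideal.span {π}) y
        rw [Ideal.Quotient.algebraMap_quotient_map_quotient] at hy
        have hmem : t - A s ∈ pT := by
          rw [← (Submodule.Quotient.eq _)]
          exact hy.symm
        rw [hpT, Ideal.mem_span_singleton] at hmem
        obtain ⟨r, hr⟩ := hmem
        have hrK : r ∈ K := by
          rw [hKmem]
          have h1 : σ (t - A s) = t - A s := by
            rw [map_sub, hσt, AlgEquiv.commutes]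
          rw [hr, map_mul, AlgEquiv.commutes] at h1
          exact mul_left_cancel₀ hAπ0 h1
        have ht' : t = A s + π • r := by
          rw [Algebra.smul_def, ← hA, ← hr]
          ring
        rw [ht']
        exact Submodule.add_mem_sup (LinearMap.mem_range_self _ s)
          (Submodule.smul_mem_smul (Ideal.mem_span_singleton_self π) hrK)
      have hjac : (Ideal.span {π} : Ideal S) ≤ Ideal.jacobson ⊥ := by
        rw [IsLocalRing.jacobson_eq_maximalIdeal ⊥ bot_ne_top, hpm]
      have := Submodule.le_of_le_smul_of_le_jacobson_bot
        (IsNoetherian.noetherian K) hjac hKle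
      intro t ht
      exact this ((hKmem t).mpr ht)
    intro t ht
    obtain ⟨s, hs⟩ := hK t ht
    exact ⟨s, hs⟩
  -- ## the unit trace element
  obtain ⟨θ, hθP⟩ := hθ
  set u := Tr θ with hu
  have huu : IsUnit u := by
    by_contra hnu
    exact hθP (hmax ▸ (IsLocalRing.mem_maximalIdeal u).mpr hnu)
  obtain ⟨v, hv⟩ := huu.exists_right_inv
  have hσu : σ u = u := hσtr θ
  have hσv : σ v = v := by
    have h1 : u * σ v = u * v := by
      calc u * σ v = σ u * σ v := by rw [hσu]
        _ = σ (u * v) := (map_mul σ u v).symm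
        _ = 1 := by rw [hv]; exact map_one σ
        _ = u * v := hv.symm
    exact mul_left_cancel₀ huu.ne_zero h1
  -- ## additive Hilbert 90
  have hH90 : ∀ a : T, Tr a = 0 → ∃ w : T, w - σ w = a := by
    intro a ha
    set s_ : ℕ → T := fun i => ∑ j ∈ Finset.range i, (σ ^ j) a with hs_
    set b := ∑ i ∈ Finset.range n, s_ i * (σ ^ i) θ with hb
    have hσs : ∀ i : ℕ, σ (s_ i) = s_ (i + 1) - a := by
      intro i
      rw [hs_]
      simp only
      rw [map_sum]
      have h1 : ∑ j ∈ Finset.range i, σ ((σ ^ j) a)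
          = ∑ j ∈ Finset.range i, (σ ^ (j + 1)) a := by
        refine Finset.sum_congr rfl fun j _ => ?_
        rw [pow_succ', AlgEquiv.mul_apply]
      have h2 := Finset.sum_range_succ' (fun j => (σ ^ j) a) i
      rw [h1]
      have h4 : (σ ^ 0) a = a := by rw [pow_zero]; rfl
      rw [h4] at h2
      rw [eq_sub_iff_add_eq, ← h2]
  -- h2 : ∑_{j<i+1} σ^j a = ∑_{j<i} σ^{j+1} a + a
    have hσb2 : σ b = b - a * u := by
      rw [hb, map_sum]
      have h1 : ∀ i ∈ Finset.range n, σ (s_ i * (σ ^ i) θ)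
          = s_ (i + 1) * (σ ^ (i + 1)) θ - a * (σ ^ (i + 1)) θ := by
        intro i _
        rw [map_mul, hσs i, sub_mul, pow_succ', AlgEquiv.mul_apply]
      rw [Finset.sum_congr rfl h1, Finset.sum_sub_distrib]
      have h2 : ∑ i ∈ Finset.range n, a * (σ ^ (i + 1)) θ = a * u := by
        rw [← Finset.mul_sum, hshift θ, hu, hTr]
      have h3 : ∑ i ∈ Finset.range n, s_ (i + 1) * (σ ^ (i + 1)) θ = b := by
        have h4 := Finset.sum_range_succ' (fun i => s_ i * (σ ^ i) θ) n
        have h5 := Finset.sum_range_succ (fun i => s_ i * (σ ^ i) θ) n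
        have h60 : s_ 0 = 0 := by rw [hs_]; simp
        have h6n : s_ n = 0 := by rw [hs_]; simp only; rw [← hTr a, ha]
        rw [h5] at h4
        simp only [h60, h6n, zero_mul, add_zero, zero_mul, add_zero] at h4
        rw [← hb] at h4
        exact h4.symm
      rw [h2, h3]
    refine ⟨v * b, ?_⟩
    have hvb : v * (b - a * u) = v * b - u * v * a := by ring
    have hfin2 : σ (v * b) = v * b - a := by
      rw [map_mul, hσv, hσb2, hvb, hv, one_mul]
    rw [hfin2]
    ring
  -- ## range (id - σ⁻¹) = ker Tr
  set Dinv : T →ₗ[S] T := (LinearMap.id : T →ₗ[S] T) - (σ⁻¹).toLinearMap with hDdef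
  have hDapp : ∀ t : T, Dinv t = t - σ⁻¹ t := by
    intro t
    rw [hDdef, LinearMap.sub_apply, LinearMap.id_apply, AlgEquiv.toLinearMap_apply]
  have hrange : LinearMap.range Dinv = LinearMap.ker Tr := by
    apply le_antisymm
    · rintro y ⟨t, rfl⟩
      rw [LinearMap.mem_ker, hDapp, map_sub, htrσinv t, sub_self]
    · intro a ha
      rw [LinearMap.mem_ker] at ha
      obtain ⟨w, hw⟩ := hH90 a ha
      refine ⟨-(σ w), ?_⟩
      rw [hDapp, show σ⁻¹ (-(σ w)) = -w by
        rw [map_neg]; congr 1; rw [← AlgEquiv.mul_apply, inv_mul_cancel]; rfl]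
      rw [← hw]
      ring
  constructor
  -- ## part 1
  · ext y
    constructor
    · rintro ⟨t, rfl⟩
      rw [LinearMap.smul_apply]
      exact Submodule.smul_mem_pointwise_smul (Dinv t) π (LinearMap.ker Tr)
        (hrange ▸ LinearMap.mem_range_self Dinv t)
    · intro hy
      have : y ∈ π • ((LinearMap.ker Tr : Submodule S T) : Set T) := by
        rw [← Submodule.coe_pointwise_smul]
        exact hy
      obtain ⟨z, hz, rfl⟩ := this
      have : z ∈ LinearMap.range Dinv := hrange.symm ▸ hz
      obtain ⟨t, rfl⟩ := this
      exact ⟨t, by rw [LinearMap.smul_apply]⟩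
  -- ## part 2
  · set M : Submodule S T := LinearMap.ker Tr with hM
    haveI : NoZeroSMulDivisors S T := ⟨fun h => smul_eq_zero.mp h⟩
    haveI hMfin : Module.Finite S M := Module.Finite.iff_fg.mpr (IsNoetherian.noetherian M)
    haveI hMfree : Module.Free S M := Module.free_of_finite_type_torsion_free'
    -- the kernel of Dinv
    have hkerD : LinearMap.ker Dinv = LinearMap.range (Algebra.linearMap S T) := by
      ext t
      rw [LinearMap.mem_ker, hDapp, sub_eq_zero]
      constructor
      · intro h
        have hσt : σ t = t := by
          conv_lhs => rw [h]
          rw [← AlgEquiv.mul_apply, mul_inv_cancel]; rfl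
        obtain ⟨s, hs⟩ := hfix t hσt
        exact ⟨s, hs⟩
      · rintro ⟨s, rfl⟩
        show Algebra.linearMap S T s = σ⁻¹ (Algebra.linearMap S T s)
        rw [Algebra.linearMap_apply, AlgEquiv.commutes]
    -- rank computation
    have hinj : Function.Injective (Algebra.linearMap S T) := by
      intro a b hab
      have : A a = A b := hab
      have h0 : A (a - b) = 0 := by rw [map_sub, this, sub_self]
      have : (a - b) • (1 : T) = 0 := by
        rw [← Algebra.algebraMap_eq_smul_one, ← hA]; exact h0
      rcases smul_eq_zero.mp this with h | h
      · exact sub_eq_zero.mp h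
      · exact absurd h one_ne_zero
    have hrankT : Module.rank S T = n := by
      rw [← Module.finrank_eq_rank S T, hrank]
    have hrankker : Module.rank S (LinearMap.ker Dinv) = 1 := by
      rw [hkerD]
      have hl := (LinearEquiv.ofInjective (Algebra.linearMap S T) hinj).lift_rank_eq
      rw [Module.rank_self] at hl
      simpa using hl.symm
    have hrankM : Module.rank S M = (n - 1 : ℕ) := by
      have h1 := LinearMap.rank_range_add_rank_ker Dinv
      rw [hrange, hrankker, hrankT] at h1
      have h2 : Module.rank S M < Cardinal.aleph0 := by
        refine lt_of_le_of_lt ?_ (Cardinal.nat_lt_aleph0 n)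
        rw [← hrankT]
        exact Submodule.rank_le M
      obtain ⟨m, hm⟩ := Cardinal.lt_aleph0.mp h2
      rw [hm] at h1 ⊢
      have : ((m + 1 : ℕ) : Cardinal) = ((n : ℕ) : Cardinal) := by
        push_cast
        rw [← h1]
      have hmn : m + 1 = n := Nat.cast_injective this
      congr 1
      omega
    have hfrM : Module.finrank S M = n - 1 := by
      have := Module.finrank_eq_rank S M
      rw [hrankM] at this
      exact Nat.cast_injective this
    -- build the equivalence
    set r := Module.finrank S M with hr
    have e1 : M ≃ₗ[S] (Fin r → S) := (Module.finBasis S M).equivFun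
    have hmapsm : Submodule.map (e1 : M →ₗ[S] (Fin r → S)) (π • ⊤) = π • ⊤ := by
      rw [Submodule.map_pointwise_smul, Submodule.map_top, LinearEquiv.range]
    have e2 : (M ⧸ (π • (⊤ : Submodule S M))) ≃ₗ[S]
        ((Fin r → S) ⧸ (π • (⊤ : Submodule S (Fin r → S)))) :=
      Submodule.Quotient.equiv _ _ e1 hmapsm
    have hps : (π • (⊤ : Submodule S (Fin r → S)))
        = Submodule.pi Set.univ (fun _ => Ideal.span {π}) := by
      ext x
      constructor
      · intro hx
        have : x ∈ π • ((⊤ : Submodule S (Fin r → S)) : Set (Fin r → S)) := by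
          rw [← Submodule.coe_pointwise_smul]; exact hx
        obtain ⟨y, -, rfl⟩ := this
        intro i _
        exact Ideal.mem_span_singleton.mpr ⟨y i, rfl⟩
      · intro hx
        have hx' : ∀ i, ∃ c : S, x i = π * c := by
          intro i
          exact Ideal.mem_span_singleton'.mp (hx i (Set.mem_univ i)) |>.imp
            (fun c hc => by rw [← hc]; ring)
        choose c hc using hx'
        have : x = π • c := by
          funext i
          rw [Pi.smul_apply, hc i, smul_eq_mul]
        rw [this]
        exact Submodule.smul_mem_pointwise_smul c π ⊤ Submodule.mem_top
    have e3 : ((Fin r → S) ⧸ (π • (⊤ : Submodule S (Fin r → S)))) ≃ₗ[S]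
        (Fin r → S ⧸ Ideal.span {π}) :=
      (Submodule.quotEquivOfEq _ _ hps).trans (Submodule.quotientPi _)
    have e4 : (Fin r → S ⧸ Ideal.span {π}) ≃ₗ[S] (Fin (n - 1) → S ⧸ Ideal.span {π}) := by
      rw [hfrM]
    exact ⟨(e2.trans e3).trans e4⟩
end

section
/- The kernel of the S-linear endomorphism t ↦ π·(t − σ⁻¹(t)) of T equals S·1 (the image of the structure map S → T); consequently, for every nonzero element c of S, the quotient of this kernel by the image of the S-linear map t ↦ c·Tr_{T/S}(t) is isomorphic to S/(c) as an S-module. (This computes the odd-degree homology of Larsen's small complex 0 ← T ←^{π(1−σ⁻¹)} T ←^{c·Tr} T ←^{π(1−σ⁻¹)} ⋯ .) -/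
open Module

theorem aux_fixed_frac {S T : Type*} [CommRing S] [IsDomain S] [IsIntegrallyClosed S]
    [CommRing T] [IsDomain T] [Algebra S T] [Module.Free S T] [Module.Finite S T]
    (n : ℕ) (hn : 1 ≤ n) (hrank : Module.finrank S T = n)
    (σ : T ≃ₐ[S] T) (hσn : σ ^ n = 1)
    (hne : ∀ i : ℕ, 0 < i → i < n → ∃ t : T, (σ ^ i) t ≠ t)
    {t : T} (ht : σ t = t)
    (K L : Type*) [Field K] [Field L] [Algebra S K] [IsFractionRing S K]
    [Algebra T L] [IsFractionRing T L] [Algebra K L] [Algebra S L]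
    [IsScalarTower S K L] [IsScalarTower S T L]
    [FiniteDimensional K L] (hrankKL : finrank K L = n) :
    ∃ s : S, algebraMap S T s = t := by
  classical
  have hinjTL : Function.Injective (algebraMap T L) := IsFractionRing.injective T L
  let Φ : (T ≃ₐ[S] T) → (L ≃ₐ[K] L) := fun τ =>
    AlgEquiv.ofRingEquiv (f := IsFractionRing.ringEquivOfRingEquiv τ.toRingEquiv) (by
      intro k
      obtain ⟨a, c, hc, rfl⟩ := IsFractionRing.div_surjective (A := S) k
      rw [map_div₀, map_div₀]
      congr 1 <;>
      · rw [← IsScalarTower.algebraMap_apply S K L, IsScalarTower.algebraMap_apply S T L,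
          IsFractionRing.ringEquivOfRingEquiv_algebraMap]
        simp)
  have hΦap : ∀ (τ : T ≃ₐ[S] T) (x : T), Φ τ (algebraMap T L x) = algebraMap T L (τ x) := by
    intro τ x
    exact IsFractionRing.ringEquivOfRingEquiv_algebraMap τ.toRingEquiv x
  have hΦext : ∀ (α β : L ≃ₐ[K] L), (∀ x : T, α (algebraMap T L x) = β (algebraMap T L x)) →
      α = β := by
    intro α β h
    have h2 : ((α : L ≃+* L) : L →+* L).comp (algebraMap T L)
        = ((β : L ≃+* L) : L →+* L).comp (algebraMap T L) := RingHom.ext h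
    have h3 := IsLocalization.ringHom_ext (nonZeroDivisors T) h2
    exact AlgEquiv.ext fun x => RingHom.congr_fun h3 x
  have hΦpow : ∀ i : ℕ, Φ (σ ^ i) = (Φ σ) ^ i := by
    intro i
    induction i with
    | zero =>
      apply hΦext
      intro x
      simp [hΦap]
    | succ k ih =>
      apply hΦext
      intro x
      rw [pow_succ, pow_succ]
      calc (Φ (σ ^ k * σ)) (algebraMap T L x)
          = algebraMap T L ((σ ^ k) (σ x)) := by rw [hΦap]; rfl
        _ = (Φ (σ ^ k)) (algebraMap T L (σ x)) := (hΦap _ _).symm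
        _ = (Φ σ ^ k) ((Φ σ) (algebraMap T L x)) := by rw [ih, hΦap]
  have horder : orderOf (Φ σ) = n := by
    have hpown : (Φ σ) ^ n = 1 := by
      rw [← hΦpow, hσn]
      apply hΦext
      intro x
      simp [hΦap]
    have hdvd : orderOf (Φ σ) ∣ n := orderOf_dvd_of_pow_eq_one hpown
    have hne0 : orderOf (Φ σ) ≠ 0 := by
      intro h0
      rw [h0] at hdvd
      have := zero_dvd_iff.mp hdvd
      omega
    by_contra hne'
    have hlt : orderOf (Φ σ) < n := lt_of_le_of_ne (Nat.le_of_dvd (by omega) hdvd) hne'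
    have hpos : 0 < orderOf (Φ σ) := Nat.pos_of_ne_zero hne0
    obtain ⟨u, hu⟩ := hne (orderOf (Φ σ)) hpos hlt
    apply hu
    have h1 := pow_orderOf_eq_one (Φ σ)
    rw [← hΦpow] at h1
    have h2 := congrArg (fun f : L ≃ₐ[K] L => f (algebraMap T L u)) h1
    simp only [AlgEquiv.one_apply] at h2
    rw [hΦap] at h2
    exact hinjTL h2
  -- Artin: fixed field of the cyclic group generated by Φ σ is ⊥
  let G : Subgroup (L ≃ₐ[K] L) := Subgroup.zpowers (Φ σ)
  have hfinF : finrank (IntermediateField.fixedField G) L = n := by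
    have h := IntermediateField.finrank_fixedField_eq_card (F := K) (E := L) G
    have h2 : Fintype.card G = n := by
      rw [← Nat.card_eq_fintype_card, Nat.card_zpowers, horder]
    exact h.trans (Nat.card_eq_fintype_card.trans h2)
  have hmul : finrank K (IntermediateField.fixedField G)
      * finrank (IntermediateField.fixedField G) L = finrank K L :=
    Module.finrank_mul_finrank K (IntermediateField.fixedField G) L
  have hone : finrank K (IntermediateField.fixedField G) = 1 := by
    rw [hfinF, hrankKL] at hmul
    have : 0 < n := hn
    nlinarith [hmul]
  have hbot : IntermediateField.fixedField G = ⊥ :=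
    IntermediateField.finrank_eq_one_iff.mp hone
  -- t' is fixed by G
  set t' := algebraMap T L t with ht'
  have hstab : Φ σ ∈ MulAction.stabilizer (L ≃ₐ[K] L) t' := by
    show Φ σ • t' = t'
    show (Φ σ) t' = t'
    rw [ht', hΦap, ht]
  have hzle : Subgroup.zpowers (Φ σ) ≤ MulAction.stabilizer (L ≃ₐ[K] L) t' :=
    Subgroup.zpowers_le.mpr hstab
  have hmemF : t' ∈ IntermediateField.fixedField G := by
    intro g
    exact hzle g.2
  rw [hbot, IntermediateField.mem_bot] at hmemF
  obtain ⟨k, hk⟩ := hmemF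
  have hki : IsIntegral S k := by
    have h1 : IsIntegral S t' := (Algebra.IsIntegral.isIntegral (R := S) t).map
      (IsScalarTower.toAlgHom S T L)
    exact IsIntegral.tower_bot (algebraMap K L).injective (hk ▸ h1)
  obtain ⟨s, hs⟩ := IsIntegrallyClosed.isIntegral_iff.mp hki
  refine ⟨s, hinjTL ?_⟩
  rw [← IsScalarTower.algebraMap_apply S T L, IsScalarTower.algebraMap_apply S K L, hs, hk]


theorem aux_fixed {S T : Type*} [CommRing S] [IsDomain S] [IsIntegrallyClosed S]
    [CommRing T] [IsDomain T] [Algebra S T] [Module.Free S T] [Module.Finite S T]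
    (n : ℕ) (hn : 1 ≤ n) (hrank : Module.finrank S T = n)
    (σ : T ≃ₐ[S] T) (hσn : σ ^ n = 1)
    (hne : ∀ i : ℕ, 0 < i → i < n → ∃ t : T, (σ ^ i) t ≠ t)
    {t : T} (ht : σ t = t) : ∃ s : S, algebraMap S T s = t := by
  classical
  let K := FractionRing S
  let L := FractionRing T
  letI : Algebra K L := FractionRing.liftAlgebra S L
  haveI : IsScalarTower S K L := FractionRing.isScalarTower_liftAlgebra S L
  have hinjTL : Function.Injective (algebraMap T L) := IsFractionRing.injective T L
  haveI hloc : IsLocalization (Algebra.algebraMapSubmonoid T (nonZeroDivisors S)) L := by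
    constructor
    constructor
    · rintro ⟨_, s, hs, rfl⟩
      have h1 : algebraMap S T s ≠ 0 := by
        intro h
        exact nonZeroDivisors.ne_zero hs
          (FaithfulSMul.algebraMap_injective S T (by simpa using h))
      exact IsUnit.mk0 _ fun h => h1 (hinjTL (by simpa using h))
    · intro z
      obtain ⟨a, u, hu, hz⟩ := IsFractionRing.div_surjective (A := T) z
      have hu0 : (u : T) ≠ 0 := nonZeroDivisors.ne_zero hu
      have halg : IsAlgebraic S u := (Algebra.IsIntegral.isIntegral (R := S) u).isAlgebraic
      obtain ⟨r, hr, hdvd⟩ := halg.exists_nonzero_dvd (mem_nonZeroDivisors_of_ne_zero hu0)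
      obtain ⟨v, hv⟩ := hdvd
      refine ⟨⟨a * v, ⟨algebraMap S T r, r, mem_nonZeroDivisors_of_ne_zero hr, rfl⟩⟩, ?_⟩
      have huL : algebraMap T L u ≠ 0 := fun h => hu0 (hinjTL (by simpa using h))
      simp only [← hz, map_mul, hv]
      rw [← mul_assoc, div_mul_cancel₀ _ huL]
    · intro x y h
      exact ⟨1, by simpa using hinjTL h⟩
  let b : Basis (Fin n) S T := Module.finBasisOfFinrankEq S T hrank
  let bL : Basis (Fin n) K L := b.localizationLocalization K (nonZeroDivisors S) L
  haveI : FiniteDimensional K L := Module.Finite.of_basis bL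
  have hrankKL : finrank K L = n := by
    rw [finrank_eq_card_basis bL, Fintype.card_fin]
  exact aux_fixed_frac n hn hrank σ hσn hne ht K L hrankKL


/-- In the unramified setting (`S` a complete DVR with uniformizer `π` and
finite residue field, `T` an `S`-algebra DVR, finite free of rank `n ≥ 1` over `S` with maximal
ideal generated by the image of `π`, and `σ` an `S`-algebra automorphism with `σ ^ n = 1` whose
reduction mod `π` generates the Galois group of the residue extension), the kernel of the
`S`-linear endomorphism `t ↦ π·(t - σ⁻¹ t)` of `T` equals `S·1`; consequently, for every
nonzero `c ∈ S`, the quotient of this kernel by the image of `t ↦ c · Tr t` is isomorphic to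
`S/(c)` as an `S`-module. -/
theorem statement7
    (S : Type*) [CommRing S] [IsDomain S] [IsDiscreteValuationRing S]
    (π : S) (hπ : Irreducible π)
    [IsAdicComplete (Ideal.span {π}) S] [Finite (S ⧸ Ideal.span {π})]
    (T : Type*) [CommRing T] [IsDomain T] [IsDiscreteValuationRing T]
    [Algebra S T] [Module.Free S T]
    (n : ℕ) (hn : 1 ≤ n) (hrank : Module.finrank S T = n)
    (hmax : IsLocalRing.maximalIdeal T = Ideal.span {algebraMap S T π})
    (σ : T ≃ₐ[S] T) (hσn : σ ^ n = 1)
    (hgen : ∀ i : ℕ, 0 < i → i < n →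
      ∃ t : T, (σ ^ i) t - t ∉ Ideal.span {algebraMap S T π}) :
    LinearMap.ker (π • ((LinearMap.id : T →ₗ[S] T) - (σ⁻¹).toLinearMap)) =
      LinearMap.range (Algebra.linearMap S T) ∧
    ∀ c : S, c ≠ 0 →
      Nonempty (
        (LinearMap.ker (π • ((LinearMap.id : T →ₗ[S] T) - (σ⁻¹).toLinearMap)) ⧸
          Submodule.comap
            (LinearMap.ker (π • ((LinearMap.id : T →ₗ[S] T) - (σ⁻¹).toLinearMap))).subtype
            (LinearMap.range (c • ∑ i ∈ Finset.range n, (σ ^ i).toLinearMap)))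
        ≃ₗ[S] S ⧸ Ideal.span {c}) := by
  classical
  haveI : Module.Finite S T := Module.finite_of_finrank_pos (by rw [hrank]; omega)
  have hinjT : Function.Injective (algebraMap S T) :=
    FaithfulSMul.algebraMap_injective S T
  have hne : ∀ i : ℕ, 0 < i → i < n → ∃ t : T, (σ ^ i) t ≠ t := by
    intro i h1 h2
    obtain ⟨t, ht⟩ := hgen i h1 h2
    exact ⟨t, fun h => ht (by rw [h, sub_self]; exact Ideal.zero_mem _)⟩
  have hfixed : ∀ t : T, σ t = t → ∃ s, algebraMap S T s = t := fun t ht =>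
    aux_fixed n hn hrank σ hσn hne ht
  set D := π • ((LinearMap.id : T →ₗ[S] T) - (σ⁻¹).toLinearMap) with hD
  have hπT : algebraMap S T π ≠ 0 := fun h => hπ.ne_zero (hinjT (by simpa using h))
  have hker : ∀ x : T, x ∈ LinearMap.ker D ↔ σ x = x := by
    intro x
    rw [LinearMap.mem_ker]
    have haut : (σ⁻¹ : T ≃ₐ[S] T) = σ.symm := rfl
    simp only [hD, LinearMap.smul_apply, LinearMap.sub_apply, LinearMap.id_apply,
      AlgEquiv.toLinearMap_apply, haut]
    rw [Algebra.smul_def, mul_eq_zero]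
    constructor
    · rintro (h | h)
      · exact absurd h hπT
      · have h2 : σ.symm x = x := (sub_eq_zero.mp h).symm
        conv_lhs => rw [← h2]
        rw [AlgEquiv.apply_symm_apply]
    · intro h
      right
      rw [sub_eq_zero]
      exact (σ.symm_apply_eq.mpr h.symm).symm
  have hker' : LinearMap.ker D = LinearMap.range (Algebra.linearMap S T) := by
    ext x
    rw [hker]
    constructor
    · intro h
      obtain ⟨s, hs⟩ := hfixed x h
      exact ⟨s, hs⟩
    · rintro ⟨s, rfl⟩
      exact σ.commutes s
  refine ⟨hker', ?_⟩
  -- the trace map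
  set Tr := ∑ i ∈ Finset.range n, (σ ^ i : T ≃ₐ[S] T).toLinearMap with hTrdef
  have hTrap : ∀ t : T, Tr t = ∑ i ∈ Finset.range n, (σ ^ i) t := by
    intro t
    rw [hTrdef]
    simp [LinearMap.sum_apply]
  have hTrfix : ∀ t : T, σ (Tr t) = Tr t := by
    intro t
    rw [hTrap, map_sum]
    have e1 := Finset.sum_range_succ' (fun i => (σ ^ i) t) n
    have e2 := Finset.sum_range_succ (fun i => (σ ^ i) t) n
    have hfn : (σ ^ n) t = (σ ^ 0) t := by rw [hσn, pow_zero]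
    have key : ∑ i ∈ Finset.range n, (σ ^ (i + 1)) t = ∑ i ∈ Finset.range n, (σ ^ i) t := by
      have h3 : (∑ i ∈ Finset.range n, (σ ^ (i + 1)) t) + (σ ^ 0) t
          = (∑ i ∈ Finset.range n, (σ ^ i) t) + (σ ^ 0) t := by
        rw [← e1, e2, hfn]
      exact add_right_cancel h3
    calc ∑ i ∈ Finset.range n, σ ((σ ^ i) t)
        = ∑ i ∈ Finset.range n, (σ ^ (i + 1)) t := by
          refine Finset.sum_congr rfl fun i _ => ?_
          rw [pow_succ']
          rfl
      _ = ∑ i ∈ Finset.range n, (σ ^ i) t := key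
  -- residue field computation: some element has trace a unit
  haveI hmaxI : (Ideal.span {algebraMap S T π}).IsMaximal := by
    rw [← hmax]; infer_instance
  set I := Ideal.span {algebraMap S T π} with hI
  letI : Field (T ⧸ I) := Ideal.Quotient.field I
  have hqle : ∀ i : ℕ, I ≤ Ideal.comap ((σ ^ i : T ≃ₐ[S] T) : T →+* T) I := by
    intro i
    rw [hI, Ideal.span_le]
    intro x hx
    simp only [Set.mem_singleton_iff] at hx
    subst hx
    show (σ ^ i) (algebraMap S T π) ∈ I
    rw [AlgEquiv.commutes]
    exact Ideal.subset_span rfl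
  let g : ℕ → (T ⧸ I) →+* (T ⧸ I) := fun i =>
    Ideal.quotientMap I ((σ ^ i : T ≃ₐ[S] T) : T →+* T) (hqle i)
  have hgap : ∀ (i : ℕ) (x : T),
      g i (Ideal.Quotient.mk I x) = Ideal.Quotient.mk I ((σ ^ i) x) := by
    intro i x
    exact Ideal.quotientMap_mk
  have hgne : ∀ i j : Fin n, i < j → g (i : ℕ) ≠ g (j : ℕ) := by
    intro i j hij heq
    have hij' : (i : ℕ) < (j : ℕ) := hij
    have hjlt : (j : ℕ) < n := j.isLt
    obtain ⟨u, hu⟩ := hgen ((j : ℕ) - (i : ℕ)) (by omega) (by omega)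
    apply hu
    have h1 := congrArg
      (fun f : (T ⧸ I) →+* (T ⧸ I) => f (Ideal.Quotient.mk I ((σ ^ (i : ℕ)).symm u))) heq
    simp only [hgap] at h1
    rw [AlgEquiv.apply_symm_apply] at h1
    have h2 : (σ ^ (j : ℕ)) ((σ ^ (i : ℕ)).symm u) = (σ ^ ((j : ℕ) - (i : ℕ))) u := by
      have h4 : (σ ^ (j : ℕ)) = (σ ^ ((j : ℕ) - (i : ℕ))) * (σ ^ (i : ℕ)) := by
        rw [← pow_add]
        congr 1
        omega
      rw [h4, AlgEquiv.mul_apply, AlgEquiv.apply_symm_apply]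
    rw [h2] at h1
    exact Ideal.Quotient.eq.mp h1.symm
  have hgneMH : ∀ i j : Fin n, i ≠ j → (g (i : ℕ)).toMonoidHom ≠ (g (j : ℕ)).toMonoidHom := by
    intro i j hij h
    have hgij : g (i : ℕ) = g (j : ℕ) := RingHom.ext fun x => DFunLike.congr_fun h x
    rcases lt_or_gt_of_ne hij with hlt | hlt
    · exact hgne i j hlt hgij
    · exact hgne j i hlt hgij.symm
  have hginj : Function.Injective fun i : Fin n => (g (i : ℕ)).toMonoidHom := by
    intro i j h
    by_contra hne'
    exact hgneMH i j hne' h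
  have hli := (linearIndependent_monoidHom (T ⧸ I) (T ⧸ I)).comp
      (fun i : Fin n => (g (i : ℕ)).toMonoidHom) hginj
  have hexu : ∃ u : T ⧸ I, (∑ i : Fin n, g (i : ℕ) u) ≠ 0 := by
    by_contra hall
    push_neg at hall
    have h0 := Fintype.linearIndependent_iff.mp hli (fun _ => (1 : T ⧸ I)) ?_ ⟨0, by omega⟩
    · exact one_ne_zero h0
    · funext u
      rw [Finset.sum_apply]
      simp only [Pi.smul_apply, one_smul]
      exact hall u
  obtain ⟨u, hu⟩ := hexu
  obtain ⟨t1, rfl⟩ := Ideal.Quotient.mk_surjective u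
  have hTrt1 : Tr t1 ∉ I := by
    intro hmem
    apply hu
    have hsum : (∑ i : Fin n, g (i : ℕ) (Ideal.Quotient.mk I t1))
        = Ideal.Quotient.mk I (Tr t1) := by
      rw [hTrap, map_sum, ← Fin.sum_univ_eq_sum_range (fun i => Ideal.Quotient.mk I ((σ ^ i) t1)) n]
      exact Finset.sum_congr rfl fun i _ => hgap (i : ℕ) t1
    rw [hsum]
    exact Ideal.Quotient.eq_zero_iff_mem.mpr hmem
  obtain ⟨s, hs⟩ := hfixed (Tr t1) (hTrfix t1)
  have hsunit : IsUnit s := by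
    by_contra hnu
    apply hTrt1
    have hmem' : s ∈ IsLocalRing.maximalIdeal S := hnu
    rw [hπ.maximalIdeal_eq] at hmem'
    obtain ⟨a, ha⟩ := Ideal.mem_span_singleton'.mp hmem'
    rw [← hs, ← ha, map_mul]
    exact Ideal.mul_mem_left _ _ (Ideal.subset_span rfl)
  obtain ⟨su, hsu⟩ := hsunit
  have hTr1 : Tr ((↑su⁻¹ : S) • t1) = 1 := by
    rw [map_smul, ← hs, Algebra.smul_def, ← map_mul]
    have : (↑su⁻¹ : S) * s = 1 := by rw [← hsu]; exact Units.inv_mul su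
    rw [this, map_one]
  have hTr_range : LinearMap.range Tr = LinearMap.range (Algebra.linearMap S T) := by
    apply le_antisymm
    · rintro x ⟨t2, rfl⟩
      obtain ⟨s2, hs2⟩ := hfixed (Tr t2) (hTrfix t2)
      exact ⟨s2, hs2⟩
    · rintro x ⟨s2, rfl⟩
      refine ⟨s2 • ((↑su⁻¹ : S) • t1), ?_⟩
      rw [map_smul, hTr1, Algebra.linearMap_apply, Algebra.algebraMap_eq_smul_one]
  intro c hc
  have hmem : ∀ s3 : S, algebraMap S T s3 ∈ LinearMap.ker D := by
    intro s3
    rw [hker']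
    exact ⟨s3, rfl⟩
  let f : S →ₗ[S] LinearMap.ker D := (Algebra.linearMap S T).codRestrict (LinearMap.ker D) hmem
  have hfbij : Function.Bijective f := by
    constructor
    · intro a b hab
      exact hinjT (congrArg Subtype.val hab)
    · rintro ⟨x, hx⟩
      obtain ⟨s2, hs2⟩ := (hker' ▸ hx : x ∈ LinearMap.range (Algebra.linearMap S T))
      exact ⟨s2, Subtype.ext hs2⟩
  let e : S ≃ₗ[S] LinearMap.ker D := LinearEquiv.ofBijective f hfbij
  have hmap : Submodule.map (e : S →ₗ[S] LinearMap.ker D) (Ideal.span {c})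
      = Submodule.comap (LinearMap.ker D).subtype (LinearMap.range (c • Tr)) := by
    ext z
    simp only [Submodule.mem_map, Submodule.mem_comap, LinearMap.mem_range]
    constructor
    · rintro ⟨s2, hs2, rfl⟩
      obtain ⟨a, rfl⟩ := Ideal.mem_span_singleton'.mp hs2
      have hmem2 : algebraMap S T a ∈ LinearMap.range Tr := by
        rw [hTr_range]
        exact ⟨a, rfl⟩
      obtain ⟨t2, ht2⟩ := hmem2
      refine ⟨t2, ?_⟩
      show (c • Tr) t2 = ((e (a * c)) : T)
      rw [LinearMap.smul_apply, ht2]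
      show c • algebraMap S T a = algebraMap S T (a * c)
      rw [Algebra.smul_def, ← map_mul, mul_comm]
    · rintro ⟨t2, ht2⟩
      have hmem3 : Tr t2 ∈ LinearMap.range Tr := ⟨t2, rfl⟩
      rw [hTr_range] at hmem3
      obtain ⟨s2, hs2⟩ := hmem3
      refine ⟨c * s2, Ideal.mem_span_singleton'.mpr ⟨s2, mul_comm _ _⟩, ?_⟩
      apply Subtype.ext
      show algebraMap S T (c * s2) = (LinearMap.ker D).subtype z
      rw [← ht2]
      show algebraMap S T (c * s2) = c • Tr t2
      rw [← hs2]
      show algebraMap S T (c * s2) = c • algebraMap S T s2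
      rw [Algebra.smul_def, map_mul]
  exact ⟨(Submodule.Quotient.equiv (Ideal.span {c}) _ e hmap).symm⟩
end

section
/- Suppose given a commutative diagram of A-modules with exact rows, whose top row is 0 → (x^{d−1}·A)^{⊕n} →^{i} A^{⊕n} →^{q} (A/(x^{d−1}))^{⊕n} → 0 with i the coordinatewise inclusion and q the coordinatewise quotient map, whose bottom row is 0 → 𝔽 →^{i_M} M → A/(x^{d−1}) → 0, and with vertical maps f₀ : (x^{d−1}·A)^{⊕n} → 𝔽, f₁ : A^{⊕n} → M, f₂ : (A/(x^{d−1}))^{⊕n} → A/(x^{d−1}) such that f₀ and f₂ are surjective. Then M is isomorphic to A = 𝔽[x]/(x^d) as an A-module. -/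
set_option synthInstance.maxHeartbeats 1000000
set_option maxHeartbeats 1000000

/-- `Aq 𝔽 d` is the truncated polynomial algebra `A = 𝔽[x]/(x^d)`. -/
abbrev Aq (𝔽 : Type*) [Field 𝔽] (d : ℕ) : Type _ :=
  Polynomial 𝔽 ⧸ Ideal.span {(Polynomial.X : Polynomial 𝔽) ^ d}

/-- `xq 𝔽 d` is the class `x` of `X` in `A = 𝔽[x]/(x^d)`. -/
noncomputable abbrev xq (𝔽 : Type*) [Field 𝔽] (d : ℕ) : Aq 𝔽 d :=
  Ideal.Quotient.mk _ Polynomial.X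

open Polynomial in
private lemma Aq.mk_pow (𝔽 : Type*) [Field 𝔽] (d k : ℕ) :
    (xq 𝔽 d) ^ k = Ideal.Quotient.mk (Ideal.span {(X : 𝔽[X]) ^ d}) ((X : 𝔽[X]) ^ k) := by
  rw [map_pow]

open Polynomial in
private lemma Aq.mem_span (𝔽 : Type*) [Field 𝔽] (d k : ℕ) (p : 𝔽[X]) (h : (X : 𝔽[X]) ^ k ∣ p) :
    Ideal.Quotient.mk (Ideal.span {(X : 𝔽[X]) ^ d}) p ∈ Ideal.span {xq 𝔽 d ^ k} := by
  obtain ⟨r, rfl⟩ := h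
  exact Ideal.mem_span_singleton'.mpr
    ⟨Ideal.Quotient.mk _ r, by rw [Aq.mk_pow, ← map_mul, mul_comm]⟩

open Polynomial in
private lemma Aq.mem_span_x (𝔽 : Type*) [Field 𝔽] (d : ℕ) (p : 𝔽[X]) (h : p.coeff 0 = 0) :
    Ideal.Quotient.mk (Ideal.span {(X : 𝔽[X]) ^ d}) p ∈ Ideal.span {xq 𝔽 d} := by
  have := Aq.mem_span 𝔽 d 1 p (by rw [pow_one]; exact Polynomial.X_dvd_iff.mpr h)
  rwa [pow_one] at this

open Polynomial in
private lemma Aq.one_not_mem (𝔽 : Type*) [Field 𝔽] {d k : ℕ} (hd : 1 ≤ d) (hk : 1 ≤ k) :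
    (1 : Aq 𝔽 d) ∉ Ideal.span {xq 𝔽 d ^ k} := by
  intro h
  obtain ⟨b, hb⟩ := Ideal.mem_span_singleton'.mp h
  obtain ⟨p, rfl⟩ := Ideal.Quotient.mk_surjective b
  rw [Aq.mk_pow, ← map_mul, ← map_one (Ideal.Quotient.mk (Ideal.span {(X : 𝔽[X]) ^ d}))] at hb
  have hmem : p * X ^ k - 1 ∈ Ideal.span {(X : 𝔽[X]) ^ d} := by
    rw [← Ideal.Quotient.eq_zero_iff_mem, map_sub, hb, sub_self]
  obtain ⟨q, heq⟩ := Ideal.mem_span_singleton.mp hmem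
  have := congrArg (Polynomial.eval (0 : 𝔽)) heq
  simp [zero_pow (by omega : k ≠ 0), zero_pow (by omega : d ≠ 0)] at this

open Polynomial in
private lemma Aq.smul_q1 (𝔽 : Type*) [Field 𝔽] {d : ℕ} (hd : 2 ≤ d)
    (y : Aq 𝔽 d ⧸ (Ideal.span {xq 𝔽 d} : Ideal (Aq 𝔽 d))) : xq 𝔽 d ^ (d - 1) • y = 0 := by
  obtain ⟨c, rfl⟩ := Submodule.Quotient.mk_surjective _ y
  obtain ⟨p, rfl⟩ := Ideal.Quotient.mk_surjective c
  rw [← Submodule.Quotient.mk_smul, Submodule.Quotient.mk_eq_zero, smul_eq_mul,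
    Aq.mk_pow, ← map_mul]
  refine Aq.mem_span_x 𝔽 d _ ?_
  rw [Polynomial.mul_coeff_zero, Polynomial.coeff_X_pow,
    if_neg (by omega : ¬ (0 : ℕ) = d - 1), zero_mul]

open Polynomial in
private lemma Aq.eq_zero_of_smul_eq_zero (𝔽 : Type*) [Field 𝔽] {d : ℕ} (hd : 2 ≤ d)
    {M : Type*} [AddCommGroup M] [Module (Aq 𝔽 d) M] {m : M}
    (hm : xq 𝔽 d ^ (d - 1) • m ≠ 0) (a : Aq 𝔽 d) (ha : a • m = 0) : a = 0 := by
  by_contra hane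
  obtain ⟨p, rfl⟩ := Ideal.Quotient.mk_surjective a
  have hpne : p ≠ 0 := by rintro rfl; exact hane (map_zero _)
  have hnd : ¬ ((X : 𝔽[X]) ^ d ∣ p) := by
    intro h
    exact hane (by rw [Ideal.Quotient.eq_zero_iff_mem]; exact Ideal.mem_span_singleton.mpr h)
  set k := p.natTrailingDegree with hk
  have hkd : k < d := by
    by_contra hkd
    exact hnd (Polynomial.X_pow_dvd_iff.mpr fun i hi =>
      Polynomial.coeff_eq_zero_of_lt_natTrailingDegree (by omega))
  obtain ⟨q, hq⟩ : (X : 𝔽[X]) ^ k ∣ p :=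
    Polynomial.X_pow_dvd_iff.mpr fun i hi =>
      Polynomial.coeff_eq_zero_of_lt_natTrailingDegree (by omega)
  set c0 := q.coeff 0 with hc0
  have hq0 : c0 ≠ 0 := by
    have hc : p.coeff k = c0 := by
      conv_lhs => rw [hq]
      simpa using Polynomial.coeff_X_pow_mul q k 0
    rw [← hc, hk]
    exact Polynomial.trailingCoeff_nonzero_iff_nonzero.mpr hpne
  obtain ⟨r, hr⟩ : (X : 𝔽[X]) ∣ (q - C c0) := Polynomial.X_dvd_iff.mpr (by simp [hc0])
  have hq' : q = C c0 + X * r := by rw [← hr]; abel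
  have h1 : (xq 𝔽 d ^ (d - 1 - k) * Ideal.Quotient.mk _ p) • m = 0 := by
    rw [mul_smul, ha, smul_zero]
  have h2 : xq 𝔽 d ^ (d - 1 - k) * Ideal.Quotient.mk _ p
      = Ideal.Quotient.mk _ (C c0) * xq 𝔽 d ^ (d - 1) := by
    rw [Aq.mk_pow, ← map_mul, Aq.mk_pow, ← map_mul, Ideal.Quotient.eq]
    refine Ideal.mem_span_singleton.mpr ⟨r, ?_⟩
    have e1 : (X : 𝔽[X]) ^ (d - 1 - k) * X ^ k = X ^ (d - 1) := by
      rw [← pow_add]; congr 1; omega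
    have e2 : (X : 𝔽[X]) ^ (d - 1) * X = X ^ d := by
      rw [← pow_succ]; congr 1; omega
    calc (X : 𝔽[X]) ^ (d - 1 - k) * p - C c0 * X ^ (d - 1)
        = X ^ (d - 1) * q - C c0 * X ^ (d - 1) := by
          conv_lhs => rw [hq, ← mul_assoc, e1]
      _ = X ^ d * r := by rw [hq', mul_add, ← e2]; ring
  have h3 : (Ideal.Quotient.mk (Ideal.span {(X : 𝔽[X]) ^ d}) (C c0) * xq 𝔽 d ^ (d - 1)) • m
      = 0 := by rw [← h2]; exact h1
  apply hm
  have hunit : (Ideal.Quotient.mk (Ideal.span {(X : 𝔽[X]) ^ d}) (C c0⁻¹)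
      * (Ideal.Quotient.mk (Ideal.span {(X : 𝔽[X]) ^ d}) (C c0) * xq 𝔽 d ^ (d - 1)))
      = xq 𝔽 d ^ (d - 1) := by
    rw [← mul_assoc, ← map_mul, ← Polynomial.C_mul, inv_mul_cancel₀ hq0, Polynomial.C_1,
      map_one, one_mul]
  rw [← hunit, mul_smul, h3, smul_zero]

private lemma Aq.smul_m₀_ne_zero (𝔽 : Type*) [Field 𝔽] {d : ℕ} (hd : 2 ≤ d)
    {M : Type*} [AddCommGroup M] [Module (Aq 𝔽 d) M]
    (iM : (Aq 𝔽 d ⧸ (Ideal.span {xq 𝔽 d} : Ideal (Aq 𝔽 d))) →ₗ[Aq 𝔽 d] M)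
    (g : M →ₗ[Aq 𝔽 d] (Aq 𝔽 d ⧸ (Ideal.span {xq 𝔽 d ^ (d - 1)} : Ideal (Aq 𝔽 d))))
    (hexact : LinearMap.range iM = LinearMap.ker g)
    (m₀ m' : M) (hm₀g : g m₀ = Submodule.Quotient.mk 1)
    (hm' : (xq 𝔽 d ^ (d - 1)) • m' ≠ 0) :
    (xq 𝔽 d ^ (d - 1)) • m₀ ≠ 0 := by
  intro h0
  apply hm'
  obtain ⟨b, hb⟩ := Submodule.Quotient.mk_surjective _ (g m')
  have hker : g (m' - b • m₀) = 0 := by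
    rw [map_sub, map_smul, hm₀g, ← Submodule.Quotient.mk_smul, smul_eq_mul, mul_one, hb,
      sub_self]
  have hmem : m' - b • m₀ ∈ LinearMap.range iM := by
    rw [hexact]; exact LinearMap.mem_ker.mpr hker
  obtain ⟨y, hy⟩ := hmem
  have heq : m' = iM y + b • m₀ := by rw [hy]; abel
  calc (xq 𝔽 d ^ (d - 1)) • m'
      = (xq 𝔽 d ^ (d - 1)) • (iM y) + (xq 𝔽 d ^ (d - 1)) • (b • m₀) := by
        rw [heq, smul_add]
    _ = iM ((xq 𝔽 d ^ (d - 1)) • y) + b • ((xq 𝔽 d ^ (d - 1)) • m₀) := by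
        rw [map_smul, smul_comm]
    _ = 0 := by rw [Aq.smul_q1 𝔽 hd, h0, map_zero, smul_zero, add_zero]

private lemma Aq.ht_exists (𝔽 : Type*) [Field 𝔽] {d : ℕ} (hd : 2 ≤ d)
    {M : Type*} [AddCommGroup M] [Module (Aq 𝔽 d) M]
    (iM : (Aq 𝔽 d ⧸ (Ideal.span {xq 𝔽 d} : Ideal (Aq 𝔽 d))) →ₗ[Aq 𝔽 d] M)
    (g : M →ₗ[Aq 𝔽 d] (Aq 𝔽 d ⧸ (Ideal.span {xq 𝔽 d ^ (d - 1)} : Ideal (Aq 𝔽 d))))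
    (hexact : LinearMap.range iM = LinearMap.ker g)
    (m₀ : M) (hm₀g : g m₀ = Submodule.Quotient.mk 1)
    (hm₀ : (xq 𝔽 d ^ (d - 1)) • m₀ ≠ 0) :
    ∃ p : Polynomial 𝔽, p.coeff 0 ≠ 0 ∧
      iM (Submodule.Quotient.mk (Ideal.Quotient.mk _ p)) = (xq 𝔽 d ^ (d - 1)) • m₀ := by
  have hker2 : g ((xq 𝔽 d ^ (d - 1)) • m₀) = 0 := by
    rw [map_smul, hm₀g, ← Submodule.Quotient.mk_smul, smul_eq_mul, mul_one,
      Submodule.Quotient.mk_eq_zero]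
    exact Ideal.mem_span_singleton.mpr dvd_rfl
  have hmem2 : (xq 𝔽 d ^ (d - 1)) • m₀ ∈ LinearMap.range iM := by
    rw [hexact]; exact LinearMap.mem_ker.mpr hker2
  obtain ⟨t, ht⟩ := hmem2
  obtain ⟨s, rfl⟩ := Submodule.Quotient.mk_surjective _ t
  obtain ⟨p, rfl⟩ := Ideal.Quotient.mk_surjective s
  refine ⟨p, ?_, ht⟩
  intro h
  apply hm₀
  rw [← ht, (Submodule.Quotient.mk_eq_zero _).mpr (Aq.mem_span_x 𝔽 d p h), map_zero]

private lemma Aq.surj_lemma (𝔽 : Type*) [Field 𝔽] {d : ℕ} (hd : 2 ≤ d)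
    {M : Type*} [AddCommGroup M] [Module (Aq 𝔽 d) M]
    (iM : (Aq 𝔽 d ⧸ (Ideal.span {xq 𝔽 d} : Ideal (Aq 𝔽 d))) →ₗ[Aq 𝔽 d] M)
    (g : M →ₗ[Aq 𝔽 d] (Aq 𝔽 d ⧸ (Ideal.span {xq 𝔽 d ^ (d - 1)} : Ideal (Aq 𝔽 d))))
    (hexact : LinearMap.range iM = LinearMap.ker g)
    (m₀ : M) (hm₀g : g m₀ = Submodule.Quotient.mk 1)
    (p : Polynomial 𝔽) (hγ : p.coeff 0 ≠ 0)
    (ht : iM (Submodule.Quotient.mk (Ideal.Quotient.mk _ p)) = (xq 𝔽 d ^ (d - 1)) • m₀) :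
    Function.Surjective (LinearMap.toSpanSingleton (Aq 𝔽 d) M m₀) := by
  intro z
  obtain ⟨b, hbz⟩ := Submodule.Quotient.mk_surjective _ (g z)
  have hker3 : g (z - b • m₀) = 0 := by
    rw [map_sub, map_smul, hm₀g, ← Submodule.Quotient.mk_smul, smul_eq_mul, mul_one, hbz,
      sub_self]
  have hmem3 : z - b • m₀ ∈ LinearMap.range iM := by
    rw [hexact]; exact LinearMap.mem_ker.mpr hker3
  obtain ⟨y, hy⟩ := hmem3
  obtain ⟨c, rfl⟩ := Submodule.Quotient.mk_surjective _ y
  refine ⟨b + c * Ideal.Quotient.mk _ (Polynomial.C (p.coeff 0)⁻¹) * xq 𝔽 d ^ (d - 1), ?_⟩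
  rw [LinearMap.toSpanSingleton_apply, add_smul]
  have key : (c * Ideal.Quotient.mk _ (Polynomial.C (p.coeff 0)⁻¹) * xq 𝔽 d ^ (d - 1)) • m₀
      = iM (Submodule.Quotient.mk c) := by
    rw [mul_smul, ← ht, ← map_smul, ← Submodule.Quotient.mk_smul]
    congr 1
    rw [Submodule.Quotient.eq]
    have heq2 : (c * Ideal.Quotient.mk (Ideal.span {(Polynomial.X : Polynomial 𝔽) ^ d})
          (Polynomial.C (p.coeff 0)⁻¹))
          • Ideal.Quotient.mk (Ideal.span {(Polynomial.X : Polynomial 𝔽) ^ d}) p - c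
        = c * Ideal.Quotient.mk (Ideal.span {(Polynomial.X : Polynomial 𝔽) ^ d})
          (Polynomial.C (p.coeff 0)⁻¹ * p - 1) := by
      rw [smul_eq_mul, map_sub, map_mul, map_one, mul_sub, mul_one, mul_assoc]
    rw [heq2]
    refine Ideal.mul_mem_left _ c (Aq.mem_span_x 𝔽 d _ ?_)
    simp [Polynomial.mul_coeff_zero, inv_mul_cancel₀ hγ]
  rw [key, hy]
  abel

private lemma Aq.build_equiv (𝔽 : Type*) [Field 𝔽] {d : ℕ} (hd : 2 ≤ d)
    {M : Type*} [AddCommGroup M] [Module (Aq 𝔽 d) M]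
    (iM : (Aq 𝔽 d ⧸ (Ideal.span {xq 𝔽 d} : Ideal (Aq 𝔽 d))) →ₗ[Aq 𝔽 d] M)
    (g : M →ₗ[Aq 𝔽 d] (Aq 𝔽 d ⧸ (Ideal.span {xq 𝔽 d ^ (d - 1)} : Ideal (Aq 𝔽 d))))
    (hexact : LinearMap.range iM = LinearMap.ker g)
    (hsurj : Function.Surjective g)
    (m' : M) (hm' : (xq 𝔽 d ^ (d - 1)) • m' ≠ 0) :
    Nonempty (M ≃ₗ[Aq 𝔽 d] Aq 𝔽 d) := by
  obtain ⟨m₀, hm₀g⟩ := hsurj (Submodule.Quotient.mk 1)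
  have hm₀ := Aq.smul_m₀_ne_zero 𝔽 hd iM g hexact m₀ m' hm₀g hm'
  obtain ⟨p, hγ, ht⟩ := Aq.ht_exists 𝔽 hd iM g hexact m₀ hm₀g hm₀
  have hsurjφ := Aq.surj_lemma 𝔽 hd iM g hexact m₀ hm₀g p hγ ht
  have hinjφ : Function.Injective (LinearMap.toSpanSingleton (Aq 𝔽 d) M m₀) := by
    intro a b hab
    rw [LinearMap.toSpanSingleton_apply, LinearMap.toSpanSingleton_apply] at hab
    have := Aq.eq_zero_of_smul_eq_zero 𝔽 hd hm₀ (a - b) (by rw [sub_smul, hab, sub_self])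
    exact sub_eq_zero.mp this
  exact ⟨(LinearEquiv.ofBijective (LinearMap.toSpanSingleton (Aq 𝔽 d) M m₀)
    ⟨hinjφ, hsurjφ⟩).symm⟩


/-- Let `𝔽` be a field, `d ≥ 2`, `n ≥ 1`, and `A = 𝔽[x]/(x^d)`.  Suppose
given a commutative diagram of `A`-modules with exact rows whose top row is
`0 → (x^(d-1)·A)^n → A^n → (A/(x^(d-1)))^n → 0` (coordinatewise inclusion and quotient maps),
whose bottom row is `0 → 𝔽 → M → A/(x^(d-1)) → 0` (here `𝔽`, the `A`-module on which `x`
acts as zero, is realized as `A/(x)`), and whose outer vertical maps `f₀`, `f₂` are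
surjective.  Then `M ≅ A` as `A`-modules. -/
theorem statement10
    (𝔽 : Type*) [Field 𝔽] (d n : ℕ) (hd : 2 ≤ d) (hn : 1 ≤ n)
    (M : Type*) [AddCommGroup M] [Module (Aq 𝔽 d) M]
    (iM : (Aq 𝔽 d ⧸ (Ideal.span {xq 𝔽 d} : Ideal (Aq 𝔽 d))) →ₗ[Aq 𝔽 d] M)
    (g : M →ₗ[Aq 𝔽 d] (Aq 𝔽 d ⧸ (Ideal.span {xq 𝔽 d ^ (d - 1)} : Ideal (Aq 𝔽 d))))
    (hinj : Function.Injective iM)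
    (hexact : LinearMap.range iM = LinearMap.ker g)
    (hsurj : Function.Surjective g)
    (f₀ : (Fin n → (Ideal.span {xq 𝔽 d ^ (d - 1)} : Ideal (Aq 𝔽 d))) →ₗ[Aq 𝔽 d]
      (Aq 𝔽 d ⧸ (Ideal.span {xq 𝔽 d} : Ideal (Aq 𝔽 d))))
    (f₁ : (Fin n → Aq 𝔽 d) →ₗ[Aq 𝔽 d] M)
    (f₂ : (Fin n → (Aq 𝔽 d ⧸ (Ideal.span {xq 𝔽 d ^ (d - 1)} : Ideal (Aq 𝔽 d)))) →ₗ[Aq 𝔽 d]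
      (Aq 𝔽 d ⧸ (Ideal.span {xq 𝔽 d ^ (d - 1)} : Ideal (Aq 𝔽 d))))
    (hsq₁ : iM.comp f₀ = f₁.comp (LinearMap.pi fun j =>
      (Ideal.span {xq 𝔽 d ^ (d - 1)} : Ideal (Aq 𝔽 d)).subtype.comp (LinearMap.proj j)))
    (hsq₂ : g.comp f₁ = f₂.comp (LinearMap.pi fun j =>
      (Ideal.span {xq 𝔽 d ^ (d - 1)} : Ideal (Aq 𝔽 d)).mkQ.comp (LinearMap.proj j)))
    (hf₀ : Function.Surjective f₀)
    (hf₂ : Function.Surjective f₂) :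
    Nonempty (M ≃ₗ[Aq 𝔽 d] Aq 𝔽 d) := by
  classical
  obtain ⟨w, hw⟩ := hf₀ (Submodule.Quotient.mk 1)
  choose u hu using fun j => Ideal.mem_span_singleton'.mp (w j).2
  have hsq₁w := LinearMap.congr_fun hsq₁ w
  have hpi : (LinearMap.pi fun j =>
      ((Ideal.span {xq 𝔽 d ^ (d - 1)} : Ideal (Aq 𝔽 d)).subtype.comp (LinearMap.proj j))) w
      = fun j => ((w j : Aq 𝔽 d)) := by
    funext j; simp
  rw [LinearMap.comp_apply, LinearMap.comp_apply, hpi] at hsq₁w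
  have hfun : (fun j => ((w j : Aq 𝔽 d))) = (xq 𝔽 d ^ (d - 1)) • u := by
    funext j
    rw [Pi.smul_apply, smul_eq_mul, ← hu j, mul_comm]
  have hkey : (xq 𝔽 d ^ (d - 1)) • (f₁ u) = iM (Submodule.Quotient.mk 1) := by
    rw [← map_smul, ← hfun, ← hsq₁w, hw]
  have hone : (Submodule.Quotient.mk (1 : Aq 𝔽 d) :
      Aq 𝔽 d ⧸ (Ideal.span {xq 𝔽 d} : Ideal (Aq 𝔽 d))) ≠ 0 := by
    rw [Ne, Submodule.Quotient.mk_eq_zero]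
    intro h
    have h1 := Aq.one_not_mem 𝔽 (d := d) (k := 1) (by omega) le_rfl
    rw [pow_one] at h1
    exact h1 h
  have hm' : (xq 𝔽 d ^ (d - 1)) • (f₁ u) ≠ 0 := by
    rw [hkey]
    intro h
    exact hone (hinj (h.trans (map_zero iM).symm))
  exact Aq.build_equiv 𝔽 hd iM g hexact hsurj (f₁ u) hm'
end

section
/- Let [A,A] denote the additive subgroup of A generated by all commutators ab − ba (a, b ∈ A); it is an S-submodule of A, where S acts on A through ι and the structure map S → T. Then there are S-module isomorphisms A/[A,A] ≅ T/(π·ker(Tr_{T/S})) ≅ S ⊕ 𝔽_S^{⊕(n−1)}. -/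
open Pointwise

set_option maxHeartbeats 1600000 in
theorem aux_residue
    {S : Type*} [CommRing S] [IsDomain S] [IsDiscreteValuationRing S]
    {π : S} (hπ : Irreducible π)
    {T : Type*} [CommRing T] [IsDomain T] [IsDiscreteValuationRing T]
    [Algebra S T] [Module.Free S T]
    {n : ℕ} (hn : 1 ≤ n) (hrank : Module.finrank S T = n)
    (hmax : IsLocalRing.maximalIdeal T = Ideal.span {algebraMap S T π})
    (σ : T ≃ₐ[S] T) (hσn : σ ^ n = 1)
    (hgen : ∀ i : ℕ, 0 < i → i < n →
      ∃ t : T, (σ ^ i) t - t ∉ Ideal.span {algebraMap S T π}) :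
    (∀ t : T, (∑ i ∈ Finset.range n, (σ ^ i).toLinearMap) t ∈
        LinearMap.range (Algebra.linearMap S T)) ∧
    (∃ e₀ : T, (∑ i ∈ Finset.range n, (σ ^ i).toLinearMap) e₀ = 1) ∧
    (∀ k : T, (∑ i ∈ Finset.range n, (σ ^ i).toLinearMap) k = 0 →
      ∃ t m : T, k = σ t - t + algebraMap S T π * m ∧
        (∑ i ∈ Finset.range n, (σ ^ i).toLinearMap) m = 0) := by
  classical
  set π' : T := algebraMap S T π with hπ'def
  set Tr : T →ₗ[S] T := ∑ i ∈ Finset.range n, (σ ^ i).toLinearMap with hTrdef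
  have hTrapp : ∀ t : T, Tr t = ∑ i ∈ Finset.range n, (σ ^ i) t := by
    intro t
    rw [hTrdef, LinearMap.coe_sum, Finset.sum_apply]
    simp
  have halg : Function.Injective (algebraMap S T) :=
    FaithfulSMul.algebraMap_injective S T
  have hπ0 : π ≠ 0 := hπ.ne_zero
  have hπ'0 : π' ≠ 0 := fun h => hπ0 (halg (by simpa [hπ'def] using h))
  haveI hmaxS : (Ideal.span {π}).IsMaximal := PrincipalIdealRing.isMaximal_of_irreducible hπ
  haveI hmaxT : (Ideal.span {π'}).IsMaximal := by
    rw [← hmax]; exact IsLocalRing.maximalIdeal.isMaximal T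
  letI : Field (S ⧸ Ideal.span {π}) := Ideal.Quotient.field _
  letI : Field (T ⧸ Ideal.span {π'}) := Ideal.Quotient.field _
  have hle : Ideal.span {π} ≤ (Ideal.span {π'}).comap (algebraMap S T) := by
    rw [Ideal.span_le]
    rintro y hy
    simp only [Set.mem_singleton_iff] at hy
    subst hy
    simp only [SetLike.mem_coe, Ideal.mem_comap]
    exact Ideal.subset_span rfl
  letI : Algebra (S ⧸ Ideal.span {π}) (T ⧸ Ideal.span {π'}) :=
    (Ideal.quotientMap (Ideal.span {π'}) (algebraMap S T) hle).toAlgebra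
  set mkT := Ideal.Quotient.mk (Ideal.span {π'}) with hmkT
  set mkS := Ideal.Quotient.mk (Ideal.span {π}) with hmkS
  have halgmk : ∀ c : S, algebraMap (S ⧸ Ideal.span {π}) (T ⧸ Ideal.span {π'}) (mkS c)
      = mkT (algebraMap S T c) := by
    intro c
    rw [RingHom.algebraMap_toAlgebra, hmkS, hmkT, Ideal.quotientMap_mk]
  have hsmulmk : ∀ (c : S) (t : T), (mkS c) • (mkT t) = mkT (algebraMap S T c * t) := by
    intro c t
    rw [Algebra.smul_def, halgmk, ← map_mul]
  have hcom : ∀ ρ : T ≃ₐ[S] T, Ideal.span {π'} ≤ (Ideal.span {π'}).comap (ρ : T →+* T) := by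
    intro ρ
    rw [Ideal.span_le]
    rintro y hy
    simp only [Set.mem_singleton_iff] at hy
    subst hy
    simp only [SetLike.mem_coe, Ideal.mem_comap, RingHom.coe_coe]
    have h1 : ρ π' = π' := ρ.commutes π
    rw [h1]
    exact Ideal.subset_span rfl
  set rh : (T ≃ₐ[S] T) → (T ⧸ Ideal.span {π'}) →+* (T ⧸ Ideal.span {π'}) := fun ρ =>
    Ideal.quotientMap (Ideal.span {π'}) (ρ : T →+* T) (hcom ρ) with hrh
  have rh_mk : ∀ (ρ : T ≃ₐ[S] T) (t : T), rh ρ (mkT t) = mkT (ρ t) := by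
    intro ρ t
    rw [hrh, hmkT, Ideal.quotientMap_mk, RingHom.coe_coe]
  set σb : (T ⧸ Ideal.span {π'}) ≃ₐ[S ⧸ Ideal.span {π}] (T ⧸ Ideal.span {π'}) :=
    { toFun := rh σ
      invFun := rh σ.symm
      left_inv := by
        intro y
        obtain ⟨t, rfl⟩ := Ideal.Quotient.mk_surjective y
        rw [show Ideal.Quotient.mk (Ideal.span {π'}) t = mkT t from rfl, rh_mk, rh_mk]
        simp
      right_inv := by
        intro y
        obtain ⟨t, rfl⟩ := Ideal.Quotient.mk_surjective y
        rw [show Ideal.Quotient.mk (Ideal.span {π'}) t = mkT t from rfl, rh_mk, rh_mk]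
        simp
      map_mul' := (rh σ).map_mul
      map_add' := (rh σ).map_add
      commutes' := by
        intro c
        obtain ⟨s, rfl⟩ := Ideal.Quotient.mk_surjective c
        rw [show Ideal.Quotient.mk (Ideal.span {π}) s = mkS s from rfl, halgmk]
        show rh σ (mkT (algebraMap S T s)) = _
        rw [rh_mk, σ.commutes] } with hσb
  have σb_mk : ∀ t : T, σb (mkT t) = mkT (σ t) := fun t => rh_mk σ t
  have hpowb : ∀ (i : ℕ) (t : T), (σb ^ i) (mkT t) = mkT ((σ ^ i) t) := by
    intro i
    induction i with
    | zero => intro t; simp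
    | succ m ih =>
      intro t
      rw [pow_succ, pow_succ, AlgEquiv.mul_apply, AlgEquiv.mul_apply, σb_mk, ih]
  have hσbn : σb ^ n = 1 := by
    apply AlgEquiv.ext
    intro y
    obtain ⟨t, rfl⟩ := Ideal.Quotient.mk_surjective y
    rw [show Ideal.Quotient.mk (Ideal.span {π'}) t = mkT t from rfl, hpowb, hσn]
    simp
  have hσbne : ∀ i : ℕ, 0 < i → i < n → σb ^ i ≠ 1 := by
    intro i hi1 hi2 h1
    obtain ⟨t, ht⟩ := hgen i hi1 hi2
    apply ht
    have h2 := congrArg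
      (fun (e : (T ⧸ Ideal.span {π'}) ≃ₐ[S ⧸ Ideal.span {π}] (T ⧸ Ideal.span {π'})) => e (mkT t)) h1
    simp only [AlgEquiv.one_apply, hpowb] at h2
    exact Ideal.Quotient.eq.mp h2
  have hordσb : orderOf σb = n := by
    rw [orderOf_eq_iff (by omega)]
    exact ⟨hσbn, fun m hm1 hm2 => hσbne m hm2 hm1⟩
  haveI : Module.Finite S T := Module.finite_of_finrank_pos (by omega)
  set bT : Module.Basis (Fin n) S T := Module.finBasisOfFinrankEq S T hrank with hbT
  set v : Fin n → (T ⧸ Ideal.span {π'}) := fun i => mkT (bT i) with hv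
  have hrepr : ∀ t : T, t = ∑ i : Fin n, bT.repr t i • bT i := fun t => (Module.Basis.sum_repr bT t).symm
  have hmk_sum : ∀ c : Fin n → S, mkT (∑ i : Fin n, c i • bT i) = ∑ i : Fin n, mkS (c i) • v i := by
    intro c
    rw [map_sum]
    refine Finset.sum_congr rfl fun i _ => ?_
    rw [hsmulmk, Algebra.smul_def]
  have hli : LinearIndependent (S ⧸ Ideal.span {π}) v := by
    rw [Fintype.linearIndependent_iff]
    intro g hg i
    choose c hc using fun i => Ideal.Quotient.mk_surjective (g i)
    have h1 : mkT (∑ i : Fin n, c i • bT i) = 0 := by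
      rw [hmk_sum]
      rw [show (∑ i : Fin n, mkS (c i) • v i) = ∑ i : Fin n, g i • v i from
        Finset.sum_congr rfl fun j _ => by rw [hc j]]
      exact hg
    rw [hmkT, Ideal.Quotient.eq_zero_iff_mem, Ideal.mem_span_singleton] at h1
    obtain ⟨u, hu⟩ := h1
    have h2 : ∑ j : Fin n, (c j - π * bT.repr u j) • bT j = 0 := by
      simp only [sub_smul]
      rw [Finset.sum_sub_distrib]
      have h3 : ∑ j : Fin n, (π * bT.repr u j) • bT j = π' * u := by
        calc ∑ j : Fin n, (π * bT.repr u j) • bT j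
            = π • ∑ j : Fin n, bT.repr u j • bT j := by
              rw [Finset.smul_sum]
              exact Finset.sum_congr rfl fun j _ => (smul_smul π _ _).symm
          _ = π • u := by rw [← hrepr u]
          _ = π' * u := Algebra.smul_def π u
      rw [h3, ← hu, sub_self]
    have h4 := Fintype.linearIndependent_iff.mp bT.linearIndependent _ h2 i
    rw [← hc i]
    exact Ideal.Quotient.eq_zero_iff_mem.mpr
      (Ideal.mem_span_singleton.mpr ⟨bT.repr u i, sub_eq_zero.mp h4⟩)
  have hspanv : ⊤ ≤ Submodule.span (S ⧸ Ideal.span {π}) (Set.range v) := by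
    intro y _
    obtain ⟨t, rfl⟩ := Ideal.Quotient.mk_surjective y
    rw [show Ideal.Quotient.mk (Ideal.span {π'}) t = mkT t from rfl]
    rw [hrepr t, hmk_sum]
    exact Submodule.sum_mem _ fun i _ => Submodule.smul_mem _ _ (Submodule.subset_span ⟨i, rfl⟩)
  set bF : Module.Basis (Fin n) (S ⧸ Ideal.span {π}) (T ⧸ Ideal.span {π'}) := Module.Basis.mk hli hspanv with hbF
  haveI : FiniteDimensional (S ⧸ Ideal.span {π}) (T ⧸ Ideal.span {π'}) := Module.Finite.of_basis bF
  have hfrk : Module.finrank (S ⧸ Ideal.span {π}) (T ⧸ Ideal.span {π'}) = n := by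
    rw [Module.finrank_eq_card_basis bF, Fintype.card_fin]
  set H := Subgroup.zpowers σb with hH
  letI : DecidablePred (· ∈ H) := Classical.decPred _
  have hfixrank : Module.finrank (IntermediateField.fixedField H) (T ⧸ Ideal.span {π'}) = n := by
    rw [IntermediateField.finrank_fixedField_eq_card, hH,
      Nat.card_zpowers, hordσb]
  have htower := Module.finrank_mul_finrank (S ⧸ Ideal.span {π})
    (IntermediateField.fixedField H) (T ⧸ Ideal.span {π'})
  rw [hfixrank, hfrk] at htower
  have hK1 : Module.finrank (S ⧸ Ideal.span {π}) (IntermediateField.fixedField H) = 1 :=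
    Nat.eq_of_mul_eq_mul_right (m := n) (by omega) (by rw [one_mul]; exact htower)
  set σl := σb.toLinearMap with hσl
  have hfixsub : LinearMap.ker (σl - LinearMap.id) =
      Subalgebra.toSubmodule (IntermediateField.fixedField H).toSubalgebra := by
    ext z
    simp only [LinearMap.mem_ker, LinearMap.sub_apply, LinearMap.id_apply, sub_eq_zero,
      Subalgebra.mem_toSubmodule, IntermediateField.mem_toSubalgebra]
    constructor
    · intro hz g
      have hsub : H ≤ MulAction.stabilizer _ z := by
        rw [hH, Subgroup.zpowers_le, MulAction.mem_stabilizer_iff]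
        exact hz
      exact (MulAction.mem_stabilizer_iff).mp (hsub g.2)
    · intro hz
      exact hz ⟨σb, Subgroup.mem_zpowers σb⟩
  have hfixfr : Module.finrank (S ⧸ Ideal.span {π}) (LinearMap.ker (σl - LinearMap.id)) = 1 := by
    rw [hfixsub]
    exact hK1
  have hrangefr := LinearMap.finrank_range_add_finrank_ker (σl - LinearMap.id)
  rw [hfrk, hfixfr] at hrangefr
  set Trb : (T ⧸ Ideal.span {π'}) →ₗ[S ⧸ Ideal.span {π}] (T ⧸ Ideal.span {π'}) :=
    ∑ i ∈ Finset.range n, (σb ^ i).toLinearMap with hTrb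
  have hTrbapp : ∀ z, Trb z = ∑ i ∈ Finset.range n, (σb ^ i) z := by
    intro z
    rw [hTrb, LinearMap.coe_sum, Finset.sum_apply]
    simp
  have hTrbmk : ∀ t : T, Trb (mkT t) = mkT (Tr t) := by
    intro t
    rw [hTrbapp, hTrapp, map_sum]
    exact Finset.sum_congr rfl fun i _ => hpowb i t
  have key : ∀ i j : ℕ, i < j → j < n → σb ^ i = σb ^ j → False := by
    intro i j hij hjn heq
    have h1 : σb ^ (j - i) * σb ^ i = σb ^ j := by rw [← pow_add, Nat.sub_add_cancel hij.le]
    have h2 : σb ^ (j - i) * σb ^ i = 1 * σb ^ i := by rw [h1, ← heq, one_mul]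
    exact hσbne (j - i) (by omega) (by omega) (mul_right_cancel h2)
  have hDed : Trb ≠ 0 := by
    intro h0
    set f : Fin n → ((T ⧸ Ideal.span {π'}) →* (T ⧸ Ideal.span {π'})) :=
      fun i => (σb ^ (i : ℕ)).toAlgHom.toRingHom.toMonoidHom with hf
    have hfinj : Function.Injective f := by
      intro i j hij
      have heq : (σb ^ (i : ℕ)) = (σb ^ (j : ℕ)) :=
        AlgEquiv.ext fun z => DFunLike.congr_fun hij z
      rcases lt_trichotomy (i : ℕ) (j : ℕ) with h | h | h
      · exact absurd heq fun heq => key _ _ h j.2 heq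
      · exact Fin.ext h
      · exact absurd heq.symm fun heq => key _ _ h i.2 heq
    have hLI := (linearIndependent_monoidHom (T ⧸ Ideal.span {π'}) (T ⧸ Ideal.span {π'})).comp
      f hfinj
    have hzero : ∑ i : Fin n, (1 : T ⧸ Ideal.span {π'}) •
        ((fun g : (T ⧸ Ideal.span {π'}) →* (T ⧸ Ideal.span {π'}) => ⇑g) ∘ f) i = 0 := by
      funext z
      simp only [Finset.sum_apply, Pi.smul_apply, one_smul, Function.comp_apply, Pi.zero_apply]
      have h1 : ∑ i : Fin n, f i z = ∑ i ∈ Finset.range n, (σb ^ i) z :=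
        (Finset.sum_range fun i => (σb ^ i) z).symm
      rw [h1, ← hTrbapp, h0, LinearMap.zero_apply]
    have h2 := Fintype.linearIndependent_iff.mp hLI (fun _ => 1) hzero ⟨0, by omega⟩
    exact one_ne_zero h2
  have hTrr := LinearMap.finrank_range_add_finrank_ker Trb
  rw [hfrk] at hTrr
  have hz : ∃ z, Trb z ≠ 0 := by
    by_contra h
    push_neg at h
    exact hDed (LinearMap.ext fun z => h z)
  obtain ⟨z0, hz0⟩ := hz
  have hrne : LinearMap.range Trb ≠ ⊥ := by
    intro h
    apply hz0
    have h1 : Trb z0 ∈ LinearMap.range Trb := LinearMap.mem_range_self Trb z0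
    rw [h] at h1
    simpa using h1
  have hrpos : 0 < Module.finrank (S ⧸ Ideal.span {π}) (LinearMap.range Trb) := by
    rcases Nat.eq_zero_or_pos (Module.finrank (S ⧸ Ideal.span {π}) (LinearMap.range Trb)) with h | h
    · exact absurd (Submodule.finrank_eq_zero.mp h) hrne
    · exact h
  have hTrσ : ∀ z, Trb (σb z) = Trb z := by
    intro z
    rw [hTrbapp, hTrbapp]
    have h1 : ∀ i : ℕ, (σb ^ i) (σb z) = (σb ^ (i + 1)) z := fun i => by
      rw [pow_succ, AlgEquiv.mul_apply]
    calc ∑ i ∈ Finset.range n, (σb ^ i) (σb z) = ∑ i ∈ Finset.range n, (σb ^ (i + 1)) z :=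
        Finset.sum_congr rfl fun i _ => h1 i
      _ = ∑ i ∈ Finset.range n, (σb ^ i) z := by
        have h2 := Finset.sum_range_succ' (fun i => (σb ^ i) z) n
        have h3 := Finset.sum_range_succ (fun i => (σb ^ i) z) n
        rw [h3] at h2
        have h4 : (σb ^ n) z = (σb ^ 0) z := by rw [hσbn, pow_zero]
        rw [h4] at h2
        exact (add_right_cancel h2).symm
  have hrle : LinearMap.range (σl - LinearMap.id) ≤ LinearMap.ker Trb := by
    rintro z ⟨w, rfl⟩
    rw [LinearMap.mem_ker, LinearMap.sub_apply, LinearMap.id_apply, map_sub]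
    rw [show σl w = σb w from rfl, hTrσ, sub_self]
  have hkereq : LinearMap.ker Trb = LinearMap.range (σl - LinearMap.id) :=
    (Submodule.eq_of_le_of_finrank_le hrle (by omega)).symm
  have hfixedeq : LinearMap.ker (σl - LinearMap.id) =
      LinearMap.range (Algebra.linearMap (S ⧸ Ideal.span {π}) (T ⧸ Ideal.span {π'})) := by
    have hle1 : LinearMap.range (Algebra.linearMap (S ⧸ Ideal.span {π}) (T ⧸ Ideal.span {π'}))
        ≤ LinearMap.ker (σl - LinearMap.id) := by
      rintro z ⟨c, rfl⟩
      rw [LinearMap.mem_ker, LinearMap.sub_apply, LinearMap.id_apply, sub_eq_zero]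
      exact σb.commutes c
    refine (Submodule.eq_of_le_of_finrank_le hle1 ?_).symm
    rw [hfixfr]
    have hne : LinearMap.range (Algebra.linearMap (S ⧸ Ideal.span {π}) (T ⧸ Ideal.span {π'}))
        ≠ ⊥ := by
      intro h
      have h1 : (1 : T ⧸ Ideal.span {π'}) ∈
          LinearMap.range (Algebra.linearMap (S ⧸ Ideal.span {π}) (T ⧸ Ideal.span {π'})) :=
        ⟨1, by simp⟩
      rw [h, Submodule.mem_bot] at h1
      exact one_ne_zero h1
    rcases Nat.eq_zero_or_pos (Module.finrank (S ⧸ Ideal.span {π})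
      (LinearMap.range (Algebra.linearMap (S ⧸ Ideal.span {π}) (T ⧸ Ideal.span {π'})))) with h | h
    · exact absurd (Submodule.finrank_eq_zero.mp h) hne
    · omega
  -- T-level arguments
  set Fsub : Submodule S T := LinearMap.ker (σ.toLinearMap - LinearMap.id) with hFsubdef
  have hFsub_mem : ∀ t : T, t ∈ Fsub ↔ σ t = t := by
    intro t
    rw [hFsubdef, LinearMap.mem_ker, LinearMap.sub_apply, LinearMap.id_apply, sub_eq_zero]
    exact Iff.rfl
  haveI : IsNoetherian S T := isNoetherian_of_isNoetherianRing_of_finite S T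
  have hjac : Ideal.span {π} ≤ (⊥ : Ideal S).jacobson := by
    rw [IsLocalRing.jacobson_eq_maximalIdeal ⊥ bot_ne_top, Ideal.span_singleton_le_iff_mem]
    exact (IsLocalRing.mem_maximalIdeal π).mpr hπ.not_isUnit
  have hstep : Fsub ≤ LinearMap.range (Algebra.linearMap S T) ⊔ Ideal.span {π} • Fsub := by
    intro f hf
    have hσf : σ f = f := (hFsub_mem f).mp hf
    have h1 : mkT f ∈ LinearMap.range (Algebra.linearMap (S ⧸ Ideal.span {π})
        (T ⧸ Ideal.span {π'})) := by
      rw [← hfixedeq, LinearMap.mem_ker, LinearMap.sub_apply, LinearMap.id_apply, sub_eq_zero]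
      rw [show σl (mkT f) = σb (mkT f) from rfl, σb_mk, hσf]
    obtain ⟨cb, hcb⟩ := h1
    obtain ⟨c, rfl⟩ := Ideal.Quotient.mk_surjective cb
    rw [show Ideal.Quotient.mk (Ideal.span {π}) c = mkS c from rfl] at hcb
    rw [show Algebra.linearMap (S ⧸ Ideal.span {π}) (T ⧸ Ideal.span {π'}) (mkS c)
      = algebraMap (S ⧸ Ideal.span {π}) (T ⧸ Ideal.span {π'}) (mkS c) from rfl, halgmk] at hcb
    have h2 : mkT (f - algebraMap S T c) = 0 := by rw [map_sub, hcb, sub_self]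
    rw [hmkT, Ideal.Quotient.eq_zero_iff_mem, Ideal.mem_span_singleton] at h2
    obtain ⟨m, hm⟩ := h2
    have hσm : σ m = m := by
      have h4 := congrArg σ hm
      rw [map_sub, hσf, map_mul, show σ π' = π' from σ.commutes π,
        show σ (algebraMap S T c) = algebraMap S T c from σ.commutes c] at h4
      have h3 : π' * σ m = π' * m := by rw [← h4, hm]
      exact mul_left_cancel₀ hπ'0 h3
    have hfeq : f = algebraMap S T c + π • m := by
      rw [Algebra.smul_def, ← hm]
      ring
    rw [hfeq]
    refine Submodule.add_mem_sup ⟨c, rfl⟩ ?_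
    rw [Submodule.ideal_span_singleton_smul]
    exact Submodule.smul_mem_pointwise_smul m π Fsub ((hFsub_mem m).mpr hσm)
  have hFle : Fsub ≤ LinearMap.range (Algebra.linearMap S T) :=
    Submodule.le_of_le_smul_of_le_jacobson_bot (IsNoetherian.noetherian Fsub) hjac hstep
  have hshift : ∀ t : T, ∑ i ∈ Finset.range n, (σ ^ (i + 1)) t = ∑ i ∈ Finset.range n, (σ ^ i) t := by
    intro t
    have h2 := Finset.sum_range_succ' (fun i => (σ ^ i) t) n
    have h3 := Finset.sum_range_succ (fun i => (σ ^ i) t) n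
    rw [h3] at h2
    have h4 : (σ ^ n) t = (σ ^ 0) t := by rw [hσn, pow_zero]
    rw [h4] at h2
    exact (add_right_cancel h2).symm
  have hTshift : ∀ t : T, Tr (σ t) = Tr t := by
    intro t
    rw [hTrapp, hTrapp, ← hshift t]
    exact Finset.sum_congr rfl fun i _ => by rw [pow_succ, AlgEquiv.mul_apply]
  have hTrfix : ∀ t : T, σ (Tr t) = Tr t := by
    intro t
    rw [hTrapp, map_sum, ← hshift t]
    exact Finset.sum_congr rfl fun i _ => by rw [pow_succ', AlgEquiv.mul_apply]
  have hTrπ : ∀ m : T, Tr (π' * m) = π' * Tr m := by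
    intro m
    rw [hTrapp, hTrapp, Finset.mul_sum]
    refine Finset.sum_congr rfl fun i _ => ?_
    rw [map_mul, show (σ ^ i) π' = π' from (σ ^ i).commutes π]
  refine ⟨?_, ?_, ?_⟩
  · intro t
    exact hFle ((hFsub_mem (Tr t)).mpr (hTrfix t))
  · obtain ⟨a, rfl⟩ := Ideal.Quotient.mk_surjective z0
    rw [show Ideal.Quotient.mk (Ideal.span {π'}) a = mkT a from rfl, hTrbmk] at hz0
    have h1 : Tr a ∉ Ideal.span {π'} := fun h =>
      hz0 (by rwa [hmkT, Ideal.Quotient.eq_zero_iff_mem])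
    obtain ⟨s, hs⟩ := hFle ((hFsub_mem (Tr a)).mpr (hTrfix a))
    have hsu : IsUnit s := by
      by_contra hsu
      apply h1
      have hsm : s ∈ Ideal.span {π} := by
        rw [IsLocalRing.eq_maximalIdeal hmaxS]
        exact (IsLocalRing.mem_maximalIdeal s).mpr hsu
      rw [Ideal.mem_span_singleton] at hsm
      obtain ⟨w, hw⟩ := hsm
      rw [← hs, show Algebra.linearMap S T s = algebraMap S T s from rfl, hw, map_mul]
      exact Ideal.mem_span_singleton.mpr ⟨algebraMap S T w, rfl⟩
    obtain ⟨u, hu⟩ := hsu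
    refine ⟨((u⁻¹ : Sˣ) : S) • a, ?_⟩
    rw [map_smul, ← hs, show Algebra.linearMap S T s = algebraMap S T s from rfl,
      Algebra.smul_def, ← map_mul, ← hu, Units.inv_mul, map_one]
  · intro k hk
    have h1 : mkT k ∈ LinearMap.ker Trb := by rw [LinearMap.mem_ker, hTrbmk, hk, map_zero]
    rw [hkereq] at h1
    obtain ⟨w, hw⟩ := h1
    obtain ⟨t, rfl⟩ := Ideal.Quotient.mk_surjective w
    rw [show Ideal.Quotient.mk (Ideal.span {π'}) t = mkT t from rfl] at hw
    rw [LinearMap.sub_apply, LinearMap.id_apply, show σl (mkT t) = σb (mkT t) from rfl,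
      σb_mk] at hw
    have hw2 : mkT (σ t - t) = mkT k := by rw [map_sub]; exact hw
    rw [hmkT, Ideal.Quotient.eq] at hw2
    obtain ⟨m, hm⟩ := Ideal.mem_span_singleton.mp hw2
    refine ⟨t, -m, ?_, ?_⟩
    · rw [mul_neg]
      linear_combination -hm
    · have h4 : Tr (σ t - t - k) = π' * Tr m := by rw [hm, hTrπ]
      rw [map_sub, map_sub, hTshift, hk, sub_zero, sub_self] at h4
      have h5 : Tr m = 0 := by
        rcases mul_eq_zero.mp h4.symm with h | h
        · exact absurd h hπ'0
        · exact h
      rw [map_neg, h5, neg_zero]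
set_option maxHeartbeats 1600000 in
theorem statement12
    (S : Type*) [CommRing S] [IsDomain S] [IsDiscreteValuationRing S]
    (π : S) (hπ : Irreducible π)
    [IsAdicComplete (Ideal.span {π}) S] [Finite (S ⧸ Ideal.span {π})]
    (T : Type*) [CommRing T] [IsDomain T] [IsDiscreteValuationRing T]
    [Algebra S T] [Module.Free S T]
    (n : ℕ) (hn : 1 ≤ n) (hrank : Module.finrank S T = n)
    (hmax : IsLocalRing.maximalIdeal T = Ideal.span {algebraMap S T π})
    (σ : T ≃ₐ[S] T) (hσn : σ ^ n = 1)
    (hgen : ∀ i : ℕ, 0 < i → i < n →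
      ∃ t : T, (σ ^ i) t - t ∉ Ideal.span {algebraMap S T π}) 
    (A : Type*) [Ring A] [Algebra S A]
    (ι : T →+* A) (hι : Function.Injective ι)
    (hcomp : ∀ s : S, algebraMap S A s = ι (algebraMap S T s))
    (x : A) (hx : x ^ n = ι (algebraMap S T π))
    (hcommute : ∀ t : T, x * ι t = ι (σ t) * x)
    (hbasis : ∀ a : A, ∃! c : Fin n → T, a = ∑ i : Fin n, ι (c i) * x ^ (i : ℕ)) :
    (Submodule.span S {y : A | ∃ a b : A, y = a * b - b * a} : Set A) =
      (AddSubgroup.closure {y : A | ∃ a b : A, y = a * b - b * a} : Set A) ∧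
    Nonempty ((A ⧸ Submodule.span S {y : A | ∃ a b : A, y = a * b - b * a}) ≃ₗ[S]
      T ⧸ (π • LinearMap.ker (∑ i ∈ Finset.range n, (σ ^ i).toLinearMap))) ∧
    Nonempty ((A ⧸ Submodule.span S {y : A | ∃ a b : A, y = a * b - b * a}) ≃ₗ[S]
      S × (Fin (n - 1) → S ⧸ Ideal.span {π})) := by
  classical
  haveI : NeZero n := ⟨by omega⟩
  obtain ⟨haux1, ⟨e₀, he₀⟩, haux3⟩ := aux_residue hπ hn hrank hmax σ hσn hgen
  set π' : T := algebraMap S T π with hπ'def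
  set Tr : T →ₗ[S] T := ∑ i ∈ Finset.range n, (σ ^ i).toLinearMap with hTrdef
  have hTrapp : ∀ t : T, Tr t = ∑ i ∈ Finset.range n, (σ ^ i) t := by
    intro t
    rw [hTrdef, LinearMap.coe_sum, Finset.sum_apply]
    simp
  set gens : Set A := {y : A | ∃ a b : A, y = a * b - b * a} with hgens
  set C : Submodule S A := Submodule.span S gens with hC
  have hsmulA : ∀ (s : S) (a : A), s • a = ι (algebraMap S T s) * a := by
    intro s a
    rw [Algebra.smul_def, hcomp]
  have hsmul_gen : ∀ (s : S) (y : A), y ∈ gens → s • y ∈ gens := by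
    rintro s y ⟨a, b, rfl⟩
    exact ⟨s • a, b, by rw [smul_sub, smul_mul_assoc, mul_smul_comm]⟩
  have part1 : (C : Set A) = (AddSubgroup.closure gens : Set A) := by
    apply le_antisymm
    · intro y hy
      refine Submodule.span_induction ?_ ?_ ?_ ?_ hy
      · exact fun z hz => AddSubgroup.subset_closure hz
      · exact AddSubgroup.zero_mem _
      · exact fun a b _ _ ha hb => AddSubgroup.add_mem _ ha hb
      · intro s a _ ha
        refine AddSubgroup.closure_induction ?_ ?_ ?_ ?_ ha
        · exact fun z hz => AddSubgroup.subset_closure (hsmul_gen s z hz)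
        · rw [smul_zero]; exact AddSubgroup.zero_mem _
        · intro u w _ _ hu hw
          rw [smul_add]; exact AddSubgroup.add_mem _ hu hw
        · intro u _ hu
          rw [smul_neg]; exact AddSubgroup.neg_mem _ hu
    · have h1 : AddSubgroup.closure gens ≤ C.toAddSubgroup :=
        (AddSubgroup.closure_le _).mpr Submodule.subset_span
      exact fun y hy => h1 hy
  -- commutation
  have hcommpow : ∀ (m : ℕ) (t : T), x ^ m * ι t = ι ((σ ^ m) t) * x ^ m := by
    intro m
    induction m with
    | zero => intro t; simp
    | succ j ih =>
      intro t
      have h1 : x ^ (j + 1) * ι t = x ^ j * (x * ι t) := by rw [pow_succ, mul_assoc]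
      have h2 : (σ ^ j) (σ t) = (σ ^ (j + 1)) t := by rw [pow_succ, AlgEquiv.mul_apply]
      rw [h1, hcommute, ← mul_assoc, ih, h2, mul_assoc, ← pow_succ]
  set Φ : (Fin n → T) →ₗ[S] A :=
    { toFun := fun c => ∑ i : Fin n, ι (c i) * x ^ (i : ℕ)
      map_add' := by
        intro c d
        rw [← Finset.sum_add_distrib]
        exact Finset.sum_congr rfl fun i _ => by rw [Pi.add_apply, map_add, add_mul]
      map_smul' := by
        intro s c
        show (∑ i : Fin n, ι ((s • c) i) * x ^ (i : ℕ))
            = (RingHom.id S) s • ∑ i : Fin n, ι (c i) * x ^ (i : ℕ)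
        rw [RingHom.id_apply, Finset.smul_sum]
        refine Finset.sum_congr rfl fun i _ => ?_
        rw [hsmulA, Pi.smul_apply, Algebra.smul_def, map_mul, mul_assoc] } with hΦdef
  have hΦapp : ∀ c : Fin n → T, Φ c = ∑ i : Fin n, ι (c i) * x ^ (i : ℕ) := fun c => rfl
  have hΦbij : Function.Bijective Φ := by
    constructor
    · intro c d hcd
      obtain ⟨c', hc', huniq⟩ := hbasis (Φ c)
      have h1 : c = c' := huniq c (hΦapp c)
      have h2 : d = c' := huniq d (hcd.trans (hΦapp d))
      rw [h1, h2]
    · intro a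
      obtain ⟨c, hc, -⟩ := hbasis a
      exact ⟨c, hc.symm⟩
  set eA : (Fin n → T) ≃ₗ[S] A := LinearEquiv.ofBijective Φ hΦbij with heA
  set φ0 : A →ₗ[S] T := (LinearMap.proj (0 : Fin n)) ∘ₗ (eA.symm : A →ₗ[S] (Fin n → T))
    with hφ0def
  have hφ0apply : ∀ a : A, φ0 a = eA.symm a 0 := fun a => rfl
  have hcoord : ∀ (k : ℕ) (hk : k < n) (t : T),
      eA.symm (ι t * x ^ k) = Pi.single (⟨k, hk⟩ : Fin n) t := by
    intro k hk t
    have h1 : Φ (Pi.single (⟨k, hk⟩ : Fin n) t) = ι t * x ^ k := by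
      rw [hΦapp, Finset.sum_eq_single (⟨k, hk⟩ : Fin n)]
      · rw [Pi.single_eq_same]
      · intro b _ hb
        rw [Pi.single_eq_of_ne hb, map_zero, zero_mul]
      · intro hb
        exact absurd (Finset.mem_univ _) hb
    rw [← h1]
    exact eA.symm_apply_apply _
  have hsmall : ∀ (k : ℕ), k < n → ∀ t : T, φ0 (ι t * x ^ k) = if k = 0 then t else 0 := by
    intro k hk t
    rw [hφ0apply, hcoord k hk t]
    rcases Nat.eq_zero_or_pos k with h2 | h2
    · subst h2
      rw [if_pos rfl]
      rw [show (0 : Fin n) = (⟨0, hk⟩ : Fin n) from rfl, Pi.single_eq_same]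
    · rw [if_neg (by omega)]
      have hne : (0 : Fin n) ≠ (⟨k, hk⟩ : Fin n) := by
        intro h
        have h3 := congrArg Fin.val h
        simp only [Fin.val_zero] at h3
        omega
      rw [Pi.single_eq_of_ne hne]
  have hφ0x : ∀ (k : ℕ), k < 2 * n → ∀ t : T,
      φ0 (ι t * x ^ k) = if k = 0 then t else if k = n then π' * t else 0 := by
    intro k hk t
    by_cases h1 : k < n
    · rw [hsmall k h1 t]
      rcases Nat.eq_zero_or_pos k with h2 | h2
      · subst h2
        rw [if_pos rfl, if_pos rfl]
      · rw [if_neg (by omega), if_neg (by omega), if_neg (by omega)]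
    · have h2 : k - n < n := by omega
      have h3 : ι t * x ^ k = ι (π' * t) * x ^ (k - n) := by
        have h4 : x ^ k = x ^ (k - n) * x ^ n := by
          rw [← pow_add]
          congr 1
          omega
        rw [h4, hx, hcommpow, show (σ ^ (k - n)) π' = π' from (σ ^ (k - n)).commutes π,
          ← mul_assoc, ← map_mul, mul_comm t π']
      rw [h3, hsmall (k - n) h2 (π' * t)]
      by_cases h5 : k = n
      · subst h5
        rw [if_pos (by omega), if_neg (by omega), if_pos rfl]
      · rw [if_neg (by omega), if_neg (by omega), if_neg h5]
  have hmono : ∀ (t u : T) (i j : ℕ),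
      (ι t * x ^ i) * (ι u * x ^ j) = ι (t * (σ ^ i) u) * x ^ (i + j) := by
    intro t u i j
    rw [mul_assoc, ← mul_assoc (x ^ i), hcommpow, mul_assoc, ← mul_assoc (ι t), ← map_mul,
      ← pow_add]
  set κ : Submodule S T := LinearMap.ker Tr with hκdef
  set D : Submodule S T := π • κ with hDdef
  have hmemD : ∀ y : T, y ∈ D ↔ ∃ k, Tr k = 0 ∧ π • k = y := by
    intro y
    constructor
    · intro h
      have h1 : y ∈ π • (κ : Set T) := by
        rw [← Submodule.coe_pointwise_smul]
        exact h
      obtain ⟨k, hk, rfl⟩ := Set.mem_smul_set.mp h1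
      exact ⟨k, LinearMap.mem_ker.mp hk, rfl⟩
    · rintro ⟨k, hk, rfl⟩
      exact Submodule.smul_mem_pointwise_smul k π κ (LinearMap.mem_ker.mpr hk)
  set F : A →ₗ[S] (T ⧸ D) := D.mkQ ∘ₗ φ0 with hFdef
  -- trace identities
  have hshift : ∀ t : T, ∑ i ∈ Finset.range n, (σ ^ (i + 1)) t
      = ∑ i ∈ Finset.range n, (σ ^ i) t := by
    intro t
    have h2 := Finset.sum_range_succ' (fun i => (σ ^ i) t) n
    have h3 := Finset.sum_range_succ (fun i => (σ ^ i) t) n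
    rw [h3] at h2
    have h4 : (σ ^ n) t = (σ ^ 0) t := by rw [hσn, pow_zero]
    rw [h4] at h2
    exact (add_right_cancel h2).symm
  have hTshift : ∀ t : T, Tr (σ t) = Tr t := by
    intro t
    rw [hTrapp, hTrapp, ← hshift t]
    exact Finset.sum_congr rfl fun i _ => by rw [pow_succ, AlgEquiv.mul_apply]
  have hTrσm : ∀ (m : ℕ) (t : T), Tr ((σ ^ m) t) = Tr t := by
    intro m
    induction m with
    | zero => intro t; simp
    | succ j ih =>
      intro t
      have h1 : (σ ^ (j + 1)) t = (σ ^ j) (σ t) := by rw [pow_succ, AlgEquiv.mul_apply]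
      rw [h1, ih, hTshift]
  have hTr0 : ∀ (i j : ℕ), i + j = n → ∀ (t u : T),
      Tr (t * (σ ^ i) u - u * (σ ^ j) t) = 0 := by
    intro i j hij t u
    rw [map_sub]
    have h1 : Tr (u * (σ ^ j) t) = Tr (t * (σ ^ i) u) := by
      rw [← hTrσm i (u * (σ ^ j) t)]
      congr 1
      rw [map_mul, show (σ ^ i) ((σ ^ j) t) = t from by
        rw [← AlgEquiv.mul_apply, ← pow_add, hij, hσn, AlgEquiv.one_apply]]
      exact mul_comm _ _
    rw [h1, sub_self]
  have hgensub : ∀ y ∈ gens, φ0 y ∈ D := by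
    rintro y ⟨a, b, rfl⟩
    have hprod : ∀ c d : Fin n → T, φ0 (Φ c * Φ d) = ∑ i : Fin n, ∑ j : Fin n,
        φ0 (ι (c i * (σ ^ (i : ℕ)) (d j)) * x ^ ((i : ℕ) + (j : ℕ))) := by
      intro c d
      rw [hΦapp, hΦapp, Finset.sum_mul_sum, map_sum]
      refine Finset.sum_congr rfl fun i _ => ?_
      rw [map_sum]
      exact Finset.sum_congr rfl fun j _ => by rw [hmono]
    have ha : a = Φ (eA.symm a) := (eA.apply_symm_apply a).symm
    have hb : b = Φ (eA.symm b) := (eA.apply_symm_apply b).symm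
    set c : Fin n → T := eA.symm a with hc
    set d : Fin n → T := eA.symm b with hd
    rw [map_sub, ha, hb, hprod, hprod]
    rw [show (∑ i : Fin n, ∑ j : Fin n,
          φ0 (ι (d i * (σ ^ (i : ℕ)) (c j)) * x ^ ((i : ℕ) + (j : ℕ))))
        = ∑ i : Fin n, ∑ j : Fin n,
          φ0 (ι (d j * (σ ^ (j : ℕ)) (c i)) * x ^ ((j : ℕ) + (i : ℕ))) from Finset.sum_comm]
    rw [← Finset.sum_sub_distrib]
    refine Submodule.sum_mem _ fun i _ => ?_
    rw [← Finset.sum_sub_distrib]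
    refine Submodule.sum_mem _ fun j _ => ?_
    rw [hφ0x ((i : ℕ) + (j : ℕ)) (by have := i.2; have := j.2; omega) _,
      hφ0x ((j : ℕ) + (i : ℕ)) (by have := i.2; have := j.2; omega) _]
    by_cases hij0 : (i : ℕ) + (j : ℕ) = 0
    · rw [if_pos hij0, if_pos (by omega)]
      have hi0 : (i : ℕ) = 0 := by omega
      have hj0 : (j : ℕ) = 0 := by omega
      rw [hi0, hj0, pow_zero, AlgEquiv.one_apply, AlgEquiv.one_apply,
        mul_comm (c i) (d j), sub_self]
      exact Submodule.zero_mem D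
    · by_cases hijn : (i : ℕ) + (j : ℕ) = n
      · rw [if_neg hij0, if_neg (show ¬((j : ℕ) + (i : ℕ) = 0) by omega),
          if_pos hijn, if_pos (show (j : ℕ) + (i : ℕ) = n by omega), ← mul_sub]
        refine (hmemD _).mpr ⟨c i * (σ ^ (i : ℕ)) (d j) - d j * (σ ^ (j : ℕ)) (c i),
          hTr0 _ _ hijn (c i) (d j), ?_⟩
        rw [Algebra.smul_def]
      · rw [if_neg hij0, if_neg hijn, if_neg (show ¬((j : ℕ) + (i : ℕ) = 0) by omega),
          if_neg (show ¬((j : ℕ) + (i : ℕ) = n) by omega), sub_self]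
        exact Submodule.zero_mem D
  have hCleF : C ≤ LinearMap.ker F := by
    rw [hC, Submodule.span_le]
    intro y hy
    rw [SetLike.mem_coe, LinearMap.mem_ker, hFdef, LinearMap.comp_apply, Submodule.mkQ_apply,
      Submodule.Quotient.mk_eq_zero]
    exact hgensub y hy
  -- reverse inclusion pieces
  have hhigh : ∀ (i : ℕ), 0 < i → i < n → ∀ t : T, ι t * x ^ i ∈ C := by
    intro i hi1 hi2 t
    obtain ⟨u, hu⟩ := hgen i hi1 hi2
    have hv : IsUnit ((σ ^ i) u - u) := by
      by_contra hnu
      apply hu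
      rw [← hmax]
      exact (IsLocalRing.mem_maximalIdeal _).mpr (mem_nonunits_iff.mpr hnu)
    obtain ⟨w, hw⟩ := hv.exists_right_inv
    have hcomm1 : (ι (t * w) * x ^ i) * ι u - ι u * (ι (t * w) * x ^ i) = ι t * x ^ i := by
      have e1 : (ι (t * w) * x ^ i) * ι u = ι (t * w * (σ ^ i) u) * x ^ i := by
        rw [mul_assoc, hcommpow, ← mul_assoc, ← map_mul]
      have e2 : ι u * (ι (t * w) * x ^ i) = ι (u * (t * w)) * x ^ i := by
        rw [← mul_assoc, ← map_mul]
      rw [e1, e2, ← sub_mul, ← map_sub]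
      congr 2
      linear_combination t * hw
    exact Submodule.subset_span ⟨ι (t * w) * x ^ i, ι u, hcomm1.symm⟩
  set g : T →ₗ[S] A :=
    { toFun := fun m => ι (π' * m)
      map_add' := fun a b => by
        show ι (π' * (a + b)) = ι (π' * a) + ι (π' * b)
        rw [mul_add, map_add]
      map_smul' := fun s a => by
        show ι (π' * (s • a)) = (RingHom.id S) s • ι (π' * a)
        rw [RingHom.id_apply, hsmulA, ← map_mul, Algebra.smul_def]
        congr 1
        ring } with hgdef
  have hgapp : ∀ m : T, g m = ι (π' * m) := fun m => rfl
  have hgenC : ∀ t : T, g (σ t - t) ∈ C := by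
    intro t
    have e1 : x * (ι t * x ^ (n - 1)) = ι (σ t) * x ^ n := by
      rw [← mul_assoc, hcommute, mul_assoc, ← pow_succ', show n - 1 + 1 = n from by omega]
    have e2 : (ι t * x ^ (n - 1)) * x = ι t * x ^ n := by
      rw [mul_assoc, ← pow_succ, show n - 1 + 1 = n from by omega]
    refine Submodule.subset_span ⟨x, ι t * x ^ (n - 1), ?_⟩
    rw [hgapp, e1, e2, hx, ← map_mul, ← map_mul, ← map_sub]
    congr 1
    ring
  haveI : Module.Finite S T := Module.finite_of_finrank_pos (by omega)
  haveI : IsNoetherian S T := isNoetherian_of_isNoetherianRing_of_finite S T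
  have hjac : Ideal.span {π} ≤ (⊥ : Ideal S).jacobson := by
    rw [IsLocalRing.jacobson_eq_maximalIdeal ⊥ bot_ne_top, Ideal.span_singleton_le_iff_mem]
    exact (IsLocalRing.mem_maximalIdeal π).mpr hπ.not_isUnit
  have hκ_le : κ ≤ Submodule.comap g C := by
    have hstep : κ ≤ Submodule.comap g C ⊔ Ideal.span {π} • κ := by
      intro k hk
      obtain ⟨t, m, hkm, hTrm⟩ := haux3 k (LinearMap.mem_ker.mp hk)
      rw [hkm]
      refine Submodule.add_mem_sup (Submodule.mem_comap.mpr (hgenC t)) ?_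
      rw [Submodule.ideal_span_singleton_smul,
        show π' * m = π • m from (Algebra.smul_def π m).symm]
      exact Submodule.smul_mem_pointwise_smul m π κ (LinearMap.mem_ker.mpr hTrm)
    exact Submodule.le_of_le_smul_of_le_jacobson_bot (IsNoetherian.noetherian κ) hjac hstep
  have hkerF_le : LinearMap.ker F ≤ C := by
    intro a ha
    rw [LinearMap.mem_ker, hFdef, LinearMap.comp_apply, Submodule.mkQ_apply,
      Submodule.Quotient.mk_eq_zero] at ha
    have ha2 : a = Φ (eA.symm a) := (eA.apply_symm_apply a).symm
    set c : Fin n → T := eA.symm a with hc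
    rw [ha2, hΦapp]
    refine Submodule.sum_mem _ fun i _ => ?_
    rcases Nat.eq_zero_or_pos (i : ℕ) with h1 | h1
    · have hi0 : i = 0 := Fin.ext (by simpa using h1)
      subst hi0
      rw [show ((0 : Fin n) : ℕ) = 0 from rfl, pow_zero, mul_one]
      have h0' : c 0 ∈ D := by
        have h2 := ha
        rw [hφ0apply] at h2
        exact h2
      obtain ⟨k, hk, hπk⟩ := (hmemD (c 0)).mp h0'
      rw [show c 0 = π' * k from by rw [← hπk, Algebra.smul_def]]
      have h3 := hκ_le (LinearMap.mem_ker.mpr hk)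
      rw [Submodule.mem_comap, hgapp] at h3
      exact h3
    · exact hhigh (i : ℕ) h1 i.2 (c i)
  have hCeq : C = LinearMap.ker F := le_antisymm hCleF hkerF_le
  have hFsurj : Function.Surjective F := by
    intro yq
    obtain ⟨y, rfl⟩ := Submodule.mkQ_surjective D yq
    refine ⟨ι y * x ^ 0, ?_⟩
    rw [hFdef, LinearMap.comp_apply, hsmall 0 (by omega) y, if_pos rfl]
  have iso1 : (A ⧸ C) ≃ₗ[S] T ⧸ D :=
    (Submodule.quotEquivOfEq C (LinearMap.ker F) hCeq).trans
      (F.quotKerEquivOfSurjective hFsurj)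
  -- second isomorphism
  have halg : Function.Injective (algebraMap S T) :=
    FaithfulSMul.algebraMap_injective S T
  set R0 : Submodule S T := LinearMap.range (Algebra.linearMap S T) with hR0
  set eqS : S ≃ₗ[S] R0 :=
    LinearEquiv.ofInjective (Algebra.linearMap S T) (fun a b h => halg h) with heqS
  set τ : T →ₗ[S] S := (eqS.symm : R0 →ₗ[S] S) ∘ₗ (Tr.codRestrict R0 haux1) with hτdef
  have hτalg : ∀ t : T, algebraMap S T (τ t) = Tr t := by
    intro t
    have h1 : eqS (τ t) = Tr.codRestrict R0 haux1 t := eqS.apply_symm_apply _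
    have h2 := congrArg Subtype.val h1
    exact h2
  have hτκ : ∀ k : T, Tr k = 0 → τ k = 0 := fun k hk => halg (by rw [hτalg, hk, map_zero])
  have hτe₀ : τ e₀ = 1 := halg (by rw [hτalg, he₀, map_one])
  have hprκ : ∀ t : T, Tr (t - τ t • e₀) = 0 := by
    intro t
    rw [map_sub, map_smul, he₀, ← hτalg t, Algebra.algebraMap_eq_smul_one, sub_self]
  set pr0 : T →ₗ[S] T := LinearMap.id - LinearMap.smulRight τ e₀ with hpr0def
  have hpr0app : ∀ t : T, pr0 t = t - τ t • e₀ := fun t => rfl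
  set κpr : T →ₗ[S] κ := pr0.codRestrict κ
    (fun t => LinearMap.mem_ker.mpr (by rw [hpr0app]; exact hprκ t)) with hκprdef
  have hκprapp : ∀ t : T, (κpr t : T) = t - τ t • e₀ := fun t => rfl
  set bT : Module.Basis (Fin n) S T := Module.finBasisOfFinrankEq S T hrank with hbT
  obtain ⟨m0, bκ⟩ := Submodule.basisOfPid bT κ
  set fwd : T →ₗ[S] (κ × S) := LinearMap.prod κpr τ with hfwd
  set bwd : (κ × S) →ₗ[S] T :=
    κ.subtype ∘ₗ LinearMap.fst S κ S + LinearMap.smulRight (LinearMap.snd S κ S) e₀ with hbwd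
  have hbwdapp : ∀ p : κ × S, bwd p = (p.1 : T) + p.2 • e₀ := fun p => rfl
  have hbf : bwd ∘ₗ fwd = LinearMap.id := by
    apply LinearMap.ext
    intro t
    rw [LinearMap.comp_apply, hbwdapp, LinearMap.id_apply]
    show (κpr t : T) + τ t • e₀ = t
    rw [hκprapp]
    abel
  have hfb : fwd ∘ₗ bwd = LinearMap.id := by
    apply LinearMap.ext
    rintro ⟨k, s⟩
    rw [LinearMap.comp_apply, hbwdapp, LinearMap.id_apply]
    have hτk : τ (k : T) = 0 := hτκ k (LinearMap.mem_ker.mp k.2)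
    have h1 : τ ((k : T) + s • e₀) = s := by
      rw [map_add, hτk, zero_add, map_smul, hτe₀, smul_eq_mul, mul_one]
    refine Prod.ext ?_ ?_
    · apply Subtype.ext
      show (κpr ((k : T) + s • e₀) : T) = (k : T)
      rw [hκprapp, h1, add_sub_cancel_right]
    · exact h1
  set jT : T ≃ₗ[S] (κ × S) := LinearEquiv.ofLinear fwd bwd hfb hbf with hjT
  have hm0 : m0 = n - 1 := by
    have h1 : Module.finrank S (κ × S) = n := by
      rw [← jT.finrank_eq, hrank]
    haveI : Module.Free S κ := Module.Free.of_basis bκ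
    haveI : Module.Finite S κ := Module.Finite.of_basis bκ
    have h2 : Module.finrank S κ = m0 := by
      rw [Module.finrank_eq_card_basis bκ, Fintype.card_fin]
    have h3 := Module.finrank_prod (R := S) (M := κ) (M' := S)
    rw [h2, Module.finrank_self] at h3
    omega
  subst hm0
  set Q : (Fin (n - 1) → S) →ₗ[S] (Fin (n - 1) → S ⧸ Ideal.span {π}) :=
    LinearMap.pi (fun i => (Ideal.span {π}).mkQ ∘ₗ LinearMap.proj i) with hQdef
  set Ψ : T →ₗ[S] S × (Fin (n - 1) → S ⧸ Ideal.span {π}) :=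
    LinearMap.prod τ (Q ∘ₗ (bκ.equivFun : κ →ₗ[S] (Fin (n - 1) → S)) ∘ₗ κpr) with hΨdef
  have hΨ1 : ∀ t : T, (Ψ t).1 = τ t := fun t => rfl
  have hΨ2 : ∀ (t : T) (i : Fin (n - 1)),
      (Ψ t).2 i = Submodule.Quotient.mk (bκ.equivFun (κpr t) i) := fun t i => rfl
  have hkerΨ : LinearMap.ker Ψ = D := by
    ext t
    rw [LinearMap.mem_ker, hmemD]
    constructor
    · intro h
      have h1 : τ t = 0 := by
        have := congrArg Prod.fst h
        rwa [hΨ1] at this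
      have h2 : ∀ i, (Submodule.Quotient.mk (bκ.equivFun (κpr t) i) :
          S ⧸ Ideal.span {π}) = 0 := by
        intro i
        have h3 := congrFun (congrArg Prod.snd h) i
        rwa [hΨ2] at h3
      choose d hd using fun i =>
        Ideal.mem_span_singleton.mp ((Submodule.Quotient.mk_eq_zero _).mp (h2 i))
      refine ⟨((∑ i, d i • bκ i : κ) : T), LinearMap.mem_ker.mp (∑ i, d i • bκ i).2, ?_⟩
      have h5 : π • (∑ i, d i • bκ i : κ) = κpr t := by
        rw [Finset.smul_sum]
        rw [Finset.sum_congr rfl fun i _ => show π • (d i • bκ i)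
          = (bκ.equivFun (κpr t) i) • bκ i from by rw [smul_smul, ← hd i]]
        exact bκ.sum_equivFun (κpr t)
      have h7 := congrArg Subtype.val h5
      rw [Submodule.coe_smul] at h7
      rw [h7, hκprapp, h1, zero_smul, sub_zero]
    · rintro ⟨k, hk, rfl⟩
      have hτk : τ k = 0 := hτκ k hk
      refine Prod.ext ?_ (funext fun i => ?_)
      · rw [hΨ1, map_smul, hτk, smul_zero]
        rfl
      · rw [hΨ2]
        have h1 : κpr (π • k) = π • κpr k := map_smul κpr π k
        rw [h1, map_smul, Pi.smul_apply, smul_eq_mul]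
        exact (Submodule.Quotient.mk_eq_zero _).mpr (Ideal.mem_span_singleton.mpr ⟨_, rfl⟩)
  have hΨsurj : Function.Surjective Ψ := by
    rintro ⟨s, vq⟩
    choose v hv using fun i => Ideal.Quotient.mk_surjective (vq i)
    refine ⟨s • e₀ + ((∑ i, v i • bκ i : κ) : T), ?_⟩
    have hτ2 : τ (s • e₀ + ((∑ i, v i • bκ i : κ) : T)) = s := by
      rw [map_add, map_smul, hτe₀, smul_eq_mul, mul_one,
        hτκ _ (LinearMap.mem_ker.mp (∑ i, v i • bκ i).2), add_zero]
    refine Prod.ext hτ2 (funext fun i => ?_)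
    rw [hΨ2]
    have h1 : κpr (s • e₀ + ((∑ i, v i • bκ i : κ) : T)) = ∑ i, v i • bκ i := by
      apply Subtype.ext
      rw [hκprapp, hτ2, add_sub_cancel_left]
    rw [h1, Module.Basis.equivFun_apply, Module.Basis.repr_sum_self]
    exact hv i
  have iso2 : (T ⧸ D) ≃ₗ[S] S × (Fin (n - 1) → S ⧸ Ideal.span {π}) :=
    (Submodule.quotEquivOfEq D (LinearMap.ker Ψ) hkerΨ.symm).trans
      (Ψ.quotKerEquivOfSurjective hΨsurj)
  exact ⟨part1, ⟨iso1⟩, ⟨iso1.trans iso2⟩⟩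
end
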